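/- arXiv:2208.02324 — 6 statements merged into one kernel-verified Lean document; each statement's English description precedes it below -/
import Mathlib

section
/- Let N ≥ 3 be odd, let p k = (cos(2πk/N), sin(2πk/N)) ∈ ℝ² for k ∈ ZMod N be the vertices of the regular N-gon, and for each k ∈ ZMod N let s k = segment ℝ (p k) (p (k + (N−1)/2)) (the star-polygon construction generalizing the pentagram). Then every line-segment is a splitter: for all j, k ∈ ZMod N with j ≠ k, the intersection s j ∩ s k is nonempty. -/
open Real

private lemma key_trig (x P V : ℝ) :
    (cos (x + 2*P) - cos x) * (sin (x + 2*V) - sin x)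
      - (sin (x + 2*P) - sin x) * (cos (x + 2*V) - cos x)
    = 4 * sin P * sin V * sin (V - P) := by
  simp only [cos_add, sin_add, sin_sub, cos_sub, sin_two_mul, cos_two_mul]
  linear_combination
    ((2*cos P^2 - 1)*(2*sin V*cos V) - (2*sin P*cos P)*(2*cos V^2 - 1)
      + 2*sin P*cos P - 2*sin V*cos V) * (sin_sq_add_cos_sq x)
    + (4*sin V*cos V) * (sin_sq_add_cos_sq P)
    - (4*sin P*cos P) * (sin_sq_add_cos_sq V)

private lemma sin_pos' {n x : ℝ} (hn : 0 < n) (h0 : 0 < x) (h1 : x < n) :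
    0 < sin (π * x / n) := by
  apply sin_pos_of_pos_of_lt_pi
  · positivity
  · rw [div_lt_iff₀ hn]
    nlinarith [pi_pos]

private lemma sin_neg' {n x : ℝ} (hn : 0 < n) (h0 : n < x) (h1 : x < 2*n) :
    sin (π * x / n) < 0 := by
  have h : π * x / n = π * (x - n) / n + π := by field_simp; ring
  have h2 := sin_pos' hn (show 0 < x - n by linarith) (show x - n < n by linarith)
  rw [h, sin_add_pi]
  linarith

set_option maxHeartbeats 1000000 in
private lemma segs_intersect (a b c d : ℝ × ℝ)
    (h1 : ((b.1-a.1)*(c.2-a.2) - (b.2-a.2)*(c.1-a.1)) *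
          ((b.1-a.1)*(d.2-a.2) - (b.2-a.2)*(d.1-a.1)) < 0)
    (h2 : ((d.1-c.1)*(a.2-c.2) - (d.2-c.2)*(a.1-c.1)) *
          ((d.1-c.1)*(b.2-c.2) - (d.2-c.2)*(b.1-c.1)) < 0) :
    (segment ℝ a b ∩ segment ℝ c d).Nonempty := by
  set fc := (b.1-a.1)*(c.2-a.2) - (b.2-a.2)*(c.1-a.1) with hfc
  set fd := (b.1-a.1)*(d.2-a.2) - (b.2-a.2)*(d.1-a.1) with hfd
  set ga := (d.1-c.1)*(a.2-c.2) - (d.2-c.2)*(a.1-c.1) with hga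
  set gb := (d.1-c.1)*(b.2-c.2) - (d.2-c.2)*(b.1-c.1) with hgb
  have hne : fc - fd ≠ 0 := by
    intro h
    rw [sub_eq_zero] at h
    rw [h] at h1
    nlinarith [sq_nonneg fd]
  set u := fc / (fc - fd) with hu
  have hu01 : 0 ≤ u ∧ u ≤ 1 := by
    rcases mul_neg_iff.mp h1 with ⟨hp, hn⟩ | ⟨hn, hp⟩
    · have hd0 : 0 < fc - fd := by linarith
      exact ⟨le_of_lt (div_pos hp hd0), le_of_lt ((div_lt_one hd0).mpr (by linarith))⟩
    · have hd0 : 0 < fd - fc := by linarith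
      have hu' : u = (-fc) / (fd - fc) := by
        rw [hu, show fc - fd = -(fd - fc) by ring, div_neg, ← neg_div]
      rw [hu']
      exact ⟨le_of_lt (div_pos (by linarith) hd0),
        le_of_lt ((div_lt_one hd0).mpr (by linarith))⟩
  obtain ⟨hu0, hu1⟩ := hu01
  set x : ℝ × ℝ := ((1-u)*c.1 + u*d.1, (1-u)*c.2 + u*d.2) with hx
  have hxcd : x ∈ segment ℝ c d := by
    refine ⟨1-u, u, by linarith, hu0, by ring, ?_⟩
    rw [hx, Prod.ext_iff]
    constructor <;> simp [smul_eq_mul]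
  have hk : u * (fc - fd) = fc := div_mul_cancel₀ fc hne
  rw [hfc, hfd] at hk
  have hfx : (b.1-a.1)*(x.2-a.2) - (b.2-a.2)*(x.1-a.1) = 0 := by
    rw [hx]
    dsimp only
    linear_combination (-1 : ℝ) * hk
  have hba : b.1 - a.1 ≠ 0 ∨ b.2 - a.2 ≠ 0 := by
    by_contra h
    push_neg at h
    obtain ⟨e1, e2⟩ := h
    have hz : fc = 0 := by rw [hfc, e1, e2]; ring
    rw [hz, zero_mul] at h1
    exact lt_irrefl 0 h1
  have ht : ∃ t : ℝ, x.1 - a.1 = t*(b.1-a.1) ∧ x.2 - a.2 = t*(b.2-a.2) := by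
    rcases hba with hb1 | hb2
    · refine ⟨(x.1 - a.1)/(b.1 - a.1), by field_simp, ?_⟩
      rw [div_mul_eq_mul_div, eq_div_iff hb1]
      linear_combination hfx
    · refine ⟨(x.2 - a.2)/(b.2 - a.2), ?_, by field_simp⟩
      rw [div_mul_eq_mul_div, eq_div_iff hb2]
      linear_combination -hfx
  obtain ⟨t, ht1, ht2⟩ := ht
  have hgx : ga + t*(gb - ga) = 0 := by
    have hx0 : (d.1-c.1)*(x.2-c.2) - (d.2-c.2)*(x.1-c.1) = 0 := by
      rw [hx]; dsimp only; ring
    rw [hga, hgb]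
    linear_combination hx0 + (d.2-c.2)*ht1 - (d.1-c.1)*ht2
  have ht01 : 0 ≤ t ∧ t ≤ 1 := by
    rcases mul_neg_iff.mp h2 with ⟨hp, hn⟩ | ⟨hn, hp⟩ <;>
      exact ⟨by nlinarith [hgx], by nlinarith [hgx]⟩
  rw [hx] at ht1 ht2
  dsimp only at ht1 ht2
  refine ⟨x, ⟨1-t, t, by linarith [ht01.2], ht01.1, by ring, ?_⟩, hxcd⟩
  rw [hx]
  have hsm : ((1-t) • a + t • b : ℝ × ℝ) = ((1-t)*a.1 + t*b.1, (1-t)*a.2 + t*b.2) := rfl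
  rw [hsm, Prod.mk.injEq]
  exact ⟨by linarith, by linarith⟩

private lemma pt_eq (N : ℕ) (hN : 0 < N) (x : ZMod N) (t : ℕ) (hx : (t : ZMod N) = x) :
    ((cos (2 * π * x.val / N), sin (2 * π * x.val / N)) : ℝ × ℝ)
      = (cos (2 * π * t / N), sin (2 * π * t / N)) := by
  haveI : NeZero N := ⟨hN.ne'⟩
  have hv : x.val = t % N := by rw [← hx]; exact ZMod.val_natCast N t
  have hNe : (N : ℝ) ≠ 0 := Nat.cast_ne_zero.mpr hN.ne'
  have hsplit : ((t % N : ℕ) : ℝ) + (N : ℝ) * ((t / N : ℕ) : ℝ) = (t : ℝ) := by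
    exact_mod_cast congrArg (Nat.cast : ℕ → ℝ) (Nat.mod_add_div t N)
  have harg : 2 * π * (t : ℝ) / N = 2 * π * ((t % N : ℕ) : ℝ) / N + ((t / N : ℕ) : ℝ) * (2 * π) := by
    rw [← hsplit]; field_simp
  rw [hv]
  rw [harg, cos_add_nat_mul_two_pi, sin_add_nat_mul_two_pi]

theorem star_polygon_all_splitters (N : ℕ) (hN : 3 ≤ N) (hodd : Odd N)
    (p : ZMod N → ℝ × ℝ)
    (hp : ∀ k : ZMod N,
      p k = (Real.cos (2 * π * k.val / N), Real.sin (2 * π * k.val / N)))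
    (s : ZMod N → Set (ℝ × ℝ))
    (hs : ∀ k : ZMod N, s k = segment ℝ (p k) (p (k + (((N - 1) / 2 : ℕ) : ZMod N)))) :
    ∀ j k : ZMod N, j ≠ k → (s j ∩ s k).Nonempty := by
  haveI : NeZero N := ⟨by omega⟩
  have hN0 : 0 < N := by omega
  obtain ⟨m, hm⟩ := hodd
  have hm1 : 1 ≤ m := by omega
  have hdiv : (N - 1) / 2 = m := by omega
  simp only [hdiv] at hs
  intro j k hjk
  set J := j.val with hJ
  set D := (k - j).val with hD
  have hkj : k - j ≠ 0 := sub_ne_zero.mpr (Ne.symm hjk)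
  have hD1 : 1 ≤ D := by
    rcases Nat.eq_zero_or_pos D with h | h
    · exact absurd ((ZMod.val_eq_zero (k - j)).mp h) hkj
    · exact h
  have hDN : D < N := ZMod.val_lt (k - j)
  have hDcast : ((D : ℕ) : ZMod N) = k - j := by rw [hD]; exact ZMod.natCast_zmod_val (k - j)
  by_cases hDm : D = m
  · -- shared endpoint p k
    have hk : j + ((m : ℕ) : ZMod N) = k := by
      rw [← hDm, hDcast]; ring
    exact ⟨p k, by rw [hs j, hk]; exact right_mem_segment ℝ _ _,
      by rw [hs k]; exact left_mem_segment ℝ _ _⟩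
  by_cases hDm1 : D = m + 1
  · -- shared endpoint p j
    have hk : k + ((m : ℕ) : ZMod N) = j := by
      have h3 : k = j + ((D : ℕ) : ZMod N) := by rw [hDcast]; ring
      have h2 : ((D + m : ℕ) : ZMod N) = 0 := by
        rw [show D + m = N from by omega]; exact ZMod.natCast_self N
      rw [h3, add_assoc, ← Nat.cast_add, h2, add_zero]
    exact ⟨p j, by rw [hs j]; exact left_mem_segment ℝ _ _,
      by rw [hs k, ← hk]; exact right_mem_segment ℝ _ _⟩
  -- crossing case
  have hNe : (N : ℝ) ≠ 0 := Nat.cast_ne_zero.mpr hN0.ne'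
  have hNr : (0 : ℝ) < N := Nat.cast_pos.mpr hN0
  have ha := hp j
  set X : ℝ := 2 * π * (J : ℝ) / N with hX
  set P : ℝ := π * (m : ℝ) / N with hP
  set Dr : ℝ := π * (D : ℝ) / N with hDr
  -- the four points in angle form
  have hb : p (j + ((m : ℕ) : ZMod N)) = (cos (X + 2*P), sin (X + 2*P)) := by
    rw [hp, pt_eq N hN0 _ (J + m) (by rw [Nat.cast_add, hJ, ZMod.natCast_zmod_val]),
      show 2 * π * ((J + m : ℕ) : ℝ) / N = X + 2*P from by rw [hX, hP]; push_cast; ring]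
  have hc : p k = (cos (X + 2*Dr), sin (X + 2*Dr)) := by
    rw [hp, pt_eq N hN0 _ (J + D) (by rw [Nat.cast_add, hJ, ZMod.natCast_zmod_val, hDcast]; ring),
      show 2 * π * ((J + D : ℕ) : ℝ) / N = X + 2*Dr from by rw [hX, hDr]; push_cast; ring]
  have hd : p (k + ((m : ℕ) : ZMod N)) =
      (cos (X + 2*(Dr + P)), sin (X + 2*(Dr + P))) := by
    rw [hp, pt_eq N hN0 _ (J + D + m)
        (by rw [Nat.cast_add, Nat.cast_add, hJ, ZMod.natCast_zmod_val, hDcast]; ring),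
      show 2 * π * ((J + D + m : ℕ) : ℝ) / N = X + 2*(Dr + P) from by
        rw [hX, hDr, hP]; push_cast; ring]
  -- sign facts
  have hsP : 0 < sin P := by
    rw [hP]
    exact sin_pos' hNr (by exact_mod_cast hm1.trans_lt' (by omega) : (0:ℝ) < (m:ℝ))
      (by exact_mod_cast (by omega : m < N))
  have hsD : 0 < sin Dr := by
    rw [hDr]
    exact sin_pos' hNr (by exact_mod_cast hD1) (by exact_mod_cast hDN)
  have hlt : sin (Dr - P) * sin (Dr + P) < 0 := by
    have h3 : Dr - P = π * ((D : ℝ) - m) / N := by rw [hDr, hP]; ring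
    have h4 : Dr + P = π * ((D : ℝ) + m) / N := by rw [hDr, hP]; ring
    rw [h3, h4]
    rcases Nat.lt_or_ge D m with hcase | hcase
    · have hs3 : sin (π * ((D : ℝ) - m) / N) < 0 := by
        rw [show π * ((D : ℝ) - m) / N = -(π * ((m : ℝ) - D) / N) from by ring, sin_neg]
        have := sin_pos' hNr (show (0:ℝ) < (m:ℝ) - D from by
            have : (D : ℝ) < m := by exact_mod_cast hcase
            linarith)
          (show ((m:ℝ) - D) < N from by
            have h1 : (m : ℝ) ≤ N := by exact_mod_cast (by omega : m ≤ N)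
            have h2 : (0:ℝ) < (D:ℝ) := by exact_mod_cast hD1
            linarith)
        linarith
      have hs4 : 0 < sin (π * ((D : ℝ) + m) / N) := by
        apply sin_pos' hNr
        · have h2 : (0:ℝ) < (D:ℝ) := by exact_mod_cast hD1
          have h3 : (0:ℝ) ≤ (m:ℝ) := by positivity
          linarith
        · have : ((D + m : ℕ) : ℝ) < N := by exact_mod_cast (by omega : D + m < N)
          push_cast at this; linarith
      exact mul_neg_of_neg_of_pos hs3 hs4
    · have hcase2 : m + 2 ≤ D := by omega
      have hs3 : 0 < sin (π * ((D : ℝ) - m) / N) := by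
        apply sin_pos' hNr
        · have : (m : ℝ) < D := by exact_mod_cast (by omega : m < D)
          linarith
        · have h1 : (D : ℝ) < N := by exact_mod_cast hDN
          have h2 : (0:ℝ) ≤ (m:ℝ) := by positivity
          linarith
      have hs4 : sin (π * ((D : ℝ) + m) / N) < 0 := by
        apply sin_neg' hNr
        · have : ((N : ℕ) : ℝ) < ((D + m : ℕ) : ℝ) := by exact_mod_cast (by omega : N < D + m)
          push_cast at this; linarith
        · have : ((D + m : ℕ) : ℝ) < ((2 * N : ℕ) : ℝ) := by
            exact_mod_cast (by omega : D + m < 2 * N)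
          push_cast at this; linarith
      exact mul_neg_of_pos_of_neg hs3 hs4
  -- cross product values
  have e1 := key_trig X P Dr
  have e2 := key_trig X P (Dr + P)
  rw [show Dr + P - P = Dr from by ring] at e2
  have e3 := key_trig (X + 2*Dr) P (-Dr)
  rw [show X + 2*Dr + 2*P = X + 2*(Dr + P) from by ring,
    show X + 2*Dr + 2*(-Dr) = X from by ring,
    show -Dr - P = -(Dr + P) from by ring, sin_neg, sin_neg] at e3
  have e4 := key_trig (X + 2*Dr) P (P - Dr)
  rw [show X + 2*Dr + 2*(P - Dr) = X + 2*P from by ring,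
    show X + 2*Dr + 2*P = X + 2*(Dr + P) from by ring,
    show P - Dr - P = -Dr from by ring,
    show P - Dr = -(Dr - P) from by ring, sin_neg, sin_neg] at e4
  rw [hs j, hs k]
  apply segs_intersect (p j) (p (j + ((m : ℕ) : ZMod N))) (p k) (p (k + ((m : ℕ) : ZMod N)))
  · rw [ha, hb, hc, hd]
    dsimp only
    rw [e1, e2]
    nlinarith [mul_pos hsP hsD, hlt, mul_pos (mul_pos hsP hsD) (mul_pos hsP hsD)]
  · rw [ha, hb, hc, hd]
    dsimp only
    rw [e3, e4]
    nlinarith [mul_pos hsP hsD, hlt, mul_pos (mul_pos hsP hsD) (mul_pos hsP hsD)]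
end

section
/- Let N ≥ 3 be odd, let p k = (cos(2πk/N), sin(2πk/N)) ∈ ℝ² for k ∈ ZMod N, and for each k ∈ ZMod N let s k = segment ℝ (p k) (p (k + (N−1)/2)). Then the set of points of ℝ² that lie on at least two distinct segments s j, s k (j ≠ k) has exactly N(N−1)/2 elements; in particular every pair of distinct segments meets in exactly one point and no three segments are concurrent except at the corners, each of which lies on exactly two segments. -/
set_option maxHeartbeats 1000000
open Real

/-- two vectors orthogonal to a nonzero vector in ℝ² are parallel -/
lemma star_cross_eq_zero {n u v : ℝ × ℝ} (hn : n ≠ 0)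
    (hu : n.1 * u.1 + n.2 * u.2 = 0) (hv : n.1 * v.1 + n.2 * v.2 = 0) :
    u.1 * v.2 - u.2 * v.1 = 0 := by
  have hn' : n.1 ≠ 0 ∨ n.2 ≠ 0 := by
    by_contra h
    push_neg at h
    exact hn (Prod.ext h.1 h.2)
  rcases hn' with h | h
  · have : n.1 * (u.1 * v.2 - u.2 * v.1) = 0 := by linear_combination v.2 * hu - u.2 * hv
    exact by
      rcases mul_eq_zero.1 this with h' | h'
      · exact absurd h' h
      · exact h'
  · have : n.2 * (u.1 * v.2 - u.2 * v.1) = 0 := by linear_combination (-v.1) * hu + u.1 * hv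
    rcases mul_eq_zero.1 this with h' | h'
    · exact absurd h' h
    · exact h'

/-- membership in a chord of the unit circle, via the line equation and the disk -/
lemma star_chord_mem_iff {P Q n x : ℝ × ℝ} {d : ℝ}
    (hP : P.1 ^ 2 + P.2 ^ 2 = 1) (hQ : Q.1 ^ 2 + Q.2 ^ 2 = 1) (hPQ : P ≠ Q)
    (hn : n ≠ 0)
    (hnP : n.1 * P.1 + n.2 * P.2 = d) (hnQ : n.1 * Q.1 + n.2 * Q.2 = d) :
    x ∈ segment ℝ P Q ↔ (n.1 * x.1 + n.2 * x.2 = d ∧ x.1 ^ 2 + x.2 ^ 2 ≤ 1) := by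
  have hv : (Q.1 - P.1) ^ 2 + (Q.2 - P.2) ^ 2 > 0 := by
    rcases (Prod.ext_iff.not.1 hPQ) with h
    push_neg at h
    by_contra hc
    push_neg at hc
    have h1 : (Q.1 - P.1) ^ 2 ≤ 0 := by nlinarith [sq_nonneg (Q.2 - P.2)]
    have h2 : (Q.2 - P.2) ^ 2 ≤ 0 := by nlinarith [sq_nonneg (Q.1 - P.1)]
    have e1 : Q.1 = P.1 := by nlinarith [sq_nonneg (Q.1 - P.1)]
    have e2 : Q.2 = P.2 := by nlinarith [sq_nonneg (Q.2 - P.2)]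
    exact hPQ (Prod.ext e1.symm e2.symm)
  constructor
  · rintro hx
    rw [segment_eq_image] at hx
    obtain ⟨t, ⟨ht0, ht1⟩, rfl⟩ := hx
    constructor
    · simp only [Prod.smul_fst, Prod.smul_snd, Prod.fst_add, Prod.snd_add, smul_eq_mul]
      linear_combination (1 - t) * hnP + t * hnQ
    · simp only [Prod.smul_fst, Prod.smul_snd, Prod.fst_add, Prod.snd_add, smul_eq_mul]
      nlinarith [sq_nonneg (P.1 - Q.1), sq_nonneg (P.2 - Q.2), mul_nonneg ht0 (sub_nonneg.2 ht1)]
  · rintro ⟨hline, hdisk⟩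
    have hu : n.1 * (x.1 - P.1) + n.2 * (x.2 - P.2) = 0 := by linear_combination hline - hnP
    have hvn : n.1 * (Q.1 - P.1) + n.2 * (Q.2 - P.2) = 0 := by linear_combination hnQ - hnP
    have hcross := star_cross_eq_zero (u := (x.1 - P.1, x.2 - P.2))
      (v := (Q.1 - P.1, Q.2 - P.2)) hn hu hvn
    simp only [] at hcross
    set t : ℝ := ((x.1 - P.1) * (Q.1 - P.1) + (x.2 - P.2) * (Q.2 - P.2)) /
      ((Q.1 - P.1) ^ 2 + (Q.2 - P.2) ^ 2) with htdef
    have hvne : (Q.1 - P.1) ^ 2 + (Q.2 - P.2) ^ 2 ≠ 0 := ne_of_gt hv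
    have hx1 : x.1 - P.1 = t * (Q.1 - P.1) := by
      rw [htdef]; field_simp
      linear_combination (Q.2 - P.2) * hcross
    have hx2 : x.2 - P.2 = t * (Q.2 - P.2) := by
      rw [htdef]; field_simp
      linear_combination (-(Q.1 - P.1)) * hcross
    have hPv : 2 * (P.1 * (Q.1 - P.1) + P.2 * (Q.2 - P.2)) =
        -((Q.1 - P.1) ^ 2 + (Q.2 - P.2) ^ 2) := by linear_combination hQ - hP
    have hnorm : x.1 ^ 2 + x.2 ^ 2 =
        1 + (t ^ 2 - t) * ((Q.1 - P.1) ^ 2 + (Q.2 - P.2) ^ 2) := by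
      have e1 : x.1 = P.1 + t * (Q.1 - P.1) := by linarith
      have e2 : x.2 = P.2 + t * (Q.2 - P.2) := by linarith
      rw [e1, e2]; linear_combination hP + t * hPv
    clear_value t
    clear htdef
    have hmul : (t ^ 2 - t) * ((Q.1 - P.1) ^ 2 + (Q.2 - P.2) ^ 2) ≤ 0 := by linarith
    have htt : t ^ 2 - t ≤ 0 := by
      by_contra h
      push_neg at h
      have := mul_pos h hv
      linarith
    have ht0 : 0 ≤ t := by nlinarith [htt]
    have ht1 : t ≤ 1 := by nlinarith [htt]
    rw [segment_eq_image]
    refine ⟨t, ⟨ht0, ht1⟩, ?_⟩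
    apply Prod.ext <;>
      simp only [Prod.smul_fst, Prod.smul_snd, Prod.fst_add, Prod.snd_add, smul_eq_mul] <;>
      [linear_combination -hx1; linear_combination -hx2]

/-- a point of a chord on the unit circle is an endpoint -/
lemma star_seg_boundary {P Q x : ℝ × ℝ}
    (hP : P.1 ^ 2 + P.2 ^ 2 = 1) (hQ : Q.1 ^ 2 + Q.2 ^ 2 = 1) (hPQ : P ≠ Q)
    (hx : x ∈ segment ℝ P Q) (hx1 : x.1 ^ 2 + x.2 ^ 2 = 1) : x = P ∨ x = Q := by
  rw [segment_eq_image] at hx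
  obtain ⟨t, ⟨ht0, ht1⟩, rfl⟩ := hx
  simp only [Prod.smul_fst, Prod.smul_snd, Prod.fst_add, Prod.snd_add, smul_eq_mul] at hx1 ⊢
  have hv : (Q.1 - P.1) ^ 2 + (Q.2 - P.2) ^ 2 > 0 := by
    by_contra hc
    push_neg at hc
    have e1 : Q.1 = P.1 := by nlinarith [sq_nonneg (Q.1 - P.1), sq_nonneg (Q.2 - P.2)]
    have e2 : Q.2 = P.2 := by nlinarith [sq_nonneg (Q.1 - P.1), sq_nonneg (Q.2 - P.2)]
    exact hPQ (Prod.ext e1.symm e2.symm)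
  have key : t * (1 - t) * ((Q.1 - P.1) ^ 2 + (Q.2 - P.2) ^ 2) = 0 := by nlinarith
  have : t = 0 ∨ t = 1 := by
    rcases mul_eq_zero.1 key with h | h
    · rcases mul_eq_zero.1 h with h | h
      · exact Or.inl h
      · exact Or.inr (by linarith)
    · linarith
  rcases this with rfl | rfl
  · left; apply Prod.ext <;> simp
  · right; apply Prod.ext <;> simp

lemma star_int_of_sin (N : ℕ) (hN : 3 ≤ N) (hodd : Odd N) (Δ : ℤ) (h0 : Δ ≠ 0)
    (hlt : Δ.natAbs < N) : Real.sin (2 * π * Δ / N) ≠ 0 := by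
  intro h
  rw [Real.sin_eq_zero_iff] at h
  obtain ⟨n, hn⟩ := h
  have hNR : (N : ℝ) ≠ 0 := by positivity
  have hπ : π ≠ 0 := Real.pi_ne_zero
  have key : (n * N : ℝ) = 2 * Δ := by
    field_simp at hn
    have := hn
    nlinarith [this, Real.pi_pos]
  have keyZ : n * (N : ℤ) = 2 * Δ := by exact_mod_cast key
  have hodd' := hodd
  obtain ⟨w, hw⟩ := hodd
  have hn2 : n = 2 * (Δ - n * w) := by
    have : n * (2 * (w : ℤ) + 1) = 2 * Δ := by rw [← keyZ]; congr 1; exact_mod_cast hw.symm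
    ring_nf at this ⊢
    omega
  set u : ℤ := Δ - n * w with hu
  have hΔ : Δ = u * N := by
    have : (2 * u) * (N : ℤ) = 2 * Δ := by rw [← keyZ, hn2]
    have hN0 : (0:ℤ) < N := by exact_mod_cast (by omega : 0 < N)
    nlinarith [this]
  have : Δ.natAbs = u.natAbs * N := by rw [hΔ]; simp [Int.natAbs_mul]
  have hu0 : u.natAbs = 0 := by
    by_contra h'
    have : 1 ≤ u.natAbs := Nat.one_le_iff_ne_zero.2 h'
    nlinarith [hlt, ‹Δ.natAbs = u.natAbs * N›]
  exact h0 (by simpa [Int.natAbs_eq_zero.1 hu0] using hΔ)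

lemma star_cos_ne_one (N : ℕ) (hN : 3 ≤ N) (Δ : ℤ) (h0 : Δ ≠ 0)
    (hlt : Δ.natAbs < N) : Real.cos (2 * π * Δ / N) ≠ 1 := by
  intro h
  rw [Real.cos_eq_one_iff] at h
  obtain ⟨n, hn⟩ := h
  have hNR : (N : ℝ) ≠ 0 := by positivity
  have key : (n * N : ℝ) = Δ := by
    field_simp at hn
    nlinarith [hn, Real.pi_pos]
  have keyZ : n * (N : ℤ) = Δ := by exact_mod_cast key
  have : Δ.natAbs = n.natAbs * N := by rw [← keyZ]; simp [Int.natAbs_mul]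
  have hu0 : n.natAbs = 0 := by
    by_contra h'
    have : 1 ≤ n.natAbs := Nat.one_le_iff_ne_zero.2 h'
    nlinarith [hlt, ‹Δ.natAbs = n.natAbs * N›]
  exact h0 (by simp [← keyZ, Int.natAbs_eq_zero.1 hu0])

lemma star_cos_bound (N m : ℕ) (hN : 3 ≤ N) (hm : N = 2 * m + 1) (Δ : ℤ) (h0 : Δ ≠ 0)
    (hlt : Δ.natAbs < N) : Real.cos (2 * π * m / N) ≤ Real.cos (2 * π * Δ / N) := by
  have hNR : (0:ℝ) < N := by positivity
  set t : ℕ := Δ.natAbs with ht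
  have habs0 : (t:ℝ) = |(Δ:ℝ)| := by rw [ht]; simp [Nat.cast_natAbs]
  have hcast : ((Δ:ℝ) = t) ∨ ((Δ:ℝ) = -(t:ℝ)) := by
    rcases abs_choice ((Δ:ℝ)) with h | h
    · left; rw [habs0, h]
    · right; rw [habs0, h]; ring
  have habs : Real.cos (2 * π * Δ / N) = Real.cos (2 * π * t / N) := by
    rcases hcast with h | h
    · rw [h]
    · rw [h, show 2 * π * (-(t:ℝ)) / N = -(2 * π * t / N) by ring, Real.cos_neg]
  rw [habs]
  have ht1 : 1 ≤ t := by omega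
  have htN : t ≤ N - 1 := by omega
  have hmono : ∀ a b : ℕ, a ≤ b → b ≤ m →
      Real.cos (2 * π * b / N) ≤ Real.cos (2 * π * a / N) := by
    intro a b hab hbm
    apply Real.cos_le_cos_of_nonneg_of_le_pi
    · positivity
    · rw [div_le_iff₀ hNR]
      have : (b:ℝ) ≤ m := by exact_mod_cast hbm
      have : (2*m+1 : ℝ) = N := by exact_mod_cast hm.symm
      nlinarith [Real.pi_pos]
    · have : (a:ℝ) ≤ b := by exact_mod_cast hab
      have h2 : 0 < 2 * π / N := by positivity
      calc 2 * π * a / N = 2 * π / N * a := by ring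
        _ ≤ 2 * π / N * b := by nlinarith
        _ = 2 * π * b / N := by ring
  by_cases hcase : t ≤ m
  · exact hmono t m hcase le_rfl
  · have h1 : 1 ≤ N - t := by omega
    have h2 : N - t ≤ m := by omega
    have : Real.cos (2 * π * t / N) = Real.cos (2 * π * (N - t : ℕ) / N) := by
      have hc : ((N - t : ℕ) : ℝ) = (N : ℝ) - t := by
        have : t ≤ N := by omega
        push_cast [this]; ring
      rw [hc, show 2 * π * ((N:ℝ) - t) / N = 2 * π - 2 * π * t / N by field_simp,
        Real.cos_two_pi_sub]
    rw [this]
    exact hmono (N - t) m h2 le_rfl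

lemma star_sq_pos {v : ℝ × ℝ} (h : v ≠ 0) : 0 < v.1 ^ 2 + v.2 ^ 2 := by
  by_contra hc
  push_neg at hc
  have h1 : v.1 = 0 := by nlinarith [sq_nonneg v.1, sq_nonneg v.2]
  have h2 : v.2 = 0 := by nlinarith [sq_nonneg v.1, sq_nonneg v.2]
  exact h (Prod.ext h1 h2)

/-- through a point, at most two unit vectors have a given nonzero dot product -/
lemma star_two_tangents {x a b c : ℝ × ℝ} {d : ℝ} (hd : d ≠ 0)
    (ha : a.1 ^ 2 + a.2 ^ 2 = 1) (hb : b.1 ^ 2 + b.2 ^ 2 = 1) (hc : c.1 ^ 2 + c.2 ^ 2 = 1)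
    (hxa : x.1 * a.1 + x.2 * a.2 = d) (hxb : x.1 * b.1 + x.2 * b.2 = d)
    (hxc : x.1 * c.1 + x.2 * c.2 = d)
    (hab : a ≠ b) (hac : a ≠ c) : b = c := by
  have hx0 : x ≠ 0 := by
    rintro rfl
    simp at hxa
    exact hd hxa.symm
  have hW : 0 < x.1 ^ 2 + x.2 ^ 2 := star_sq_pos hx0
  have hWne : x.1 ^ 2 + x.2 ^ 2 ≠ 0 := ne_of_gt hW
  have h0b : (b.1 - a.1) * x.1 + (b.2 - a.2) * x.2 = 0 := by linear_combination hxb - hxa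
  have h0c : (c.1 - a.1) * x.1 + (c.2 - a.2) * x.2 = 0 := by linear_combination hxc - hxa
  set t1 : ℝ := ((b.2 - a.2) * x.1 - (b.1 - a.1) * x.2) / (x.1 ^ 2 + x.2 ^ 2) with ht1
  set t2 : ℝ := ((c.2 - a.2) * x.1 - (c.1 - a.1) * x.2) / (x.1 ^ 2 + x.2 ^ 2) with ht2
  have hb1 : b.1 = a.1 + t1 * (-x.2) := by
    rw [ht1]; field_simp; linear_combination x.1 * h0b
  have hb2 : b.2 = a.2 + t1 * x.1 := by
    rw [ht1]; field_simp; linear_combination x.2 * h0b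
  have hc1 : c.1 = a.1 + t2 * (-x.2) := by
    rw [ht2]; field_simp; linear_combination x.1 * h0c
  have hc2 : c.2 = a.2 + t2 * x.1 := by
    rw [ht2]; field_simp; linear_combination x.2 * h0c
  clear_value t1 t2
  have key1 : t1 * (2 * (a.2 * x.1 - a.1 * x.2) + t1 * (x.1 ^ 2 + x.2 ^ 2)) = 0 := by
    rw [hb1, hb2] at hb
    linear_combination hb - ha
  have key2 : t2 * (2 * (a.2 * x.1 - a.1 * x.2) + t2 * (x.1 ^ 2 + x.2 ^ 2)) = 0 := by
    rw [hc1, hc2] at hc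
    linear_combination hc - ha
  have ht1ne : t1 ≠ 0 := by
    rintro rfl
    apply hab
    apply Prod.ext <;> simp [hb1, hb2]
  have ht2ne : t2 ≠ 0 := by
    rintro rfl
    apply hac
    apply Prod.ext <;> simp [hc1, hc2]
  have e1 : 2 * (a.2 * x.1 - a.1 * x.2) + t1 * (x.1 ^ 2 + x.2 ^ 2) = 0 :=
    (mul_eq_zero.1 key1).resolve_left ht1ne
  have e2 : 2 * (a.2 * x.1 - a.1 * x.2) + t2 * (x.1 ^ 2 + x.2 ^ 2) = 0 :=
    (mul_eq_zero.1 key2).resolve_left ht2ne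
  have : (t1 - t2) * (x.1 ^ 2 + x.2 ^ 2) = 0 := by linear_combination e1 - e2
  have htt : t1 = t2 := by
    rcases mul_eq_zero.1 this with h | h
    · linarith
    · exact absurd h hWne
  apply Prod.ext
  · rw [hb1, hc1, htt]
  · rw [hb2, hc2, htt]

theorem star_polygon_vertex_count (N : ℕ) (hN : 3 ≤ N) (hodd : Odd N)
    (p : ZMod N → ℝ × ℝ)
    (hp : ∀ k : ZMod N,
      p k = (Real.cos (2 * π * k.val / N), Real.sin (2 * π * k.val / N)))
    (s : ZMod N → Set (ℝ × ℝ))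
    (hs : ∀ k : ZMod N, s k = segment ℝ (p k) (p (k + (((N - 1) / 2 : ℕ) : ZMod N)))) :
    {x : ℝ × ℝ | ∃ j k : ZMod N, j ≠ k ∧ x ∈ s j ∧ x ∈ s k}.ncard = N * (N - 1) / 2 ∧
    (∀ j k : ZMod N, j ≠ k → ∃! x : ℝ × ℝ, x ∈ s j ∩ s k) ∧
    (∀ x : ℝ × ℝ, ¬ ∃ i j k : ZMod N, i ≠ j ∧ j ≠ k ∧ i ≠ k ∧
      x ∈ s i ∧ x ∈ s j ∧ x ∈ s k) ∧
    (∀ k : ZMod N, {i : ZMod N | p k ∈ s i}.ncard = 2) := by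
  classical
  haveI : NeZero N := ⟨by omega⟩
  have hodd' := hodd
  obtain ⟨w, hw⟩ := hodd
  set m : ℕ := (N - 1) / 2 with hmdef
  have hNm : N = 2 * m + 1 := by omega
  have hm1 : 1 ≤ m := by omega
  have hmN : m < N := by omega
  have hNR : (0 : ℝ) < N := by exact_mod_cast (by omega : 0 < N)
  have hNR' : (N : ℝ) ≠ 0 := ne_of_gt hNR
  -- normal vectors to the chords
  set φ : ZMod N → ℝ := fun k => π * (2 * k.val + m) / N with hφdef
  set nv : ZMod N → ℝ × ℝ := fun k => (Real.cos (φ k), Real.sin (φ k)) with hnvdef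
  set d : ℝ := Real.cos (π * m / N) with hddef
  have hd : 0 < d := by
    rw [hddef]
    apply Real.cos_pos_of_mem_Ioo
    constructor
    · have : (0:ℝ) ≤ π * m / N := by positivity
      nlinarith [Real.pi_pos]
    · rw [div_lt_iff₀ hNR]
      have h2m : (2 * m : ℝ) < N := by exact_mod_cast (by omega : 2 * m < N)
      nlinarith [Real.pi_pos]
  have hdne : d ≠ 0 := ne_of_gt hd
  have hpunit : ∀ k : ZMod N, (p k).1 ^ 2 + (p k).2 ^ 2 = 1 := by
    intro k; rw [hp k]
    exact Real.cos_sq_add_sin_sq _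
  have hnunit : ∀ k : ZMod N, (nv k).1 ^ 2 + (nv k).2 ^ 2 = 1 := by
    intro k
    exact Real.cos_sq_add_sin_sq _
  have hnne : ∀ k : ZMod N, nv k ≠ 0 := by
    intro k h
    have := hnunit k
    rw [h] at this
    norm_num at this
  have hdot : ∀ k j : ZMod N,
      (nv k).1 * (p j).1 + (nv k).2 * (p j).2 = Real.cos (φ k - 2 * π * j.val / N) := by
    intro k j
    rw [hp j, Real.cos_sub]
  have hdk : ∀ k : ZMod N, (nv k).1 * (p k).1 + (nv k).2 * (p k).2 = d := by
    intro k
    rw [hdot k k, hddef]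
    congr 1
    rw [hφdef]
    field_simp
    ring
  have hvadd : ∀ k : ZMod N, (k + (m : ZMod N)).val = (k.val + m) % N := by
    intro k
    rw [ZMod.val_add, ZMod.val_natCast_of_lt hmN]
  have hdk2 : ∀ k : ZMod N,
      (nv k).1 * (p (k + (m : ZMod N))).1 + (nv k).2 * (p (k + (m : ZMod N))).2 = d := by
    intro k
    rw [hdot, hvadd k, hddef]
    set q : ℕ := (k.val + m) / N with hq
    have hqr : (k.val + m) % N + N * q = k.val + m := Nat.mod_add_div _ _
    have hrR : (((k.val + m) % N : ℕ) : ℝ) = (k.val : ℝ) + m - N * q := by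
      have : (((k.val + m) % N : ℕ) : ℝ) + N * q = k.val + m := by exact_mod_cast hqr
      linarith
    have harg : φ k - 2 * π * ((k.val + m) % N : ℕ) / N
        = -(π * m / N) + ((q : ℤ) : ℝ) * (2 * π) := by
      rw [hφdef, hrR]
      push_cast
      field_simp
      ring
    rw [harg, Real.cos_add_int_mul_two_pi, Real.cos_neg]
  -- injectivity of p
  have hvlt : ∀ k : ZMod N, k.val < N := fun k => ZMod.val_lt k
  have hΔ : ∀ j k : ZMod N, j ≠ k →
      ((j.val : ℤ) - k.val) ≠ 0 ∧ ((j.val : ℤ) - k.val).natAbs < N := by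
    intro j k hjk
    have h1 : j.val ≠ k.val := fun h => hjk (ZMod.val_injective N h)
    have := hvlt j; have := hvlt k
    omega
  have hpinj : ∀ j k : ZMod N, p j = p k → j = k := by
    intro j k h
    by_contra hjk
    have h1 : Real.cos (2 * π * j.val / N) = Real.cos (2 * π * k.val / N) := by
      have := congrArg Prod.fst h; rw [hp j, hp k] at this; exact this
    have h2 : Real.sin (2 * π * j.val / N) = Real.sin (2 * π * k.val / N) := by
      have := congrArg Prod.snd h; rw [hp j, hp k] at this; exact this
    apply star_cos_ne_one N hN ((j.val : ℤ) - k.val) (hΔ j k hjk).1 (hΔ j k hjk).2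
    push_cast
    rw [show 2 * π * ((j.val:ℝ) - (k.val:ℝ)) / N = 2 * π * j.val / N - 2 * π * k.val / N
      by ring, Real.cos_sub, h1, h2]
    linear_combination Real.cos_sq_add_sin_sq (2 * π * (k.val:ℝ) / N)
  have hm'ne : (m : ZMod N) ≠ 0 := by
    intro h
    have : ((m : ZMod N)).val = 0 := by rw [h, ZMod.val_zero]
    rw [ZMod.val_natCast_of_lt hmN] at this
    omega
  have hkm : ∀ k : ZMod N, k ≠ k + (m : ZMod N) := by
    intro k h
    exact hm'ne (by linear_combination -h)
  have hPQ : ∀ k : ZMod N, p k ≠ p (k + (m : ZMod N)) := by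
    intro k h
    exact hkm k (hpinj _ _ h)
  -- segment characterization
  have hseg : ∀ (k : ZMod N) (x : ℝ × ℝ), x ∈ s k ↔
      ((nv k).1 * x.1 + (nv k).2 * x.2 = d ∧ x.1 ^ 2 + x.2 ^ 2 ≤ 1) := by
    intro k x
    rw [hs k]
    exact star_chord_mem_iff (hpunit k) (hpunit _) (hPQ k) (hnne k) (hdk k) (hdk2 k)
  -- determinant and dot of normals
  have hDval : ∀ j k : ZMod N, (nv j).1 * (nv k).2 - (nv j).2 * (nv k).1
      = Real.sin (2 * π * ((((k.val : ℤ) - (j.val : ℤ)) : ℤ) : ℝ) / N) := by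
    intro j k
    have harg : 2 * π * ((((k.val : ℤ) - (j.val : ℤ)) : ℤ) : ℝ) / N = φ k - φ j := by
      rw [hφdef]; push_cast; field_simp; ring
    rw [harg, Real.sin_sub]
    ring
  have hDne : ∀ j k : ZMod N, j ≠ k →
      (nv j).1 * (nv k).2 - (nv j).2 * (nv k).1 ≠ 0 := by
    intro j k hjk
    have h3 := star_int_of_sin N hN hodd' ((k.val:ℤ) - (j.val:ℤ)) (hΔ k j (Ne.symm hjk)).1
      (hΔ k j (Ne.symm hjk)).2
    rw [hDval j k]
    exact h3
  have hcosn : ∀ j k : ZMod N, (nv j).1 * (nv k).1 + (nv j).2 * (nv k).2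
      = Real.cos (2 * π * ((((j.val : ℤ) - (k.val : ℤ)) : ℤ) : ℝ) / N) := by
    intro j k
    have harg : 2 * π * ((((j.val : ℤ) - (k.val : ℤ)) : ℤ) : ℝ) / N = φ j - φ k := by
      rw [hφdef]; push_cast; field_simp; ring
    rw [harg, Real.cos_sub]
  -- the dot bound
  have hcge : ∀ j k : ZMod N, j ≠ k →
      2 * d ^ 2 ≤ 1 + ((nv j).1 * (nv k).1 + (nv j).2 * (nv k).2) := by
    intro j k hjk
    rw [hcosn j k]
    have hb := star_cos_bound N m hN hNm _ (hΔ j k hjk).1 (hΔ j k hjk).2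
    have hdd : Real.cos (2 * π * m / N) = 2 * d ^ 2 - 1 := by
      rw [hddef, show 2 * π * m / N = 2 * (π * m / N) by ring, Real.cos_two_mul]
    rw [hdd] at hb
    linarith
  -- unique intersection of any two distinct segments
  have hEU : ∀ j k : ZMod N, j ≠ k → ∃! x : ℝ × ℝ, x ∈ s j ∩ s k := by
    intro j k hjk
    have hD := hDne j k hjk
    have hA := hnunit j
    have hB := hnunit k
    have hc2 : ((nv j).1 * (nv k).2 - (nv j).2 * (nv k).1) ^ 2
        = 1 - ((nv j).1 * (nv k).1 + (nv j).2 * (nv k).2) ^ 2 := by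
      linear_combination ((nv k).1 ^ 2 + (nv k).2 ^ 2) * hA + hB
    have hcge' := hcge j k hjk
    have hc1 : 0 < 1 + ((nv j).1 * (nv k).1 + (nv j).2 * (nv k).2) := by nlinarith [hd]
    set D : ℝ := (nv j).1 * (nv k).2 - (nv j).2 * (nv k).1 with hDdef
    have hnb : (d * ((nv k).2 - (nv j).2)) ^ 2 + (d * ((nv j).1 - (nv k).1)) ^ 2 ≤ D ^ 2 := by
      have h1c : 0 ≤ 1 - ((nv j).1 * (nv k).1 + (nv j).2 * (nv k).2) := by
        nlinarith [hc2, sq_nonneg D, hc1]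
      have hexp : (d * ((nv k).2 - (nv j).2)) ^ 2 + (d * ((nv j).1 - (nv k).1)) ^ 2
          = d ^ 2 * (2 - 2 * ((nv j).1 * (nv k).1 + (nv j).2 * (nv k).2)) := by
        linear_combination d ^ 2 * hA + d ^ 2 * hB
      nlinarith [hexp, hc2, mul_le_mul_of_nonneg_left hcge' h1c]
    refine ⟨(d * ((nv k).2 - (nv j).2) / D, d * ((nv j).1 - (nv k).1) / D), ⟨?_, ?_⟩, ?_⟩
    · rw [hseg]
      constructor
      · field_simp
        ring
      · rw [div_pow, div_pow, ← add_div, div_le_one (by positivity)]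
        exact hnb
    · rw [hseg]
      constructor
      · field_simp
        ring
      · rw [div_pow, div_pow, ← add_div, div_le_one (by positivity)]
        exact hnb
    · rintro y ⟨hy1, hy2⟩
      rw [hseg] at hy1 hy2
      have e1 : (nv j).1 * (y.1 - d * ((nv k).2 - (nv j).2) / D)
          + (nv j).2 * (y.2 - d * ((nv j).1 - (nv k).1) / D) = 0 := by
        have h' : (nv j).1 * (d * ((nv k).2 - (nv j).2) / D)
            + (nv j).2 * (d * ((nv j).1 - (nv k).1) / D) = d := by field_simp; ring
        linear_combination hy1.1 - h'
      have e2 : (nv k).1 * (y.1 - d * ((nv k).2 - (nv j).2) / D)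
          + (nv k).2 * (y.2 - d * ((nv j).1 - (nv k).1) / D) = 0 := by
        have h' : (nv k).1 * (d * ((nv k).2 - (nv j).2) / D)
            + (nv k).2 * (d * ((nv j).1 - (nv k).1) / D) = d := by field_simp; ring
        linear_combination hy2.1 - h'
      have u1 : D * (y.1 - d * ((nv k).2 - (nv j).2) / D) = 0 := by
        rw [hDdef]; linear_combination (nv k).2 * e1 - (nv j).2 * e2
      have u2 : D * (y.2 - d * ((nv j).1 - (nv k).1) / D) = 0 := by
        rw [hDdef]; linear_combination (-(nv k).1) * e1 + (nv j).1 * e2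
      have w1 : y.1 = d * ((nv k).2 - (nv j).2) / D := by
        have := (mul_eq_zero.1 u1).resolve_left hD
        linarith
      have w2 : y.2 = d * ((nv j).1 - (nv k).1) / D := by
        have := (mul_eq_zero.1 u2).resolve_left hD
        linarith
      exact Prod.ext w1 w2
  -- no three segments concurrent
  have hnvinj : ∀ j k : ZMod N, j ≠ k → nv j ≠ nv k := by
    intro j k hjk h
    apply hDne j k hjk
    rw [h]; ring
  have hno3 : ∀ (x : ℝ × ℝ) (i j k : ZMod N), i ≠ j → j ≠ k → i ≠ k →
      x ∈ s i → x ∈ s j → x ∈ s k → False := by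
    intro x i j k hij hjk hik hxi hxj hxk
    rw [hseg] at hxi hxj hxk
    have h1 : x.1 * (nv i).1 + x.2 * (nv i).2 = d := by linear_combination hxi.1
    have h2 : x.1 * (nv j).1 + x.2 * (nv j).2 = d := by linear_combination hxj.1
    have h3 : x.1 * (nv k).1 + x.2 * (nv k).2 = d := by linear_combination hxk.1
    exact hnvinj j k hjk (star_two_tangents hdne (hnunit i) (hnunit j) (hnunit k)
      h1 h2 h3 (hnvinj i j hij) (hnvinj i k hik))
  -- corners lie on exactly two segments
  have hsub : ∀ k : ZMod N, k - (m : ZMod N) + (m : ZMod N) = k := by intro k; ring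
  have hcorner : ∀ k : ZMod N, {i : ZMod N | p k ∈ s i} = {k, k - (m : ZMod N)} := by
    intro k
    ext i
    simp only [Set.mem_setOf_eq, Set.mem_insert_iff, Set.mem_singleton_iff]
    constructor
    · intro h
      rw [hs i] at h
      rcases star_seg_boundary (hpunit i) (hpunit (i + (m : ZMod N))) (hPQ i) h (hpunit k)
        with h' | h'
      · left; exact (hpinj _ _ h').symm
      · right; rw [hpinj _ _ h']; ring
    · intro h
      rcases h with rfl | rfl
      · rw [hs i]; exact left_mem_segment ℝ _ _
      · rw [hs (k - (m : ZMod N)), hsub k]; exact right_mem_segment ℝ _ _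
  have hkm2 : ∀ k : ZMod N, k ≠ k - (m : ZMod N) := by
    intro k h
    apply hm'ne
    linear_combination h
  refine ⟨?_, hEU, ?_, ?_⟩
  · -- the count
    have hex : ∀ z : Sym2 (ZMod N), ¬ z.IsDiag →
        ∃ x : ℝ × ℝ, ∃ j k : ZMod N, j ≠ k ∧ z = s(j, k) ∧ x ∈ s j ∩ s k := by
      intro z hz
      induction z using Sym2.ind with
      | _ j k =>
        rw [Sym2.mk_isDiag_iff] at hz
        obtain ⟨x, hx, -⟩ := hEU j k hz
        exact ⟨x, j, k, hz, rfl, hx⟩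
    set F : {z : Sym2 (ZMod N) // ¬ z.IsDiag} → ℝ × ℝ := fun z => (hex z.1 z.2).choose
      with hFdef
    have hFspec : ∀ z : {z : Sym2 (ZMod N) // ¬ z.IsDiag},
        ∃ j k : ZMod N, j ≠ k ∧ z.1 = s(j, k) ∧ F z ∈ s j ∩ s k :=
      fun z => (hex z.1 z.2).choose_spec
    have hmem : ∀ (z : {z : Sym2 (ZMod N) // ¬ z.IsDiag}) (j k : ZMod N), z.1 = s(j, k) →
        F z ∈ s j ∩ s k := by
      intro z j k hzjk
      obtain ⟨j', k', hne, hz, hx⟩ := hFspec z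
      rw [hzjk, Sym2.eq_iff] at hz
      rcases hz with ⟨rfl, rfl⟩ | ⟨rfl, rfl⟩
      · exact hx
      · exact ⟨hx.2, hx.1⟩
    have hinj : Function.Injective F := by
      intro z z' hzz
      by_contra hne
      obtain ⟨j, k, hjk, hz, hx⟩ := hFspec z
      obtain ⟨j', k', hjk', hz', hx'⟩ := hFspec z'
      rw [hzz] at hx
      have hne2 : ¬ (s(j, k) = s(j', k')) := by
        rw [← hz, ← hz']
        exact fun h => hne (Subtype.ext h)
      by_cases hj' : j' = j ∨ j' = k
      · by_cases hk' : k' = j ∨ k' = k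
        · apply hne2
          rw [Sym2.eq_iff]
          rcases hj' with h1 | h1 <;> rcases hk' with h2 | h2
          · exact absurd (h1.trans h2.symm) hjk'
          · exact Or.inl ⟨h1.symm, h2.symm⟩
          · exact Or.inr ⟨h2.symm, h1.symm⟩
          · exact absurd (h1.trans h2.symm) hjk'
        · push_neg at hk'
          exact hno3 (F z') j k k' hjk (fun h => hk'.2 h.symm) (fun h => hk'.1 h.symm)
            hx.1 hx.2 hx'.2
      · push_neg at hj'
        exact hno3 (F z') j k j' hjk (fun h => hj'.2 h.symm) (fun h => hj'.1 h.symm)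
          hx.1 hx.2 hx'.1
    have hrange : {x : ℝ × ℝ | ∃ j k : ZMod N, j ≠ k ∧ x ∈ s j ∧ x ∈ s k} = Set.range F := by
      ext x
      simp only [Set.mem_setOf_eq, Set.mem_range]
      constructor
      · rintro ⟨j, k, hjk, hxj, hxk⟩
        have hz : ¬ (s(j, k) : Sym2 (ZMod N)).IsDiag := by
          rw [Sym2.mk_isDiag_iff]; exact hjk
        refine ⟨⟨s(j, k), hz⟩, ?_⟩
        have h1 := hmem ⟨s(j, k), hz⟩ j k rfl
        obtain ⟨x₀, hx₀, huniq⟩ := hEU j k hjk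
        rw [huniq _ h1, huniq x ⟨hxj, hxk⟩]
      · rintro ⟨z, rfl⟩
        obtain ⟨j, k, hjk, hz, hx⟩ := hFspec z
        exact ⟨j, k, hjk, hx.1, hx.2⟩
    rw [hrange, ← Nat.card_coe_set_eq, Nat.card_range_of_injective hinj,
      Nat.card_eq_fintype_card, Sym2.card_subtype_not_diag, ZMod.card, Nat.choose_two_right]
  · rintro x ⟨i, j, k, hij, hjk, hik, hi, hj, hk⟩
    exact hno3 x i j k hij hjk hik hi hj hk
  · intro k
    rw [hcorner k, Set.ncard_pair (hkm2 k)]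
end

section
/- Let N ≥ 4 be an even natural number and let p : ZMod N → ℝ² be points such that no three of the points p i are collinear. Suppose the segment segment ℝ (p i) (p (i+1)) is a splitter, i.e. it intersects segment ℝ (p j) (p (j+1)) for every j ≠ i. Then the line through p i and p (i+1) separates the corners by parity: there is a sign ε ∈ {−1, +1} such that for every j ∈ ZMod N with p j ∉ {p i, p (i+1)}, the cross product (p (i+1) − p i) × (p j − p i) = (p (i+1) − p i).1 · (p j − p i).2 − (p (i+1) − p i).2 · (p j − p i).1 is strictly positive when j − i is even and ε = +1 (and strictly negative when j − i is odd and ε = +1, with the two cases exchanged when ε = −1). Equivalently, all corners p j with j − i even lie strictly on one open side of the line through p i and p (i+1), and all corners with j − i odd lie strictly on the other open side. -/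
/-- The cross product `(b − a) × (x − a)` of planar vectors, determining on which
open side of the line through `a` and `b` the point `x` lies. -/
def cross (a b x : ℝ × ℝ) : ℝ :=
  (b - a).1 * (x - a).2 - (b - a).2 * (x - a).1

lemma cross_self_left (a b : ℝ × ℝ) : cross a b a = 0 := by
  simp [cross]

lemma cross_self_right (a b : ℝ × ℝ) : cross a b b = 0 := by
  simp [cross, mul_comm]

lemma cross_affine (a b u v : ℝ × ℝ) {s t : ℝ} (h : s + t = 1) :
    cross a b (s • u + t • v) = s * cross a b u + t * cross a b v := by
  have ht : t = 1 - s := by linarith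
  subst ht
  simp only [cross, Prod.fst_sub, Prod.snd_sub, Prod.fst_add, Prod.snd_add,
    Prod.smul_fst, Prod.smul_snd, smul_eq_mul]
  ring

lemma collinear_of_cross_eq_zero {a b x : ℝ × ℝ} (h : cross a b x = 0) :
    Collinear ℝ ({a, b, x} : Set (ℝ × ℝ)) := by
  rw [collinear_iff_of_mem (Set.mem_insert a _)]
  have hcoord : (b.1 - a.1) * (x.2 - a.2) - (b.2 - a.2) * (x.1 - a.1) = 0 := by
    simpa [cross] using h
  by_cases hb : b = a
  · refine ⟨x - a, fun q hq => ?_⟩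
    simp only [Set.mem_insert_iff, Set.mem_singleton_iff] at hq
    rcases hq with rfl | rfl | rfl
    · exact ⟨0, by simp⟩
    · exact ⟨0, by simp [hb]⟩
    · exact ⟨1, by simp⟩
  · refine ⟨b - a, fun q hq => ?_⟩
    simp only [Set.mem_insert_iff, Set.mem_singleton_iff] at hq
    rcases hq with rfl | rfl | rfl
    · exact ⟨0, by simp⟩
    · exact ⟨1, by simp⟩
    · have hba : b - a ≠ 0 := sub_ne_zero.mpr hb
      have hor : b.1 - a.1 ≠ 0 ∨ b.2 - a.2 ≠ 0 := by
        by_contra hc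
        push_neg at hc
        apply hba
        apply Prod.ext <;> simp only [Prod.fst_sub, Prod.snd_sub, Prod.fst_zero, Prod.snd_zero] <;>
          linarith [hc.1, hc.2]
      rcases hor with h1 | h2
      · refine ⟨(q.1 - a.1) / (b.1 - a.1), ?_⟩
        have : ((q.1 - a.1) / (b.1 - a.1)) • (b - a) +ᵥ a = q := by
          apply Prod.ext <;>
            simp only [Prod.fst_vadd, Prod.snd_vadd, Prod.smul_fst, Prod.smul_snd,
              smul_eq_mul, vadd_eq_add, Prod.fst_sub, Prod.snd_sub, Prod.fst_add, Prod.snd_add] <;>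
            field_simp <;> linarith [hcoord]
        exact this.symm
      · refine ⟨(q.2 - a.2) / (b.2 - a.2), ?_⟩
        have : ((q.2 - a.2) / (b.2 - a.2)) • (b - a) +ᵥ a = q := by
          apply Prod.ext <;>
            simp only [Prod.fst_vadd, Prod.snd_vadd, Prod.smul_fst, Prod.smul_snd,
              smul_eq_mul, vadd_eq_add, Prod.fst_sub, Prod.snd_sub, Prod.fst_add, Prod.snd_add] <;>
            field_simp <;> linarith [hcoord]
        exact this.symm

lemma convex_zero_sign {s t cu cv : ℝ} (hs : 0 ≤ s) (ht : 0 ≤ t) (hst : s + t = 1)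
    (h0 : s * cu + t * cv = 0) : cu * cv ≤ 0 := by
  rcases lt_or_eq_of_le hs with hs' | hs'
  · by_contra hcon
    push_neg at hcon
    rcases mul_pos_iff.mp hcon with ⟨h1, h2⟩ | ⟨h1, h2⟩
    · nlinarith [mul_pos hs' h1, mul_nonneg ht h2.le]
    · nlinarith [mul_neg_of_pos_of_neg hs' h1, mul_nonneg ht (neg_nonneg.mpr h2.le)]
  · have hs0 : s = 0 := hs'.symm
    have ht1 : t = 1 := by linarith
    rw [hs0, ht1] at h0
    have : cv = 0 := by linarith
    simp [this]

lemma cross_eq_zero_of_mem_segment {a b x : ℝ × ℝ} (h : x ∈ segment ℝ a b) :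
    cross a b x = 0 := by
  rcases h with ⟨s, t, hs, ht, hst, rfl⟩
  rw [cross_affine a b a b hst, cross_self_left, cross_self_right]
  ring

theorem splitter_separates_parities (N : ℕ) (hN : 4 ≤ N) (heven : Even N)
    (p : ZMod N → ℝ × ℝ)
    (hgen : ∀ i j k : ZMod N, i ≠ j → j ≠ k → i ≠ k →
      ¬ Collinear ℝ ({p i, p j, p k} : Set (ℝ × ℝ)))
    (i : ZMod N)
    (hsplit : ∀ j : ZMod N, j ≠ i →
      (segment ℝ (p j) (p (j + 1)) ∩ segment ℝ (p i) (p (i + 1))).Nonempty) :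
    ∃ ε : ℝ, (ε = 1 ∨ ε = -1) ∧
      ∀ j : ZMod N, p j ∉ ({p i, p (i + 1)} : Set (ℝ × ℝ)) →
        ((Even (j - i).val → 0 < ε * cross (p i) (p (i + 1)) (p j)) ∧
         (¬ Even (j - i).val → ε * cross (p i) (p (i + 1)) (p j) < 0)) := by
  haveI : NeZero N := ⟨by omega⟩
  set q : ℕ → ℝ := fun m => cross (p i) (p (i + 1)) (p (i + (m : ZMod N))) with hq
  -- casting helper
  have hcast : ∀ m n : ℕ, m < N → n < N → (m : ZMod N) = (n : ZMod N) → m = n := by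
    intro m n hm hn h
    have := (ZMod.natCast_eq_natCast_iff' m n N).mp h
    rwa [Nat.mod_eq_of_lt hm, Nat.mod_eq_of_lt hn] at this
  have hinj : ∀ m n : ℕ, m < N → n < N → m ≠ n →
      i + (m : ZMod N) ≠ i + (n : ZMod N) := by
    intro m n hm hn hmn h
    exact hmn (hcast m n hm hn (add_left_cancel h))
  -- nonzero crosses
  have hne : ∀ m : ℕ, 2 ≤ m → m < N → q m ≠ 0 := by
    intro m h2 hm hzero
    have hcol := collinear_of_cross_eq_zero hzero
    refine hgen i (i + 1) (i + (m : ZMod N)) ?_ ?_ ?_ hcol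
    · simpa using hinj 0 1 (by omega) (by omega) (by omega)
    · simpa using hinj 1 m (by omega) hm (by omega)
    · simpa using hinj 0 m (by omega) hm (by omega)
  -- sign flip between consecutive crosses
  have hflip : ∀ m : ℕ, 2 ≤ m → m + 1 < N → q m * q (m + 1) < 0 := by
    intro m h2 hm
    have hji : i + (m : ZMod N) ≠ i := by
      simpa using hinj m 0 (by omega) (by omega) (by omega)
    obtain ⟨x, hxj, hxi⟩ := hsplit (i + (m : ZMod N)) hji
    have h0 : cross (p i) (p (i + 1)) x = 0 := cross_eq_zero_of_mem_segment hxi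
    rcases hxj with ⟨s, t, hs, ht, hst, hx⟩
    have hsucc : i + (m : ZMod N) + 1 = i + ((m + 1 : ℕ) : ZMod N) := by
      push_cast; ring
    rw [← hx, cross_affine _ _ _ _ hst, hsucc] at h0
    have h0' : s * q m + t * q (m + 1) = 0 := by simpa [hq] using h0
    have hne1 := hne m h2 (by omega)
    have hne2 := hne (m + 1) (by omega) hm
    have hle : q m * q (m + 1) ≤ 0 := convex_zero_sign hs ht hst h0'
    exact lt_of_le_of_ne hle (mul_ne_zero hne1 hne2)
  -- choice of sign
  have hq2ne : q 2 ≠ 0 := hne 2 le_rfl (by omega)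
  obtain ⟨ε, hεpm, hε2⟩ : ∃ ε : ℝ, (ε = 1 ∨ ε = -1) ∧ 0 < ε * q 2 := by
    rcases lt_or_gt_of_ne hq2ne with h | h
    · exact ⟨-1, Or.inr rfl, by nlinarith⟩
    · exact ⟨1, Or.inl rfl, by nlinarith⟩
  -- main chain
  have key : ∀ k : ℕ, 2 + k < N →
      (Even k → 0 < ε * q (2 + k)) ∧ (¬ Even k → ε * q (2 + k) < 0) := by
    intro k
    induction k with
    | zero =>
      intro _
      exact ⟨fun _ => hε2, fun h => absurd Even.zero h⟩
    | succ k ih =>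
      intro hk
      have ih' := ih (by omega)
      have hf : q (2 + k) * q (2 + k + 1) < 0 := hflip (2 + k) (by omega) (by omega)
      have hstep : 2 + (k + 1) = 2 + k + 1 := by omega
      rw [hstep]
      constructor
      · intro hev
        have hodd : ¬ Even k := by
          rw [Nat.even_add_one] at hev; exact hev
        have hA := ih'.2 hodd
        nlinarith [sq_nonneg (q (2 + k)), mul_pos_of_neg_of_neg hA hf]
      · intro hnev
        have hevk : Even k := by
          rw [Nat.even_add_one] at hnev; exact not_not.mp hnev
        have hA := ih'.1 hevk
        nlinarith [sq_nonneg (q (2 + k)), mul_pos hA (by linarith : (0:ℝ) < -(q (2 + k) * q (2 + k + 1)))]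
  refine ⟨ε, hεpm, ?_⟩
  intro j hj
  have hji : j ≠ i := fun h => hj (by rw [h]; exact Set.mem_insert _ _)
  have hji1 : j ≠ i + 1 := fun h => hj (by rw [h]; exact Set.mem_insert_of_mem _ rfl)
  have hd0 : j - i ≠ 0 := sub_ne_zero.mpr hji
  have hdval : (((j - i).val : ℕ) : ZMod N) = j - i := ZMod.natCast_rightInverse _
  have hdlt : (j - i).val < N := ZMod.val_lt _
  have hv0 : (j - i).val ≠ 0 := fun h => hd0 ((ZMod.val_eq_zero _).mp h)
  have hv1 : (j - i).val ≠ 1 := by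
    intro h
    apply hji1
    have : ((j - i).val : ZMod N) = (1 : ZMod N) := by rw [h]; simp
    rw [hdval] at this
    have := sub_eq_iff_eq_add.mp this
    rw [this, add_comm]
  obtain ⟨k, hk⟩ : ∃ k, (j - i).val = 2 + k := ⟨(j - i).val - 2, by omega⟩
  have h2k : ((2 + k : ℕ) : ZMod N) = j - i := by rw [← hk, hdval]
  have hjeq : j = i + ((2 + k : ℕ) : ZMod N) := by rw [h2k]; ring
  have hkey := key k (by omega)
  constructor
  · intro hev
    rw [hk] at hev
    have hevk : Even k := by simpa [Nat.even_add] using hev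
    have := hkey.1 hevk
    rw [hjeq]
    simpa [hq] using this
  · intro hnev
    rw [hk] at hnev
    have hoddk : ¬ Even k := fun h => hnev (by simpa [Nat.even_add] using h)
    have := hkey.2 hoddk
    rw [hjeq]
    simpa [hq] using this
end

section
/- Let N ≥ 4 be an even natural number and let p : ZMod N → ℝ² be points such that no three of the points p i are collinear. Then the number of unordered pairs {i, j} of distinct indices in ZMod N for which segment ℝ (p i) (p (i+1)) and segment ℝ (p j) (p (j+1)) have nonempty intersection is at most (N² − 2N + 2)/2. -/
namespace IPB



/-- Twice the signed area of the triangle `x y z`. -/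
def dd (x y z : ℝ × ℝ) : ℝ :=
  (y.1 - x.1) * (z.2 - x.2) - (y.2 - x.2) * (z.1 - x.1)

lemma dd_cyc (x y z : ℝ × ℝ) : dd x y z = dd y z x := by
  simp only [dd]; ring

lemma dd_self_left (x y : ℝ × ℝ) : dd x y x = 0 := by simp only [dd]; ring

lemma dd_self_right (x y : ℝ × ℝ) : dd x y y = 0 := by simp only [dd]; ring

lemma dd_comb {s t : ℝ} (hst : s + t = 1) (x y u v : ℝ × ℝ) :
    dd x y (s • u + t • v) = s * dd x y u + t * dd x y v := by
  have ht : t = 1 - s := by linarith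
  subst ht
  simp only [dd, Prod.smul_fst, Prod.smul_snd, Prod.fst_add, Prod.snd_add, smul_eq_mul]
  ring

lemma dd_zero_of_mem {w x y : ℝ × ℝ} (h : w ∈ segment ℝ x y) : dd x y w = 0 := by
  obtain ⟨a, b, ha, hb, hab, rfl⟩ := h
  rw [dd_comb hab, dd_self_left, dd_self_right]; ring

/-- Proper crossing: if a point of the segment `[u,v]` lies on the segment `[x,y]`
and neither `u` nor `v` is on the line `x y`, then `u, v` are strictly on
opposite sides of that line. -/
lemma crossA {w x y u v : ℝ × ℝ} (h1 : w ∈ segment ℝ x y) (h2 : w ∈ segment ℝ u v)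
    (hu : dd x y u ≠ 0) (hv : dd x y v ≠ 0) : dd x y u * dd x y v < 0 := by
  obtain ⟨a, b, ha, hb, hab, rfl⟩ := h2
  have h0 : a * dd x y u + b * dd x y v = 0 := by
    rw [← dd_comb hab]; exact dd_zero_of_mem h1
  have ha' : 0 < a := by
    rcases ha.lt_or_eq with h | h
    · exact h
    · exfalso; apply hv
      have hb1 : b = 1 := by linarith
      rw [← h] at h0; rw [hb1] at h0; linarith
  have hb' : 0 < b := by
    rcases hb.lt_or_eq with h | h
    · exact h
    · exfalso; apply hu
      have ha1 : a = 1 := by linarith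
      rw [← h] at h0; rw [ha1] at h0; linarith
  have hbv : b * dd x y v = -(a * dd x y u) := by linarith
  have hkey : a * b * (dd x y u * dd x y v) = -(a * dd x y u)^2 := by
    calc a * b * (dd x y u * dd x y v) = (a * dd x y u) * (b * dd x y v) := by ring
    _ = (a * dd x y u) * (-(a * dd x y u)) := by rw [hbv]
    _ = -(a * dd x y u)^2 := by ring
  have hau : a * dd x y u ≠ 0 := mul_ne_zero ha'.ne' hu
  have hsq : 0 < (a * dd x y u)^2 :=
    lt_of_le_of_ne (sq_nonneg _) (Ne.symm (pow_ne_zero 2 hau))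
  nlinarith [mul_pos ha' hb']

lemma mem_line {x y z : ℝ × ℝ} (h : dd x y z = 0) (hxy : x ≠ y) :
    ∃ c : ℝ, z = (1 - c) • x + c • y := by
  simp only [dd] at h
  by_cases h1 : y.1 - x.1 = 0
  · have h2 : y.2 - x.2 ≠ 0 := by
      intro h2; apply hxy; apply Prod.ext <;> [skip; skip] <;> nlinarith [h1, h2]
    refine ⟨(z.2 - x.2) / (y.2 - x.2), ?_⟩
    have hz1 : z.1 = x.1 := by
      have := h; rw [h1] at this; simp at this
      rcases this with h' | h'
      · exact absurd h' h2
      · linarith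
    apply Prod.ext
    · simp only [Prod.fst_add, Prod.smul_fst, smul_eq_mul]
      have : y.1 = x.1 := by linarith
      rw [hz1, this]; ring
    · simp only [Prod.snd_add, Prod.smul_snd, smul_eq_mul]
      field_simp
      ring
  · refine ⟨(z.1 - x.1) / (y.1 - x.1), ?_⟩
    apply Prod.ext
    · simp only [Prod.fst_add, Prod.smul_fst, smul_eq_mul]
      field_simp; ring
    · simp only [Prod.snd_add, Prod.smul_snd, smul_eq_mul]
      field_simp
      nlinarith [h]

lemma collinear_of_dd {x y z : ℝ × ℝ} (h : dd x y z = 0) :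
    Collinear ℝ ({x, y, z} : Set (ℝ × ℝ)) := by
  by_cases hxy : x = y
  · subst hxy
    rw [Set.insert_idem]
    exact collinear_pair ℝ x z
  · obtain ⟨c, hc⟩ := mem_line h hxy
    rw [collinear_iff_exists_forall_eq_smul_vadd]
    refine ⟨x, y - x, fun q hq => ?_⟩
    rcases hq with rfl | rfl | rfl
    · exact ⟨0, by simp⟩
    · refine ⟨1, by simp [vadd_eq_add]⟩
    · refine ⟨c, ?_⟩
      rw [hc]
      simp [vadd_eq_add, smul_sub, sub_smul, one_smul]
      abel




section Main

variable {N : ℕ} {p : ZMod N → ℝ × ℝ}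

lemma cast_eq_cast_iff (hN : 4 ≤ N) {s t : ℕ} (hs : s < N) (ht : t < N) :
    (s : ZMod N) = (t : ZMod N) ↔ s = t := by
  haveI : NeZero N := ⟨by omega⟩
  constructor
  · intro hc
    have := congrArg ZMod.val hc
    rwa [ZMod.val_cast_of_lt hs, ZMod.val_cast_of_lt ht] at this
  · intro h; rw [h]

lemma cast_ne_zero (hN : 4 ≤ N) {s : ℕ} (h0 : 0 < s) (hs : s < N) :
    (s : ZMod N) ≠ 0 := by
  have := (cast_eq_cast_iff hN hs (show 0 < N by omega)).not.mpr (by omega)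
  simpa using this

lemma cast_ne_one (hN : 4 ≤ N) {s : ℕ} (h0 : 1 < s) (hs : s < N) :
    (s : ZMod N) ≠ 1 := by
  have := (cast_eq_cast_iff hN hs (show 1 < N by omega)).not.mpr (by omega)
  simpa using this

lemma chain (hN : 4 ≤ N)
    (hD : ∀ i j k : ZMod N, i ≠ j → j ≠ k → i ≠ k → dd (p i) (p j) (p k) ≠ 0)
    (i : ZMod N)
    (hfull : ∀ j : ZMod N, j ≠ i →
      (segment ℝ (p i) (p (i+1)) ∩ segment ℝ (p j) (p (j+1))).Nonempty) :
    ∀ t : ℕ, 2 ≤ t → t ≤ N - 1 →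
      0 < dd (p i) (p (i+1)) (p (i + (t : ZMod N))) *
          dd (p i) (p (i+1)) (p (i + 2)) * (-1:ℝ)^t := by
  haveI : NeZero N := ⟨by omega⟩
  have h10 : (1 : ZMod N) ≠ 0 := by
    have := cast_ne_zero hN (s := 1) (by omega) (by omega); simpa using this
  have hii1 : i ≠ i + 1 := by
    intro h; exact h10 (by linear_combination -h)
  have hD2 : dd (p i) (p (i+1)) (p (i + 2)) ≠ 0 := by
    have h20 : (2 : ZMod N) ≠ 0 := by
      have := cast_ne_zero hN (s := 2) (by omega) (by omega); simpa using this
    have h21 : (2 : ZMod N) ≠ 1 := by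
      have := cast_ne_one hN (s := 2) (by omega) (by omega); simpa using this
    apply hD
    · exact hii1
    · intro h; exact h21 (by linear_combination -h)
    · intro h; exact h20 (by linear_combination -h)
  intro t ht2
  induction t, ht2 using Nat.le_induction with
  | base =>
    intro _
    have he : (-1:ℝ)^2 = 1 := by norm_num
    have hc : ((2:ℕ) : ZMod N) = (2 : ZMod N) := by push_cast; ring
    rw [hc, he, mul_one]
    exact mul_self_pos.mpr hD2
  | succ t ht ih =>
    intro htN
    have ih' := ih (by omega)
    have htlt : t < N := by omega
    have ht0 : ((t:ℕ) : ZMod N) ≠ 0 := cast_ne_zero hN (s := t) (by omega) htlt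
    have ht1 : ((t:ℕ) : ZMod N) ≠ 1 := cast_ne_one hN (s := t) (by omega) htlt
    have htN1 : ((t:ℕ) : ZMod N) ≠ -1 := by
      intro h
      have : (((t+1:ℕ)) : ZMod N) = 0 := by push_cast; linear_combination h
      exact cast_ne_zero hN (s := t+1) (by omega) (by omega) this
    obtain ⟨w, hw1, hw2⟩ := hfull (i + (t : ZMod N)) (by
      intro hc; exact ht0 (by linear_combination hc))
    have hstep : i + (t : ZMod N) + 1 = i + ((t+1 : ℕ) : ZMod N) := by push_cast; ring
    rw [hstep] at hw2
    have hDu : dd (p i) (p (i+1)) (p (i + (t : ZMod N))) ≠ 0 := by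
      apply hD
      · exact hii1
      · intro h; exact ht1 (by linear_combination -h)
      · intro h; exact ht0 (by linear_combination -h)
    have hDv : dd (p i) (p (i+1)) (p (i + ((t+1 : ℕ) : ZMod N))) ≠ 0 := by
      have h10' : ((t+1:ℕ) : ZMod N) ≠ 0 := cast_ne_zero hN (s := t+1) (by omega) (by omega)
      have h11' : ((t+1:ℕ) : ZMod N) ≠ 1 := by
        intro h
        exact ht0 (by push_cast at h ⊢; linear_combination h)
      apply hD
      · exact hii1
      · intro h; exact h11' (by linear_combination -h)
      · intro h; exact h10' (by linear_combination -h)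
    have hcross := crossA hw1 hw2 hDu hDv
    -- sign bookkeeping
    set A := dd (p i) (p (i+1)) (p (i + (t : ZMod N))) with hA
    set B := dd (p i) (p (i+1)) (p (i + ((t+1:ℕ) : ZMod N))) with hB
    set C := dd (p i) (p (i+1)) (p (i + 2)) with hC
    have hgoal : ((t+1:ℕ) : ZMod N) = ((t:ℕ) : ZMod N) + 1 := by push_cast; ring
    have key : (A^2) * (B * C * (-1:ℝ)^(t+1)) = (A * C * (-1:ℝ)^t) * (-(A * B)) := by
      ring
    have hpos : 0 < (A * C * (-1:ℝ)^t) * (-(A * B)) :=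
      mul_pos ih' (by linarith)
    rw [← key] at hpos
    have hA2 : (0:ℝ) < A^2 :=
      lt_of_le_of_ne (sq_nonneg _) (Ne.symm (pow_ne_zero 2 hDu))
    nlinarith [hpos, hA2]

lemma alt2 (hN : 4 ≤ N)
    (hD : ∀ i j k : ZMod N, i ≠ j → j ≠ k → i ≠ k → dd (p i) (p j) (p k) ≠ 0)
    (i : ZMod N)
    (hfull : ∀ j : ZMod N, j ≠ i →
      (segment ℝ (p i) (p (i+1)) ∩ segment ℝ (p j) (p (j+1))).Nonempty)
    {t u : ℕ} (ht2 : 2 ≤ t) (htN : t ≤ N - 1) (hu2 : 2 ≤ u) (huN : u ≤ N - 1) :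
    0 < dd (p i) (p (i+1)) (p (i + (t : ZMod N))) *
        dd (p i) (p (i+1)) (p (i + (u : ZMod N))) * (-1:ℝ)^(t+u) := by
  have h1 := chain hN hD i hfull t ht2 htN
  have h2 := chain hN hD i hfull u hu2 huN
  set A := dd (p i) (p (i+1)) (p (i + (t : ZMod N)))
  set B := dd (p i) (p (i+1)) (p (i + (u : ZMod N)))
  set C := dd (p i) (p (i+1)) (p (i + 2)) with hC
  have key : (A * C * (-1:ℝ)^t) * (B * C * (-1:ℝ)^u)
      = (A * B * (-1:ℝ)^(t+u)) * C^2 := by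
    rw [pow_add]; ring
  have hpos : 0 < (A * B * (-1:ℝ)^(t+u)) * C^2 := by
    rw [← key]; exact mul_pos h1 h2
  have hCne : C ≠ 0 := by
    intro h; rw [h] at h1; simpa using h1
  have hC2 : (0:ℝ) < C^2 :=
    lt_of_le_of_ne (sq_nonneg _) (Ne.symm (pow_ne_zero 2 hCne))
  nlinarith [hpos, hC2]



lemma master (x y w q1 q2 q3 : ℝ × ℝ) :
    dd w q3 q2 * dd x y q1 + dd w q1 q3 * dd x y q2
    = (dd w q3 q2 + dd w q1 q3 - dd w q1 q2) * dd x y w + dd w q1 q2 * dd x y q3 := by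
  simp only [dd]; ring

lemma KEY {A A' B B' u1 v1 u2 v2 ph ga : ℝ} (h5 : u1 + v1 = 1) (h6 : u2 + v2 = 1)
    (h1 : ph = u1*A + v1*A') (h2 : u1*B + v1*B' = 0)
    (h3 : ga = u2*B + v2*B') (h4 : u2*A + v2*A' = 0) :
    ph*(B - B') + ga*(A - A') = 0 := by
  linear_combination (B - B')*h1 + (A - A')*h3 + (A - A')*h2 + (B - B')*h4
    + ((B-B')*A - (A-A')*B)*h5 - ((B-B')*A - (A-A')*B)*h6

lemma dspos {x y : ℝ} (h : x*y < 0) : 0 < x*(x-y) := by nlinarith [sq_nonneg x]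

lemma ne_zero_left {x y : ℝ} (h : x*y < 0) : x ≠ 0 := by
  intro h'; rw [h', zero_mul] at h; exact lt_irrefl 0 h

lemma final_contra
    (Fa Fa' Fb Fb' Ga Ga' Hb Hb' P P' Q Q' ph g1 g2 A0 B0 D0 : ℝ)
    (cFa : Fa * Fa' < 0) (cFb : Fb * Fb' < 0) (cGa : Ga * Ga' < 0)
    (cHb : Hb * Hb' < 0) (cP : P * P' < 0) (cQ : Q * Q' < 0)
    (c7 : 0 < Q * Ga * (P * Hb)) (c8 : 0 < Fa * Fb)
    (R1 : ph * (Ga - Ga') + g1 * (Fa - Fa') = 0)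
    (R2 : ph * (Hb - Hb') + g2 * (Fb - Fb') = 0)
    (R3 : g1 * (P - P') + g2 * (Q - Q') = 0)
    (hD0 : D0 ≠ 0)
    (m1 : A0 * Fa + B0 * Fb = (A0 + B0 - D0) * ph)
    (m2 : A0 * Ga = D0 * Q)
    (m3 : B0 * Hb = D0 * P) : False := by
  have hQ : Q ≠ 0 := ne_zero_left cQ
  have hP : P ≠ 0 := ne_zero_left cP
  have hGa : Ga ≠ 0 := ne_zero_left cGa
  have hHb : Hb ≠ 0 := ne_zero_left cHb
  have hFa : Fa ≠ 0 := ne_zero_left cFa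
  have hFb : Fb ≠ 0 := ne_zero_left cFb
  by_cases hph : ph = 0
  · -- degenerate case : the three segments pass through a common point
    rw [hph, mul_zero] at m1
    have hA0 : A0 ≠ 0 := by
      intro h; rw [h, zero_mul] at m2
      exact mul_ne_zero hD0 hQ m2.symm
    have hB0 : B0 ≠ 0 := by
      intro h; rw [h, zero_mul] at m3
      exact mul_ne_zero hD0 hP m3.symm
    have hmm : (A0*B0)*((Ga*Hb)*(Q*P)) = D0^2*(Q*P)^2 := by
      linear_combination (B0*Hb*Q*P)*m2 + (D0*Q*Q*P)*m3
    have hQP : Q*P ≠ 0 := mul_ne_zero hQ hP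
    have h1 : 0 < D0^2*(Q*P)^2 := by
      apply mul_pos <;>
        exact lt_of_le_of_ne (sq_nonneg _) (Ne.symm (pow_ne_zero 2 (by assumption)))
    have hu : 0 < (Ga*Hb)*(Q*P) := by
      have : (Ga*Hb)*(Q*P) = Q*Ga*(P*Hb) := by ring
      rw [this]; exact c7
    have hXpos : 0 < A0*B0 := by
      by_contra h'
      push_neg at h'
      have : (A0*B0)*((Ga*Hb)*(Q*P)) ≤ 0 := mul_nonpos_of_nonpos_of_nonneg h' hu.le
      linarith [hmm ▸ this, h1]
    have h3 : (A0*B0)*(Fa*Fb) = -(B0*Fb)^2 := by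
      linear_combination (B0*Fb)*m1
    have hBF : B0*Fb ≠ 0 := mul_ne_zero hB0 hFb
    have h4 : 0 < (B0*Fb)^2 :=
      lt_of_le_of_ne (sq_nonneg _) (Ne.symm (pow_ne_zero 2 hBF))
    linarith [mul_pos hXpos c8, h3, h4]
  · -- nondegenerate case
    set K1 := (Ga - Ga')*(P - P')*(Fb - Fb') with hK1
    set K2 := (Hb - Hb')*(Q - Q')*(Fa - Fa') with hK2
    have hphiK : ph * (K1 + K2) = 0 := by
      rw [hK1, hK2]
      linear_combination ((P-P')*(Fb-Fb'))*R1 + ((Q-Q')*(Fa-Fa'))*R2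
        - ((Fa-Fa')*(Fb-Fb'))*R3
    have d1 := dspos cFa
    have d2 := dspos cFb
    have d3 := dspos cGa
    have d4 := dspos cHb
    have d5 := dspos cP
    have d6 := dspos cQ
    have hPi : 0 < (Fa*(Fa-Fa'))*((Fb*(Fb-Fb'))*((Ga*(Ga-Ga'))*((Hb*(Hb-Hb'))*((P*(P-P'))*(Q*(Q-Q')))))) :=
      mul_pos d1 (mul_pos d2 (mul_pos d3 (mul_pos d4 (mul_pos d5 d6))))
    have hW : 0 < (Q*Ga*(P*Hb))*(Fa*Fb) := mul_pos c7 c8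
    have hre : (Fa*(Fa-Fa'))*((Fb*(Fb-Fb'))*((Ga*(Ga-Ga'))*((Hb*(Hb-Hb'))*((P*(P-P'))*(Q*(Q-Q'))))))
        = ((Q*Ga*(P*Hb))*(Fa*Fb))*(K1*K2) := by
      rw [hK1, hK2]; ring
    have hKK : 0 < K1*K2 := by
      by_contra h'
      push_neg at h'
      have : ((Q*Ga*(P*Hb))*(Fa*Fb))*(K1*K2) ≤ 0 := mul_nonpos_of_nonneg_of_nonpos hW.le h'
      linarith [hre ▸ hPi]
    have hsum : K1 + K2 ≠ 0 := by
      intro h0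
      have h4 : K1*K2 = -K1^2 := by linear_combination K1*h0
      linarith [sq_nonneg K1, hKK, h4]
    rcases mul_eq_zero.mp hphiK with h | h
    · exact hph h
    · exact hsum h



lemma sgnA {x y : ℝ} (h : x*y < 0) (hx : 0 < x) : y < 0 := by
  by_contra h'; push_neg at h'; nlinarith [mul_nonneg hx.le h']
lemma sgnB {x y : ℝ} (h : x*y < 0) (hx : x < 0) : 0 < y := by
  by_contra h'; push_neg at h'; nlinarith [mul_nonneg (neg_nonneg.mpr hx.le) (neg_nonneg.mpr h')]
lemma sgnC {x y : ℝ} (h : x*y < 0) (hy : 0 < y) : x < 0 := by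
  rw [mul_comm] at h; exact sgnA h hy
lemma sgnD {x y : ℝ} (h : x*y < 0) (hy : y < 0) : 0 < x := by
  rw [mul_comm] at h; exact sgnB h hy





lemma noadj (hN : 4 ≤ N) (heven : Even N)
    (hD : ∀ i j k : ZMod N, i ≠ j → j ≠ k → i ≠ k → dd (p i) (p j) (p k) ≠ 0)
    (a : ZMod N)
    (hfa : ∀ j : ZMod N, j ≠ a →
      (segment ℝ (p a) (p (a+1)) ∩ segment ℝ (p j) (p (j+1))).Nonempty)
    (hfa1 : ∀ j : ZMod N, j ≠ a + 1 →
      (segment ℝ (p (a+1)) (p (a+1+1)) ∩ segment ℝ (p j) (p (j+1))).Nonempty) :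
    False := by
  haveI : NeZero N := ⟨by omega⟩
  have c1 : (1 : ZMod N) ≠ 0 := by
    have := cast_ne_zero (N := N) hN (s := 1) (by omega) (by omega); simpa using this
  have c2 : (2 : ZMod N) ≠ 0 := by
    have := cast_ne_zero (N := N) hN (s := 2) (by omega) (by omega); simpa using this
  have c3 : (3 : ZMod N) ≠ 0 := by
    have := cast_ne_zero (N := N) hN (s := 3) (by omega) (by omega); simpa using this
  set q1 := p a
  set q2 := p (a+1) with hq2
  set q3 := p (a+2) with hq3
  set q4 := p (a+3) with hq4
  -- distinctness
  have h01 : a ≠ a + 1 := fun h => c1 (by linear_combination -h)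
  have h02 : a ≠ a + 2 := fun h => c2 (by linear_combination -h)
  have h03 : a ≠ a + 3 := fun h => c3 (by linear_combination -h)
  have h12 : a + 1 ≠ a + 2 := fun h => c1 (by linear_combination -h)
  have h13 : a + 1 ≠ a + 3 := fun h => c2 (by linear_combination -h)
  have h23 : a + 2 ≠ a + 3 := fun h => c1 (by linear_combination -h)
  -- the crossing of e_a and e_{a+2}
  obtain ⟨w, hw1, hw2⟩ := hfa (a + 2) (Ne.symm h02)
  have h231 : a + 2 + 1 = a + 3 := by ring
  rw [h231] at hw2
  have X1 : dd q1 q2 q3 * dd q1 q2 q4 < 0 :=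
    crossA hw1 hw2 (hD a (a+1) (a+2) h01 h12 h02) (hD a (a+1) (a+3) h01 h13 h03)
  have X2 : dd q3 q4 q1 * dd q3 q4 q2 < 0 :=
    crossA hw2 hw1 (hD (a+2) (a+3) a h23 (Ne.symm h03) (Ne.symm h02))
      (hD (a+2) (a+3) (a+1) h23 (Ne.symm h13) (Ne.symm h12))
  -- alternation along edge a+1 : p a and p (a+3) are on opposite sides
  have hcast2 : a + 1 + ((2:ℕ) : ZMod N) = a + 3 := by push_cast; ring
  have hcastN1 : a + 1 + ((N-1:ℕ) : ZMod N) = a := by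
    have : ((N-1:ℕ) : ZMod N) = -1 := by
      rw [Nat.cast_sub (by omega : 1 ≤ N)]
      simp
    rw [this]; ring
  have X3' := alt2 (p := p) hN hD (a+1) hfa1 (t := 2) (u := N-1)
    (by omega) (by omega) (by omega) (by omega)
  rw [hcast2, hcastN1] at X3'
  have hoddexp : Odd (2 + (N-1)) := by
    rcases heven with ⟨m, hm⟩
    exact ⟨m, by omega⟩
  rw [hoddexp.neg_one_pow] at X3'
  have X3 : dd q2 q3 q4 * dd q2 q3 q1 < 0 := by
    have ha11 : a + 1 + 1 = a + 2 := by ring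
    rw [ha11] at X3'
    rw [← hq2, ← hq3, ← hq4] at X3'
    nlinarith [X3']
  -- rewrite cyclically
  rw [show dd q3 q4 q1 = dd q1 q3 q4 from (dd_cyc q1 q3 q4).symm,
      show dd q3 q4 q2 = dd q2 q3 q4 from (dd_cyc q2 q3 q4).symm] at X2
  rw [show dd q2 q3 q1 = dd q1 q2 q3 from (dd_cyc q1 q2 q3).symm] at X3
  have hiden : dd q2 q3 q4 - dd q1 q3 q4 + dd q1 q2 q4 - dd q1 q2 q3 = 0 := by
    simp only [dd]; ring
  set A := dd q1 q2 q3
  set B := dd q1 q2 q4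
  set C := dd q1 q3 q4
  set D := dd q2 q3 q4
  rcases lt_trichotomy A 0 with hA | hA | hA
  · have hB : 0 < B := sgnB X1 hA
    have hDpos : 0 < D := sgnD X3 hA
    have hC : C < 0 := sgnC X2 hDpos
    linarith [hiden]
  · exact X1.ne (by rw [hA, zero_mul])
  · have hB : B < 0 := sgnA X1 hA
    have hDneg : D < 0 := sgnC X3 hA
    have hC : 0 < C := sgnD X2 hDneg
    linarith [hiden]





lemma valsub (hN : 4 ≤ N) (h2 : 2 ∣ N) (x y : ZMod N) :
    ((y - x).val + x.val) % 2 = y.val % 2 := by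
  haveI : NeZero N := ⟨by omega⟩
  have h := ZMod.val_add (y - x) x
  rw [sub_add_cancel] at h
  have h' := congrArg (· % 2) h
  simpa [Nat.mod_mod_of_dvd _ h2] using h'.symm

lemma backc (hN : 4 ≤ N) (i x : ZMod N) :
    i + (((x - i).val : ℕ) : ZMod N) = x := by
  haveI : NeZero N := ⟨by omega⟩
  rw [ZMod.natCast_rightInverse (x - i)]
  ring

lemma valrange (hN : 4 ≤ N) {i x : ZMod N} (h0 : x ≠ i) (h1 : x ≠ i + 1) :
    2 ≤ (x - i).val ∧ (x - i).val ≤ N - 1 := by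
  haveI : NeZero N := ⟨by omega⟩
  have hlt := ZMod.val_lt (x - i)
  have hv0 : (x - i).val ≠ 0 := by
    intro h
    exact h0 (sub_eq_zero.mp ((ZMod.val_eq_zero _).mp h))
  have hv1 : (x - i).val ≠ 1 := by
    intro h
    have h' := ZMod.natCast_rightInverse (x - i)
    rw [h] at h'
    push_cast at h'
    exact h1 (by linear_combination -h')
  omega

lemma threefull (hN : 4 ≤ N) (heven : Even N)
    (hD : ∀ i j k : ZMod N, i ≠ j → j ≠ k → i ≠ k → dd (p i) (p j) (p k) ≠ 0)
    (a b c : ZMod N)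
    (hfa : ∀ j : ZMod N, j ≠ a →
      (segment ℝ (p a) (p (a+1)) ∩ segment ℝ (p j) (p (j+1))).Nonempty)
    (hfb : ∀ j : ZMod N, j ≠ b →
      (segment ℝ (p b) (p (b+1)) ∩ segment ℝ (p j) (p (j+1))).Nonempty)
    (hfc : ∀ j : ZMod N, j ≠ c →
      (segment ℝ (p c) (p (c+1)) ∩ segment ℝ (p j) (p (j+1))).Nonempty)
    (hba : b ≠ a) (hba1 : b ≠ a + 1) (hab1 : a ≠ b + 1)
    (hca : c ≠ a) (hca1 : c ≠ a + 1) (hac1 : a ≠ c + 1)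
    (hcb : c ≠ b) (hcb1 : c ≠ b + 1) (hbc1 : b ≠ c + 1)
    (hpar : (b - a).val % 2 = 0) : False := by
  haveI : NeZero N := ⟨by omega⟩
  have h2N : 2 ∣ N := heven.two_dvd
  have one0 : (1 : ZMod N) ≠ 0 := by
    have := cast_ne_zero (N := N) hN (s := 1) (by omega) (by omega); simpa using this
  have hxx1 : ∀ x : ZMod N, x ≠ x + 1 := fun x h => one0 (by linear_combination -h)
  -- crossings
  obtain ⟨w1, hw1a, hw1b⟩ := hfa b hba
  obtain ⟨w2, hw2a, hw2c⟩ := hfa c hca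
  obtain ⟨w3, hw3b, hw3c⟩ := hfb c hcb
  -- proper-crossing sign facts
  have cFa : dd (p c) (p (c+1)) (p a) * dd (p c) (p (c+1)) (p (a+1)) < 0 :=
    crossA hw2c hw2a
      (hD c (c+1) a (hxx1 c) (Ne.symm hac1) hca)
      (hD c (c+1) (a+1) (hxx1 c) (fun h => hca (by linear_combination h)) hca1)
  have cFb : dd (p c) (p (c+1)) (p b) * dd (p c) (p (c+1)) (p (b+1)) < 0 :=
    crossA hw3c hw3b
      (hD c (c+1) b (hxx1 c) (Ne.symm hbc1) hcb)
      (hD c (c+1) (b+1) (hxx1 c) (fun h => hcb (by linear_combination h)) hcb1)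
  have cGa : dd (p b) (p (b+1)) (p a) * dd (p b) (p (b+1)) (p (a+1)) < 0 :=
    crossA hw1b hw1a
      (hD b (b+1) a (hxx1 b) (Ne.symm hab1) hba)
      (hD b (b+1) (a+1) (hxx1 b) (fun h => hba (by linear_combination h)) hba1)
  have cHb : dd (p a) (p (a+1)) (p b) * dd (p a) (p (a+1)) (p (b+1)) < 0 :=
    crossA hw1a hw1b
      (hD a (a+1) b (hxx1 a) (Ne.symm hba1) (Ne.symm hba))
      (hD a (a+1) (b+1) (hxx1 a) (fun h => hba (by linear_combination -h)) hab1)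
  have cP : dd (p a) (p (a+1)) (p c) * dd (p a) (p (a+1)) (p (c+1)) < 0 :=
    crossA hw2a hw2c
      (hD a (a+1) c (hxx1 a) (Ne.symm hca1) (Ne.symm hca))
      (hD a (a+1) (c+1) (hxx1 a) (fun h => hca (by linear_combination -h)) hac1)
  have cQ : dd (p b) (p (b+1)) (p c) * dd (p b) (p (b+1)) (p (c+1)) < 0 :=
    crossA hw3b hw3c
      (hD b (b+1) c (hxx1 b) (Ne.symm hcb1) (Ne.symm hcb))
      (hD b (b+1) (c+1) (hxx1 b) (fun h => hcb (by linear_combination -h)) hbc1)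
  -- alternation : c8
  obtain ⟨rac1, rac2⟩ := valrange hN (i := c) (x := a) (Ne.symm hca) hac1
  obtain ⟨rbc1, rbc2⟩ := valrange hN (i := c) (x := b) (Ne.symm hcb) hbc1
  obtain ⟨rcb1, rcb2⟩ := valrange hN (i := b) (x := c) hcb hcb1
  obtain ⟨rab1, rab2⟩ := valrange hN (i := b) (x := a) (Ne.symm hba) hab1
  obtain ⟨rca1, rca2⟩ := valrange hN (i := a) (x := c) hca hca1
  obtain ⟨rba1, rba2⟩ := valrange hN (i := a) (x := b) hba hba1
  have c8 : 0 < dd (p c) (p (c+1)) (p a) * dd (p c) (p (c+1)) (p b) := by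
    have I := alt2 (p := p) hN hD c hfc (t := (a-c).val) (u := (b-c).val)
      rac1 rac2 rbc1 rbc2
    rw [backc hN c a, backc hN c b] at I
    have hev : Even ((a-c).val + (b-c).val) := by
      have q1 := valsub hN h2N c a
      have q2 := valsub hN h2N c b
      have q3 := valsub hN h2N a b
      rw [Nat.even_iff]; omega
    rwa [hev.neg_one_pow, mul_one] at I
  -- alternation : c7
  have c7 : 0 < dd (p b) (p (b+1)) (p c) * dd (p b) (p (b+1)) (p a) *
      (dd (p a) (p (a+1)) (p c) * dd (p a) (p (a+1)) (p b)) := by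
    have I1 := alt2 (p := p) hN hD b hfb (t := (c-b).val) (u := (a-b).val)
      rcb1 rcb2 rab1 rab2
    rw [backc hN b c, backc hN b a] at I1
    have I2 := alt2 (p := p) hN hD a hfa (t := (c-a).val) (u := (b-a).val)
      rca1 rca2 rba1 rba2
    rw [backc hN a c, backc hN a b] at I2
    have hprod := mul_pos I1 I2
    have hre : (dd (p b) (p (b+1)) (p c) * dd (p b) (p (b+1)) (p a) * (-1:ℝ)^((c-b).val+(a-b).val)) *
        (dd (p a) (p (a+1)) (p c) * dd (p a) (p (a+1)) (p b) * (-1:ℝ)^((c-a).val+(b-a).val))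
        = dd (p b) (p (b+1)) (p c) * dd (p b) (p (b+1)) (p a) *
          (dd (p a) (p (a+1)) (p c) * dd (p a) (p (a+1)) (p b)) *
          (-1:ℝ)^(((c-b).val+(a-b).val) + ((c-a).val+(b-a).val)) := by
      rw [pow_add ((-1:ℝ)) ((c-b).val+(a-b).val) ((c-a).val+(b-a).val)]; ring
    rw [hre] at hprod
    have hev : Even (((c-b).val+(a-b).val) + ((c-a).val+(b-a).val)) := by
      have q1 := valsub hN h2N b c
      have q2 := valsub hN h2N b a
      have q3 := valsub hN h2N a c
      have q4 := valsub hN h2N a b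
      rw [Nat.even_iff]; omega
    rwa [hev.neg_one_pow, mul_one] at hprod
  -- segment decompositions
  obtain ⟨k1, l1, hk1, hl1, hs1, he1⟩ := hw1a
  obtain ⟨k2, l2, hk2, hl2, hs2, he2⟩ := hw1b
  obtain ⟨k3, l3, hk3, hl3, hs3, he3⟩ := hw2a
  obtain ⟨k4, l4, hk4, hl4, hs4, he4⟩ := hw2c
  obtain ⟨k5, l5, hk5, hl5, hs5, he5⟩ := hw3b
  obtain ⟨k6, l6, hk6, hl6, hs6, he6⟩ := hw3c
  have E1 : ∀ x y : ℝ × ℝ, dd x y w1 = k1 * dd x y (p a) + l1 * dd x y (p (a+1)) :=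
    fun x y => by rw [← he1]; exact dd_comb hs1 x y _ _
  have E2 : ∀ x y : ℝ × ℝ, dd x y w1 = k2 * dd x y (p b) + l2 * dd x y (p (b+1)) :=
    fun x y => by rw [← he2]; exact dd_comb hs2 x y _ _
  have E3 : ∀ x y : ℝ × ℝ, dd x y w2 = k3 * dd x y (p a) + l3 * dd x y (p (a+1)) :=
    fun x y => by rw [← he3]; exact dd_comb hs3 x y _ _
  have E4 : ∀ x y : ℝ × ℝ, dd x y w2 = k4 * dd x y (p c) + l4 * dd x y (p (c+1)) :=
    fun x y => by rw [← he4]; exact dd_comb hs4 x y _ _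
  have E5 : ∀ x y : ℝ × ℝ, dd x y w3 = k5 * dd x y (p b) + l5 * dd x y (p (b+1)) :=
    fun x y => by rw [← he5]; exact dd_comb hs5 x y _ _
  have E6 : ∀ x y : ℝ × ℝ, dd x y w3 = k6 * dd x y (p c) + l6 * dd x y (p (c+1)) :=
    fun x y => by rw [← he6]; exact dd_comb hs6 x y _ _
  have hw1a' : w1 ∈ segment ℝ (p a) (p (a+1)) := ⟨k1, l1, hk1, hl1, hs1, he1⟩
  have hw1b' : w1 ∈ segment ℝ (p b) (p (b+1)) := ⟨k2, l2, hk2, hl2, hs2, he2⟩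
  have hw2c' : w2 ∈ segment ℝ (p c) (p (c+1)) := ⟨k4, l4, hk4, hl4, hs4, he4⟩
  have hw3c' : w3 ∈ segment ℝ (p c) (p (c+1)) := ⟨k6, l6, hk6, hl6, hs6, he6⟩
  have hw2a' : w2 ∈ segment ℝ (p a) (p (a+1)) := ⟨k3, l3, hk3, hl3, hs3, he3⟩
  have hw3b' : w3 ∈ segment ℝ (p b) (p (b+1)) := ⟨k5, l5, hk5, hl5, hs5, he5⟩
  -- the three collinearity relations
  have R1 : dd (p c) (p (c+1)) w1 * (dd (p b) (p (b+1)) (p a) - dd (p b) (p (b+1)) (p (a+1)))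
      + dd (p b) (p (b+1)) w2 * (dd (p c) (p (c+1)) (p a) - dd (p c) (p (c+1)) (p (a+1))) = 0 := by
    refine KEY hs1 hs3 (E1 _ _) ?_ (E3 _ _) ?_
    · rw [← E1 (p b) (p (b+1))]; exact dd_zero_of_mem hw1b'
    · rw [← E3 (p c) (p (c+1))]; exact dd_zero_of_mem hw2c'
  have R2 : dd (p c) (p (c+1)) w1 * (dd (p a) (p (a+1)) (p b) - dd (p a) (p (a+1)) (p (b+1)))
      + dd (p a) (p (a+1)) w3 * (dd (p c) (p (c+1)) (p b) - dd (p c) (p (c+1)) (p (b+1))) = 0 := by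
    refine KEY hs2 hs5 (E2 _ _) ?_ (E5 _ _) ?_
    · rw [← E2 (p a) (p (a+1))]; exact dd_zero_of_mem hw1a'
    · rw [← E5 (p c) (p (c+1))]; exact dd_zero_of_mem hw3c'
  have R3 : dd (p b) (p (b+1)) w2 * (dd (p a) (p (a+1)) (p c) - dd (p a) (p (a+1)) (p (c+1)))
      + dd (p a) (p (a+1)) w3 * (dd (p b) (p (b+1)) (p c) - dd (p b) (p (b+1)) (p (c+1))) = 0 := by
    refine KEY hs4 hs6 (E4 _ _) ?_ (E6 _ _) ?_
    · rw [← E4 (p a) (p (a+1))]; exact dd_zero_of_mem hw2a'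
    · rw [← E6 (p b) (p (b+1))]; exact dd_zero_of_mem hw3b'
  -- the master identities at w1
  have hm1 : dd w1 (p c) (p b) * dd (p c) (p (c+1)) (p a)
      + dd w1 (p a) (p c) * dd (p c) (p (c+1)) (p b)
      = (dd w1 (p c) (p b) + dd w1 (p a) (p c) - dd w1 (p a) (p b)) * dd (p c) (p (c+1)) w1 := by
    have h := master (p c) (p (c+1)) w1 (p a) (p b) (p c)
    rw [dd_self_left] at h
    rw [mul_zero, add_zero] at h
    exact h
  have hm2 : dd w1 (p c) (p b) * dd (p b) (p (b+1)) (p a) = dd w1 (p a) (p b) * dd (p b) (p (b+1)) (p c) := by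
    have h := master (p b) (p (b+1)) w1 (p a) (p b) (p c)
    rw [dd_self_left, dd_zero_of_mem hw1b'] at h
    linarith [h]
  have hm3 : dd w1 (p a) (p c) * dd (p a) (p (a+1)) (p b) = dd w1 (p a) (p b) * dd (p a) (p (a+1)) (p c) := by
    have h := master (p a) (p (a+1)) w1 (p a) (p b) (p c)
    rw [dd_self_left, dd_zero_of_mem hw1a'] at h
    linarith [h]
  -- nondegeneracy of w1, p a, p b
  have hD0 : dd w1 (p a) (p b) ≠ 0 := by
    intro h0
    have hw1pa : w1 ≠ p a := by
      intro he
      have hz := dd_zero_of_mem hw1b'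
      rw [he] at hz
      exact hD b (b+1) a (hxx1 b) (Ne.symm hab1) hba hz
    obtain ⟨cc, hcc⟩ := mem_line h0 hw1pa
    have hHb0 : dd (p a) (p (a+1)) (p b) = 0 := by
      rw [hcc, dd_comb (by ring : (1-cc) + cc = 1)]
      rw [dd_zero_of_mem hw1a', dd_self_left]
      ring
    exact hD a (a+1) b (hxx1 a) (Ne.symm hba1) (Ne.symm hba) hHb0
  exact final_contra (dd (p c) (p (c+1)) (p a)) (dd (p c) (p (c+1)) (p (a+1)))
    (dd (p c) (p (c+1)) (p b)) (dd (p c) (p (c+1)) (p (b+1)))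
    (dd (p b) (p (b+1)) (p a)) (dd (p b) (p (b+1)) (p (a+1)))
    (dd (p a) (p (a+1)) (p b)) (dd (p a) (p (a+1)) (p (b+1)))
    (dd (p a) (p (a+1)) (p c)) (dd (p a) (p (a+1)) (p (c+1)))
    (dd (p b) (p (b+1)) (p c)) (dd (p b) (p (b+1)) (p (c+1)))
    (dd (p c) (p (c+1)) w1) (dd (p b) (p (b+1)) w2) (dd (p a) (p (a+1)) w3)
    (dd w1 (p c) (p b)) (dd w1 (p a) (p c)) (dd w1 (p a) (p b))
    cFa cFb cGa cHb cP cQ c7 c8 R1 R2 R3 hD0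
    (by linear_combination hm1) (by linear_combination hm2) (by linear_combination hm3)

end Main


end IPB

open IPB in
theorem intersecting_pairs_bound_even (N : ℕ) (hN : 4 ≤ N) (heven : Even N)
    (p : ZMod N → ℝ × ℝ)
    (hgen : ∀ i j k : ZMod N, i ≠ j → j ≠ k → i ≠ k →
      ¬ Collinear ℝ ({p i, p j, p k} : Set (ℝ × ℝ))) :
    {e : Sym2 (ZMod N) | ∃ i j : ZMod N, e = s(i, j) ∧ i ≠ j ∧
      (segment ℝ (p i) (p (i + 1)) ∩ segment ℝ (p j) (p (j + 1))).Nonempty}.ncard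
      ≤ (N ^ 2 - 2 * N + 2) / 2 := by
  classical
  haveI : NeZero N := ⟨by omega⟩
  have h2N : 2 ∣ N := heven.two_dvd
  have hD : ∀ i j k : ZMod N, i ≠ j → j ≠ k → i ≠ k → dd (p i) (p j) (p k) ≠ 0 :=
    fun i j k h1 h2 h3 h0 => hgen i j k h1 h2 h3 (collinear_of_dd h0)
  set Full : ZMod N → Prop := fun i => ∀ j, j ≠ i →
    (segment ℝ (p i) (p (i+1)) ∩ segment ℝ (p j) (p (j+1))).Nonempty with hFull
  -- at most two full edges
  have hnadj : ∀ u v : ZMod N, Full u → Full v → v ≠ u + 1 := by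
    intro u v hu hv hvv
    subst hvv
    exact noadj hN heven hD u hu hv
  have atmost2 : ∀ x y z : ZMod N, Full x → Full y → Full z →
      x ≠ y → x ≠ z → y ≠ z → False := by
    intro x y z hx hy hz hxy hxz hyz
    have n1 : y ≠ x + 1 := hnadj x y hx hy
    have n2 : x ≠ y + 1 := hnadj y x hy hx
    have n3 : z ≠ x + 1 := hnadj x z hx hz
    have n4 : x ≠ z + 1 := hnadj z x hz hx
    have n5 : z ≠ y + 1 := hnadj y z hy hz
    have n6 : y ≠ z + 1 := hnadj z y hz hy
    by_cases hxy2 : x.val % 2 = y.val % 2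
    · have hpar : (y - x).val % 2 = 0 := by
        have := valsub hN h2N x y; omega
      exact threefull hN heven hD x y z hx hy hz
        (Ne.symm hxy) n1 n2 (Ne.symm hxz) n3 n4 (Ne.symm hyz) n5 n6 hpar
    · by_cases hxz2 : x.val % 2 = z.val % 2
      · have hpar : (z - x).val % 2 = 0 := by
          have := valsub hN h2N x z; omega
        exact threefull hN heven hD x z y hx hz hy
          (Ne.symm hxz) n3 n4 (Ne.symm hxy) n1 n2 hyz n6 n5 hpar
      · have hpar : (z - y).val % 2 = 0 := by
          have := valsub hN h2N y z; omega
        exact threefull hN heven hD y z x hy hz hx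
          (Ne.symm hyz) n5 n6 (Ne.symm hxy.symm) n2 n1 (Ne.symm hxz.symm) n4 n3 hpar
  have hFF2 : (Finset.univ.filter (fun i : ZMod N => Full i)).card ≤ 2 := by
    by_contra h
    push_neg at h
    rw [Finset.two_lt_card] at h
    obtain ⟨x, hx, y, hy, z, hz, hxy, hxz, hyz⟩ := h
    rw [Finset.mem_filter] at hx hy hz
    exact atmost2 x y z hx.2 hy.2 hz.2 hxy hxz hyz
  -- non-full edges
  set NF : Finset (ZMod N) := Finset.univ.filter (fun i : ZMod N => ¬ Full i) with hNF
  have hNFcard : N - 2 ≤ NF.card := by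
    have h1 := Finset.card_filter_add_card_filter_not
      (s := (Finset.univ : Finset (ZMod N))) (p := fun i : ZMod N => Full i)
    rw [Finset.card_univ, ZMod.card] at h1
    rw [hNF]
    have h2 : (Finset.univ.filter (fun i : ZMod N => ¬ Full i)).card
        = (Finset.univ.filter (fun a : ZMod N => ¬ Full a)).card := rfl
    omega
  have hex : ∀ i : ZMod N, ¬ Full i → ∃ j, j ≠ i ∧
      (segment ℝ (p i) (p (i+1)) ∩ segment ℝ (p j) (p (j+1))) = ∅ := by
    intro i hi
    have hi' : ¬ ∀ j : ZMod N, j ≠ i →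
        (segment ℝ (p i) (p (i+1)) ∩ segment ℝ (p j) (p (j+1))).Nonempty := hi
    push_neg at hi'
    obtain ⟨j, hj1, hj2⟩ := hi'
    exact ⟨j, hj1, hj2⟩
  set S : Set (Sym2 (ZMod N)) := {e : Sym2 (ZMod N) | ∃ i j : ZMod N, e = s(i, j) ∧ i ≠ j ∧
      (segment ℝ (p i) (p (i + 1)) ∩ segment ℝ (p j) (p (j + 1))).Nonempty} with hSdef
  set SFin : Finset (Sym2 (ZMod N)) := Finset.univ.filter (fun e => e ∈ S) with hSFin
  set ND : Finset (Sym2 (ZMod N)) := Finset.univ.filter (fun e : Sym2 (ZMod N) => ¬ e.IsDiag)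
    with hND
  have hSsub : SFin ⊆ ND := by
    intro e he
    rw [hSFin, Finset.mem_filter] at he
    obtain ⟨-, i, j, rfl, hij, -⟩ := he
    rw [hND, Finset.mem_filter]
    refine ⟨Finset.mem_univ _, ?_⟩
    rw [Sym2.mk_isDiag_iff]
    exact hij
  set M : Finset (Sym2 (ZMod N)) := ND \ SFin with hM
  -- the choice function
  set F : ZMod N → Sym2 (ZMod N) := fun i =>
    if h : ∃ j, j ≠ i ∧ (segment ℝ (p i) (p (i+1)) ∩ segment ℝ (p j) (p (j+1))) = ∅
    then s(i, h.choose) else s(i, i) with hF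
  have hFprop : ∀ i : ZMod N, i ∈ NF → ∃ j, j ≠ i ∧ F i = s(i, j) ∧
      (segment ℝ (p i) (p (i+1)) ∩ segment ℝ (p j) (p (j+1))) = ∅ := by
    intro i hi
    rw [hNF, Finset.mem_filter] at hi
    have hexi := hex i hi.2
    refine ⟨hexi.choose, hexi.choose_spec.1, ?_, hexi.choose_spec.2⟩
    rw [hF]
    simp only
    rw [dif_pos hexi]
  have himg : ∀ i ∈ NF, F i ∈ M := by
    intro i hi
    obtain ⟨j, hj, hFi, hempty⟩ := hFprop i hi
    rw [hM, Finset.mem_sdiff]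
    constructor
    · rw [hND, Finset.mem_filter]
      refine ⟨Finset.mem_univ _, ?_⟩
      rw [hFi, Sym2.mk_isDiag_iff]
      exact Ne.symm hj
    · intro hmem
      rw [hSFin, Finset.mem_filter] at hmem
      obtain ⟨-, i', j', heq, hij', hnon⟩ := hmem
      rw [hFi] at heq
      rcases Sym2.eq_iff.mp heq with ⟨rfl, rfl⟩ | ⟨rfl, rfl⟩
      · rw [hempty] at hnon
        exact Set.not_nonempty_empty hnon
      · rw [Set.inter_comm] at hnon
        rw [hempty] at hnon
        exact Set.not_nonempty_empty hnon
  have hcardle : NF.card ≤ 2 * (NF.image F).card := by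
    apply Finset.card_le_mul_card_image
    intro e he
    obtain ⟨⟨u, v⟩, hrep⟩ := Quot.exists_rep e
    have hsub : NF.filter (fun x => F x = e) ⊆ {u, v} := by
      intro x hx
      rw [Finset.mem_filter] at hx
      obtain ⟨j, hj, hFx, -⟩ := hFprop x hx.1
      have hxe : x ∈ e := by
        rw [← hx.2, hFx]
        exact Sym2.mem_mk_left x j
      rw [← hrep] at hxe
      have : x = u ∨ x = v := Sym2.mem_iff.mp hxe
      simpa using this
    calc (NF.filter (fun x => F x = e)).card ≤ ({u, v} : Finset (ZMod N)).card :=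
          Finset.card_le_card hsub
      _ ≤ 2 := Finset.card_insert_le u {v} |>.trans (by simp)
  have himgsub : NF.image F ⊆ M := by
    intro e he
    obtain ⟨i, hi, rfl⟩ := Finset.mem_image.mp he
    exact himg i hi
  have hMbound : N - 2 ≤ 2 * M.card := by
    calc N - 2 ≤ NF.card := hNFcard
      _ ≤ 2 * (NF.image F).card := hcardle
      _ ≤ 2 * M.card := by
          have := Finset.card_le_card himgsub
          omega
  have hMcard : M.card = ND.card - SFin.card := Finset.card_sdiff_of_subset hSsub
  have hsle : SFin.card ≤ ND.card := Finset.card_le_card hSsub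
  have hNDcard : ND.card = N.choose 2 := by
    rw [hND]
    rw [← Fintype.card_subtype]
    rw [Sym2.card_subtype_not_diag, ZMod.card]
  have hSncard : S.ncard = SFin.card := by
    have : S = ↑SFin := by
      ext e
      rw [hSFin]
      simp
    rw [this, Set.ncard_coe_finset]
  rw [hSdef] at hSncard
  rw [hSncard]
  -- final arithmetic
  obtain ⟨k, hk⟩ := heven
  have hk2 : 2 ≤ k := by omega
  obtain ⟨k', rfl⟩ : ∃ k', k = k' + 1 := ⟨k - 1, by omega⟩
  obtain ⟨P, hP⟩ : ∃ P, P = (k'+1) * (k'+1) := ⟨_, rfl⟩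
  have hprod : N * (N - 1) + 2 * (k'+1) = 4 * P := by
    have h3 : N - 1 = 2 * k' + 1 := by omega
    rw [h3, hk, hP]
    ring
  have hsq : N ^ 2 = 4 * P := by
    rw [hk, hP]; ring
  have hkk : k' + 1 ≤ P := by rw [hP]; nlinarith
  have hchoose : N.choose 2 = N * (N - 1) / 2 := Nat.choose_two_right N
  omega
end

section
/- Let N ≥ 4 be an even natural number. Then there exist points p : ZMod N → ℝ², no three of which are collinear, such that exactly two of the segments segment ℝ (p i) (p (i+1)) are splitters (intersect all N−1 other segments), each of the remaining N−2 segments intersects exactly N−2 of the other segments (is a one-off splitter), and the set of points of ℝ² lying on at least two distinct segments has exactly (N² − 2N + 2)/2 elements (i.e., no point lies on three or more segments except that each corner lies on its two incident segments). -/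
/-- The `i`-th line-segment of the straight line embedding of the `N`-cycle
with corners `p`. -/
def cycleSeg (N : ℕ) (p : ZMod N → ℝ × ℝ) (i : ZMod N) : Set (ℝ × ℝ) :=
  segment ℝ (p i) (p (i + 1))

/-- The `i`-th segment is a splitter: it meets every other segment. -/
def IsSplitter (N : ℕ) (p : ZMod N → ℝ × ℝ) (i : ZMod N) : Prop :=
  ∀ j : ZMod N, j ≠ i → (cycleSeg N p j ∩ cycleSeg N p i).Nonempty

namespace OEA




def w (m k : ℕ) : ℕ := if k = 0 then 0 else if k ≤ m then k - 1 else 2*m - k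
def sc (m k : ℕ) : ℕ := if k + 1 = 2*m then 0 else k+1
def lopos (m k : ℕ) : ℕ := if k % 2 = 0 then k else sc m k
def hipos (m k : ℕ) : ℕ := if k % 2 = 0 then sc m k else k
def xx (m k : ℕ) : ℕ := w m (lopos m k)
def yy (m k : ℕ) : ℕ := w m (hipos m k)
def base (m p : ℕ) : ℕ := (if p % 2 = 0 then 0 else m) + w m p

lemma sc_lt {m k : ℕ} (hm : 2 ≤ m) (hk : k < 2*m) : sc m k < 2*m := by
  simp only [sc]; split_ifs <;> omega

lemma lopos_lt {m k : ℕ} (hm : 2 ≤ m) (hk : k < 2*m) : lopos m k < 2*m := by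
  simp only [lopos, sc]; split_ifs <;> omega

lemma hipos_lt {m k : ℕ} (hm : 2 ≤ m) (hk : k < 2*m) : hipos m k < 2*m := by
  simp only [hipos, sc]; split_ifs <;> omega

lemma lopos_even {m k : ℕ} (hk : k < 2*m) : lopos m k % 2 = 0 := by
  simp only [lopos, sc]; split_ifs <;> omega

lemma hipos_odd {m k : ℕ} (hk : k < 2*m) : hipos m k % 2 = 1 := by
  simp only [hipos, sc]; split_ifs <;> omega

lemma lopos_hipos {m k : ℕ} : (lopos m k = k ∧ hipos m k = sc m k) ∨
    (lopos m k = sc m k ∧ hipos m k = k) := by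
  simp only [lopos, hipos]; split_ifs <;> simp

lemma w_le {m p : ℕ} (hm : 2 ≤ m) (hp : p < 2*m) : w m p ≤ m - 1 := by
  simp only [w]; split_ifs <;> omega

lemma base_lopos {m k : ℕ} (hk : k < 2*m) : base m (lopos m k) = xx m k := by
  rw [base, xx, lopos_even hk]; simp

lemma base_hipos {m k : ℕ} (hk : k < 2*m) : base m (hipos m k) = m + yy m k := by
  rw [base, yy, hipos_odd hk]; simp

lemma base_lt_base {m p q : ℕ} (hm : 2 ≤ m) (hp : p < 2*m) (hq : q < 2*m) (h : p ≠ q) :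
    base m p ≠ base m q := by
  simp only [base, w]
  split_ifs <;> first | exact (by assumption : False).elim | omega

lemma base_lt {m p : ℕ} (hm : 2 ≤ m) (hp : p < 2*m) : base m p < 2*m := by
  simp only [base, w]; split_ifs <;> omega

lemma xx_eq_iff {m k l : ℕ} (hm : 2 ≤ m) (hk : k < 2*m) (hl : l < 2*m) :
    xx m k = xx m l ↔ lopos m k = lopos m l := by
  constructor
  · intro h
    by_contra hne
    exact base_lt_base hm (lopos_lt hm hk) (lopos_lt hm hl) hne
      (by rw [base_lopos hk, base_lopos hl, h])
  · intro h; simp only [xx, h]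

lemma yy_eq_iff {m k l : ℕ} (hm : 2 ≤ m) (hk : k < 2*m) (hl : l < 2*m) :
    yy m k = yy m l ↔ hipos m k = hipos m l := by
  constructor
  · intro h
    by_contra hne
    apply base_lt_base hm (hipos_lt hm hk) (hipos_lt hm hl) hne
    rw [base_hipos hk, base_hipos hl, h]
  · intro h; simp only [yy, h]

lemma xx_le {m k : ℕ} (hm : 2 ≤ m) (hk : k < 2*m) : xx m k ≤ m - 1 :=
  w_le hm (lopos_lt hm hk)

lemma yy_le {m k : ℕ} (hm : 2 ≤ m) (hk : k < 2*m) : yy m k ≤ m - 1 :=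
  w_le hm (hipos_lt hm hk)






/-- point on parabola -/
lemma xx_eq {m k : ℕ} (hm : 2 ≤ m) (hk : k < 2*m) :
    xx m k = if k = 0 then 0 else if k = m then m-1 else
      if k < m then (if k % 2 = 0 then k-1 else k)
      else (if k % 2 = 0 then 2*m-k else 2*m-k-1) := by
  simp only [xx, lopos, sc, w]
  split_ifs <;> first | exact (by assumption : False).elim | omega

lemma yy_eq {m k : ℕ} (hm : 2 ≤ m) (hk : k < 2*m) :
    yy m k = if k = 0 then 0 else if k = m then m-1 else
      if k < m then (if k % 2 = 0 then k else k-1)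
      else (if k % 2 = 0 then 2*m-k-1 else 2*m-k) := by
  simp only [yy, hipos, sc, w]
  split_ifs <;> first | exact (by assumption : False).elim | omega

-- main combinatorial lemma
lemma cmp_iff {m k l : ℕ} (hm : 2 ≤ m) (hk : k < 2*m) (hl : l < 2*m) (hkl : k ≠ l) :
    ((xx m k ≤ xx m l ∧ yy m k ≤ yy m l) ∨ (xx m l ≤ xx m k ∧ yy m l ≤ yy m k)) ↔
      k + l ≠ 2*m := by
  rw [xx_eq hm hk, xx_eq hm hl, yy_eq hm hk, yy_eq hm hl]
  split_ifs <;> first | exact (by assumption : False).elim | omega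


def pb (a : ℝ) : ℝ × ℝ := (a, a^2)

lemma seg_mem_iff {a b : ℝ} {q : ℝ × ℝ} :
    q ∈ segment ℝ (pb a) (pb b) ↔ q.1 ∈ Set.uIcc a b ∧ q.2 = (a+b)*q.1 - a*b := by
  constructor
  · rintro ⟨u, v, hu, hv, huv, rfl⟩
    have hfst : (u • pb a + v • pb b).1 = u * a + v * b := by simp [pb]
    have hsnd : (u • pb a + v • pb b).2 = u * a^2 + v * b^2 := by simp [pb]
    constructor
    · rw [hfst, ← segment_eq_uIcc]
      exact ⟨u, v, hu, hv, huv, by simp⟩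
    · rw [hfst, hsnd]; linear_combination (-(a*b)) * huv
  · rintro ⟨h1, h2⟩
    have : q.1 ∈ segment ℝ a b := by rw [segment_eq_uIcc]; exact h1
    obtain ⟨u, v, hu, hv, huv, h⟩ := this
    simp only [smul_eq_mul] at h
    refine ⟨u, v, hu, hv, huv, ?_⟩
    have : q = (q.1, q.2) := rfl
    rw [this]
    simp only [pb, Prod.smul_mk, Prod.mk_add_mk, smul_eq_mul, Prod.mk.injEq]
    refine ⟨h, ?_⟩
    rw [h2, ← h]
    linear_combination (-(a*b)) * huv

lemma cross_nonempty {a b c d : ℝ} (hcd : c ≤ d) (hac : a ≤ c) (hcb : c ≤ b) (hbd : b ≤ d) :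
    (segment ℝ (pb a) (pb b) ∩ segment ℝ (pb c) (pb d)).Nonempty := by
  have hcont : ContinuousOn (fun x : ℝ => ((a+b)*x - a*b) - ((c+d)*x - c*d)) (Set.Icc c b) := by
    fun_prop
  have h1 : ((a+b)*b - a*b) - ((c+d)*b - c*d) ≤ 0 := by nlinarith
  have h2 : 0 ≤ ((a+b)*c - a*b) - ((c+d)*c - c*d) := by nlinarith
  have := intermediate_value_Icc' hcb hcont (Set.mem_Icc.mpr ⟨h1, h2⟩)
  obtain ⟨x, hx, hfx⟩ := this
  rw [Set.mem_Icc] at hx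
  simp only at hfx
  refine ⟨(x, (a+b)*x - a*b), ?_, ?_⟩
  · rw [seg_mem_iff]
    exact ⟨Set.mem_uIcc.mpr (Or.inl ⟨le_trans hac hx.1, hx.2⟩), rfl⟩
  · rw [seg_mem_iff]
    refine ⟨Set.mem_uIcc.mpr (Or.inl ⟨hx.1, le_trans hx.2 hbd⟩), ?_⟩
    dsimp only
    linarith

lemma nested_disjoint {a b c d : ℝ} (hac : a < c) (hcd : c ≤ d) (hdb : d < b) :
    segment ℝ (pb a) (pb b) ∩ segment ℝ (pb c) (pb d) = ∅ := by
  ext q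
  simp only [Set.mem_inter_iff, Set.mem_empty_iff_false, iff_false, not_and]
  intro h1 h2
  rw [seg_mem_iff] at h1 h2
  obtain ⟨hq1, hq2⟩ := h1
  obtain ⟨hq1', hq2'⟩ := h2
  rw [Set.uIcc_of_le (by linarith)] at hq1
  rw [Set.uIcc_of_le hcd] at hq1'
  rw [Set.mem_Icc] at hq1 hq1'
  have hx := hq2.symm.trans hq2'
  rcases le_or_gt (a+b) (c+d) with hs | hs
  · nlinarith [mul_nonneg (by linarith : (0:ℝ) ≤ c+d-(a+b)) (by linarith : (0:ℝ) ≤ d - q.1),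
      mul_pos (by linarith : (0:ℝ) < d-a) (by linarith : (0:ℝ) < b-d)]
  · nlinarith [mul_nonneg (by linarith : (0:ℝ) ≤ (a+b)-(c+d)) (by linarith : (0:ℝ) ≤ q.1 - c),
      mul_pos (by linarith : (0:ℝ) < c-a) (by linarith : (0:ℝ) < b-c)]

lemma inter_unique {a b c d : ℝ} (h1 : ¬(a = c ∧ b = d)) (h2 : ¬(a = d ∧ b = c))
    {q q' : ℝ × ℝ} (hq : q ∈ segment ℝ (pb a) (pb b) ∩ segment ℝ (pb c) (pb d))
    (hq' : q' ∈ segment ℝ (pb a) (pb b) ∩ segment ℝ (pb c) (pb d)) : q = q' := by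
  obtain ⟨ha, hb⟩ := hq
  obtain ⟨ha', hb'⟩ := hq'
  rw [seg_mem_iff] at ha hb ha' hb'
  by_cases hx : q.1 = q'.1
  · have : q.2 = q'.2 := by rw [ha.2, ha'.2, hx]
    exact Prod.ext hx this
  exfalso
  have e1 : (a+b)*q.1 - a*b = (c+d)*q.1 - c*d := ha.2.symm.trans hb.2
  have e2 : (a+b)*q'.1 - a*b = (c+d)*q'.1 - c*d := ha'.2.symm.trans hb'.2
  have hsum : a + b = c + d := by
    have : (a+b-(c+d)) * (q.1 - q'.1) = 0 := by linear_combination e1 - e2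
    rcases mul_eq_zero.mp this with h | h
    · linarith
    · exact absurd (by linarith) hx
  have hprod : a*b = c*d := by linear_combination -e1 + q.1 * hsum
  have : (a - c) * (a - d) = 0 := by linear_combination a*hsum - hprod
  rcases mul_eq_zero.mp this with h | h
  · exact h1 ⟨by linarith, by linarith⟩
  · exact h2 ⟨by linarith, by linarith⟩

lemma corner_mem_iff {e a b : ℝ} :
    pb e ∈ segment ℝ (pb a) (pb b) ↔ e = a ∨ e = b := by
  constructor
  · intro h
    rw [seg_mem_iff] at h
    have h2 := h.2
    simp only [pb] at h2
    have : (e - a) * (e - b) = 0 := by linear_combination h2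
    rcases mul_eq_zero.mp this with h' | h'
    · exact Or.inl (by linarith)
    · exact Or.inr (by linarith)
  · rintro (rfl | rfl)
    · exact left_mem_segment ℝ _ _
    · exact right_mem_segment ℝ _ _

/-- concurrency invariant of three chords -/
noncomputable def G (a b c d e f : ℝ) : ℝ :=
  a*b*((c+d)-(e+f)) + c*d*((e+f)-(a+b)) + e*f*((a+b)-(c+d))

lemma G_of_concurrent {a b c d e f : ℝ} {q : ℝ × ℝ}
    (h1 : q ∈ segment ℝ (pb a) (pb b)) (h2 : q ∈ segment ℝ (pb c) (pb d))
    (h3 : q ∈ segment ℝ (pb e) (pb f)) : G a b c d e f = 0 := by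
  rw [seg_mem_iff] at h1 h2 h3
  have e1 := h1.2; have e2 := h2.2; have e3 := h3.2
  simp only [G]
  linear_combination ((c+d)-(e+f))*e1 + ((e+f)-(a+b))*e2 + ((a+b)-(c+d))*e3

lemma G_swap_fst (a b c d e f : ℝ) : G b a c d e f = G a b c d e f := by simp only [G]; ring
lemma G_swap_snd (a b c d e f : ℝ) : G a b d c e f = G a b c d e f := by simp only [G]; ring
lemma G_swap_trd (a b c d e f : ℝ) : G a b c d f e = G a b c d e f := by simp only [G]; ring
lemma G_perm12 (a b c d e f : ℝ) : G c d a b e f = - G a b c d e f := by simp only [G]; ring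
lemma G_perm13 (a b c d e f : ℝ) : G e f c d a b = - G a b c d e f := by simp only [G]; ring

/-- G as affine function of second coordinate -/
lemma G_affine (α u c d e f : ℝ) :
    G α u c d e f = (α*((c+d)-(e+f)) - c*d + e*f) * u
      + (α*(e*f - c*d) + c*d*(e+f) - e*f*(c+d)) := by
  simp only [G]; ring

lemma coeff_ne_zero {α c d e f : ℝ} (hαc : α ≠ c) (hαd : α ≠ d)
    (h1 : ¬(c = e ∧ d = f)) (h2 : ¬(c = f ∧ d = e)) :
    ¬(α*((c+d)-(e+f)) - c*d + e*f = 0 ∧ α*(e*f - c*d) + c*d*(e+f) - e*f*(c+d) = 0) := by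
  rintro ⟨hA, hB⟩
  have key : ((c+d)-(e+f)) * ((α - c) * (α - d)) = 0 := by
    linear_combination (α - (c+d))*hA - hB
  rcases mul_eq_zero.mp key with h | h
  · have hs : c + d = e + f := by linarith
    have hp : c*d = e*f := by linear_combination α*hs - hA
    have : (c - e) * (c - f) = 0 := by linear_combination c*hs - hp
    rcases mul_eq_zero.mp this with h' | h'
    · exact h1 ⟨by linarith, by linarith⟩
    · exact h2 ⟨by linarith, by linarith⟩
  · rcases mul_eq_zero.mp h with h' | h'
    · exact hαc (by linarith)
    · exact hαd (by linarith)








/-- vertex-disjointness of edges k and l -/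
def VD (m k l : ℕ) : Prop := k ≠ l ∧ k ≠ sc m l ∧ sc m k ≠ l ∧ sc m k ≠ sc m l

lemma VD_symm {m k l : ℕ} (h : VD m k l) : VD m l k :=
  ⟨h.1.symm, h.2.2.1.symm, h.2.1.symm, h.2.2.2.symm⟩

lemma sc_ne {m k : ℕ} (hm : 2 ≤ m) (hk : k < 2*m) : sc m k ≠ k := by
  simp only [sc]; split_ifs <;> omega


def Bnd (m : ℕ) (τ : ℕ → ℝ) : Prop :=
  ∀ p, (base m p : ℝ) < τ p ∧ τ p < base m p + 1/2

lemma tau_lt_tau {m : ℕ} (hm : 2 ≤ m) {τ : ℕ → ℝ} (hτ : Bnd m τ) {p q : ℕ}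
    (h : base m p < base m q) : τ p < τ q := by
  have h1 := hτ p; have h2 := hτ q
  have : (base m p : ℝ) + 1 ≤ base m q := by exact_mod_cast h
  linarith [h1.2, h2.1]

lemma tau_inj {m : ℕ} (hm : 2 ≤ m) {τ : ℕ → ℝ} (hτ : Bnd m τ) {p q : ℕ}
    (hp : p < 2*m) (hq : q < 2*m) (h : p ≠ q) : τ p ≠ τ q := by
  have hb := base_lt_base hm hp hq h
  rcases Nat.lt_or_ge (base m p) (base m q) with hh | hh
  · exact ne_of_lt (tau_lt_tau hm hτ hh)
  · exact (ne_of_lt (tau_lt_tau hm hτ (by omega))).symm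

lemma affine_root_finite {A B : ℝ} (h : ¬(A = 0 ∧ B = 0)) :
    {u : ℝ | A*u + B = 0}.Finite := by
  by_cases hA : A = 0
  · have hB : B ≠ 0 := fun hB => h ⟨hA, hB⟩
    have : {u : ℝ | A*u + B = 0} = ∅ := by
      ext u; simp [hA, hB]
    rw [this]; exact Set.finite_empty
  · apply Set.Finite.subset (Set.finite_singleton (-B/A))
    intro u hu
    simp only [Set.mem_setOf_eq] at hu
    simp only [Set.mem_singleton_iff]
    rw [eq_div_iff hA]
    linear_combination hu

lemma roots_finite {α c d e f : ℝ} (hαc : α ≠ c) (hαd : α ≠ d)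
    (h1 : ¬(c = e ∧ d = f)) (h2 : ¬(c = f ∧ d = e)) :
    {u : ℝ | G α u c d e f = 0}.Finite := by
  apply Set.Finite.subset (affine_root_finite (coeff_ne_zero hαc hαd h1 h2))
  intro u hu
  simp only [Set.mem_setOf_eq] at hu ⊢
  rw [← G_affine]; exact hu

/-- G evaluated on a triple of edges -/
noncomputable def trG (m : ℕ) (τ : ℕ → ℝ) (k l r : ℕ) : ℝ :=
  G (τ k) (τ (sc m k)) (τ l) (τ (sc m l)) (τ r) (τ (sc m r))

lemma trG_perm12 (m : ℕ) (τ : ℕ → ℝ) (k l r : ℕ) : trG m τ l k r = - trG m τ k l r :=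
  G_perm12 _ _ _ _ _ _

lemma trG_perm13 (m : ℕ) (τ : ℕ → ℝ) (k l r : ℕ) : trG m τ r l k = - trG m τ k l r :=
  G_perm13 _ _ _ _ _ _

lemma first_edge_finite {m : ℕ} (hm : 2 ≤ m) {τ : ℕ → ℝ} (hB : Bnd m τ) {n k l r : ℕ}
    (hk : k < 2*m) (hl : l < 2*m) (hr : r < 2*m)
    (hkl : VD m k l) (hlr : VD m l r) (hkr : VD m k r)
    (hn : n = k ∨ n = sc m k) :
    {u : ℝ | trG m (Function.update τ n u) k l r = 0}.Finite := by
  have hsck := sc_lt hm hk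
  have hscl := sc_lt hm hl
  have hscr := sc_lt hm hr
  have hcd1 : ¬(τ l = τ r ∧ τ (sc m l) = τ (sc m r)) := by
    rintro ⟨h, -⟩; exact tau_inj hm hB hl hr hlr.1 h
  have hcd2 : ¬(τ l = τ (sc m r) ∧ τ (sc m l) = τ r) := by
    rintro ⟨h, -⟩; exact tau_inj hm hB hl hscr hlr.2.1 h
  rcases hn with hn | hn
  · subst hn
    have hset : {u : ℝ | trG m (Function.update τ n u) n l r = 0}
        = {u : ℝ | G (τ (sc m n)) u (τ l) (τ (sc m l)) (τ r) (τ (sc m r)) = 0} := by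
      ext u
      simp only [Set.mem_setOf_eq, trG, Function.update_self,
        Function.update_of_ne (sc_ne hm hk), Function.update_of_ne hkl.1.symm,
        Function.update_of_ne hkl.2.1.symm, Function.update_of_ne hkr.1.symm,
        Function.update_of_ne hkr.2.1.symm]
      rw [G_swap_fst]
    rw [hset]
    exact roots_finite
      (tau_inj hm hB hsck hl hkl.2.2.1)
      (tau_inj hm hB hsck hscl hkl.2.2.2) hcd1 hcd2
  · subst hn
    have hset : {u : ℝ | trG m (Function.update τ (sc m k) u) k l r = 0}
        = {u : ℝ | G (τ k) u (τ l) (τ (sc m l)) (τ r) (τ (sc m r)) = 0} := by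
      ext u
      simp only [Set.mem_setOf_eq, trG, Function.update_self,
        Function.update_of_ne (sc_ne hm hk).symm, Function.update_of_ne hkl.2.2.1.symm,
        Function.update_of_ne hkl.2.2.2.symm, Function.update_of_ne hkr.2.2.1.symm,
        Function.update_of_ne hkr.2.2.2.symm]
    rw [hset]
    exact roots_finite
      (tau_inj hm hB hk hl hkl.1)
      (tau_inj hm hB hk hscl hkl.2.1) hcd1 hcd2

lemma exists_tau (m : ℕ) (hm : 2 ≤ m) (n : ℕ) :
    ∃ τ : ℕ → ℝ, Bnd m τ ∧ ∀ k l r : ℕ, k < 2*m → l < 2*m → r < 2*m →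
      VD m k l → VD m l r → VD m k r →
      k < n → sc m k < n → l < n → sc m l < n → r < n → sc m r < n →
      trG m τ k l r ≠ 0 := by
  classical
  induction n with
  | zero =>
    refine ⟨fun p => (base m p : ℝ) + 1/4, fun p => by constructor <;> norm_num, ?_⟩
    intro k l r _ _ _ _ _ _ hk0 _ _ _ _ _
    omega
  | succ n ih =>
    obtain ⟨τ, hB, hG⟩ := ih
    set T : Set (ℕ × ℕ × ℕ) := (Set.Iio (2*m)) ×ˢ ((Set.Iio (2*m)) ×ˢ (Set.Iio (2*m)))
      with hT
    set bad : ℕ × ℕ × ℕ → Set ℝ := fun t =>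
      if VD m t.1 t.2.1 ∧ VD m t.2.1 t.2.2 ∧ VD m t.1 t.2.2 ∧
          (n = t.1 ∨ n = sc m t.1 ∨ n = t.2.1 ∨ n = sc m t.2.1 ∨ n = t.2.2 ∨ n = sc m t.2.2)
      then {u : ℝ | trG m (Function.update τ n u) t.1 t.2.1 t.2.2 = 0} else ∅ with hbad
    have hbadfin : ∀ t ∈ T, (bad t).Finite := by
      rintro ⟨k, l, r⟩ hmem
      simp only [hT, Set.mem_prod, Set.mem_Iio] at hmem
      obtain ⟨hk, hl, hr⟩ := hmem
      simp only [hbad]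
      split_ifs with hcond
      · obtain ⟨hkl, hlr, hkr, hn6⟩ := hcond
        rcases hn6 with h | h | h | h | h | h
        · exact first_edge_finite hm hB hk hl hr hkl hlr hkr (Or.inl h)
        · exact first_edge_finite hm hB hk hl hr hkl hlr hkr (Or.inr h)
        · have hset : {u : ℝ | trG m (Function.update τ n u) k l r = 0}
              = {u : ℝ | trG m (Function.update τ n u) l k r = 0} := by
            ext u
            simp only [Set.mem_setOf_eq]
            rw [trG_perm12 m (Function.update τ n u) k l r, neg_eq_zero]
          rw [hset]
          exact first_edge_finite hm hB hl hk hr (VD_symm hkl) hkr hlr (Or.inl h)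
        · have hset : {u : ℝ | trG m (Function.update τ n u) k l r = 0}
              = {u : ℝ | trG m (Function.update τ n u) l k r = 0} := by
            ext u
            simp only [Set.mem_setOf_eq]
            rw [trG_perm12 m (Function.update τ n u) k l r, neg_eq_zero]
          rw [hset]
          exact first_edge_finite hm hB hl hk hr (VD_symm hkl) hkr hlr (Or.inr h)
        · have hset : {u : ℝ | trG m (Function.update τ n u) k l r = 0}
              = {u : ℝ | trG m (Function.update τ n u) r l k = 0} := by
            ext u
            simp only [Set.mem_setOf_eq]
            rw [trG_perm13 m (Function.update τ n u) k l r, neg_eq_zero]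
          rw [hset]
          exact first_edge_finite hm hB hr hl hk (VD_symm hlr) (VD_symm hkl) (VD_symm hkr)
            (Or.inl h)
        · have hset : {u : ℝ | trG m (Function.update τ n u) k l r = 0}
              = {u : ℝ | trG m (Function.update τ n u) r l k = 0} := by
            ext u
            simp only [Set.mem_setOf_eq]
            rw [trG_perm13 m (Function.update τ n u) k l r, neg_eq_zero]
          rw [hset]
          exact first_edge_finite hm hB hr hl hk (VD_symm hlr) (VD_symm hkl) (VD_symm hkr)
            (Or.inr h)
      · exact Set.finite_empty
    have hTfin : T.Finite := by
      rw [hT]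
      exact (Set.finite_Iio _).prod ((Set.finite_Iio _).prod (Set.finite_Iio _))
    have hUfin : (⋃ t ∈ T, bad t).Finite := Set.Finite.biUnion hTfin hbadfin
    have hIoo : (Set.Ioo ((base m n : ℝ)) ((base m n : ℝ) + 1/2)).Infinite :=
      Set.Ioo_infinite (by norm_num)
    obtain ⟨u, hu⟩ := (hIoo.diff hUfin).nonempty
    obtain ⟨huIoo, huBad⟩ := Set.mem_diff _ |>.mp hu
    refine ⟨Function.update τ n u, ?_, ?_⟩
    · intro p
      by_cases hp : p = n
      · subst hp; rw [Function.update_self]; exact ⟨huIoo.1, huIoo.2⟩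
      · rw [Function.update_of_ne hp]; exact hB p
    · intro k l r hk hl hr hkl hlr hkr h1 h2 h3 h4 h5 h6
      by_cases hn6 : n = k ∨ n = sc m k ∨ n = l ∨ n = sc m l ∨ n = r ∨ n = sc m r
      · intro hzero
        apply huBad
        have hmemT : ((k,l,r) : ℕ×ℕ×ℕ) ∈ T := by
          simp only [hT, Set.mem_prod, Set.mem_Iio]
          exact ⟨hk, hl, hr⟩
        have hub : u ∈ bad (k,l,r) := by
          simp only [hbad]
          rw [if_pos ⟨hkl, hlr, hkr, hn6⟩]
          exact hzero
        exact Set.mem_biUnion hmemT hub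
      · push_neg at hn6
        obtain ⟨n1, n2, n3, n4, n5, n6⟩ := hn6
        have heq : trG m (Function.update τ n u) k l r = trG m τ k l r := by
          simp only [trG]
          rw [Function.update_of_ne (Ne.symm n1), Function.update_of_ne (Ne.symm n2),
            Function.update_of_ne (Ne.symm n3), Function.update_of_ne (Ne.symm n4),
            Function.update_of_ne (Ne.symm n5), Function.update_of_ne (Ne.symm n6)]
        rw [heq]
        exact hG k l r hk hl hr hkl hlr hkr (by omega) (by omega) (by omega)
          (by omega) (by omega) (by omega)



-- Bridge layer: appended to found.lean for testing
section Bridge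

variable {m : ℕ}

/-- the corner embedding -/
noncomputable def emap (m : ℕ) (τ : ℕ → ℝ) : ZMod (2*m) → ℝ × ℝ := fun i => pb (τ i.val)

lemma NZ (hm : 2 ≤ m) : NeZero (2*m) := ⟨by omega⟩

lemma val_succ (hm : 2 ≤ m) (i : ZMod (2*m)) :
    (i + 1).val = sc m i.val := by
  haveI := NZ hm
  haveI : Fact (1 < 2*m) := ⟨by omega⟩
  have hv : i.val < 2*m := ZMod.val_lt i
  rw [ZMod.val_add, ZMod.val_one]
  simp only [sc]
  split_ifs with h
  · rw [h, Nat.mod_self]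
  · exact Nat.mod_eq_of_lt (by omega)

lemma val_inj' (hm : 2 ≤ m) {i j : ZMod (2*m)} (h : i ≠ j) :
    i.val ≠ j.val := by
  haveI := NZ hm
  intro hv
  exact h (ZMod.val_injective _ hv)

lemma add_eq_zero_iff_val (hm : 2 ≤ m) (i j : ZMod (2*m)) :
    (i + j = 0 ↔ i.val + j.val = 0 ∨ i.val + j.val = 2*m) := by
  haveI := NZ hm
  have hvi : i.val < 2*m := ZMod.val_lt i
  have hvj : j.val < 2*m := ZMod.val_lt j
  rw [← ZMod.val_eq_zero, ZMod.val_add]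
  rcases Nat.lt_or_ge (i.val + j.val) (2*m) with h | h
  · rw [Nat.mod_eq_of_lt h]; omega
  · rw [Nat.mod_eq_sub_mod h, Nat.mod_eq_of_lt (by omega)]; omega

end Bridge

section Inter

variable {m : ℕ}

lemma cycleSegEq (hm : 2 ≤ m) (τ : ℕ → ℝ) (i : ZMod (2*m)) :
    cycleSeg (2*m) (emap m τ) i = segment ℝ (pb (τ i.val)) (pb (τ (sc m i.val))) := by
  rw [cycleSeg, ← val_succ hm i]; rfl

lemma cycleSeg_lohi (hm : 2 ≤ m) (τ : ℕ → ℝ) (i : ZMod (2*m)) :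
    cycleSeg (2*m) (emap m τ) i
      = segment ℝ (pb (τ (lopos m i.val))) (pb (τ (hipos m i.val))) := by
  rcases lopos_hipos (m := m) (k := i.val) with ⟨h1, h2⟩ | ⟨h1, h2⟩ <;>
    rw [cycleSegEq hm τ i, h1, h2]
  exact segment_symm ℝ _ _

lemma val_lt' (hm : 2 ≤ m) (i : ZMod (2*m)) : i.val < 2*m := by
  haveI := NZ hm; exact ZMod.val_lt i

lemma tau_lo_lt_hi {τ : ℕ → ℝ} (hm : 2 ≤ m) (hB : Bnd m τ) (i j : ZMod (2*m)) :
    τ (lopos m i.val) < τ (hipos m j.val) := by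
  apply tau_lt_tau hm hB
  rw [base_lopos (val_lt' hm i), base_hipos (val_lt' hm j)]
  have := xx_le hm (val_lt' hm i)
  omega

lemma tau_lo_le {τ : ℕ → ℝ} (hm : 2 ≤ m) (hB : Bnd m τ) {i j : ZMod (2*m)}
    (h : xx m i.val ≤ xx m j.val) : τ (lopos m i.val) ≤ τ (lopos m j.val) := by
  rcases eq_or_lt_of_le h with h' | h'
  · rw [(xx_eq_iff hm (val_lt' hm i) (val_lt' hm j)).mp h']
  · apply le_of_lt
    apply tau_lt_tau hm hB
    rw [base_lopos (val_lt' hm i), base_lopos (val_lt' hm j)]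
    exact h'

lemma tau_hi_le {τ : ℕ → ℝ} (hm : 2 ≤ m) (hB : Bnd m τ) {i j : ZMod (2*m)}
    (h : yy m i.val ≤ yy m j.val) : τ (hipos m i.val) ≤ τ (hipos m j.val) := by
  rcases eq_or_lt_of_le h with h' | h'
  · rw [(yy_eq_iff hm (val_lt' hm i) (val_lt' hm j)).mp h']
  · apply le_of_lt
    apply tau_lt_tau hm hB
    rw [base_hipos (val_lt' hm i), base_hipos (val_lt' hm j)]
    omega

lemma tau_lo_lt {τ : ℕ → ℝ} (hm : 2 ≤ m) (hB : Bnd m τ) {i j : ZMod (2*m)}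
    (h : xx m i.val < xx m j.val) : τ (lopos m i.val) < τ (lopos m j.val) := by
  apply tau_lt_tau hm hB
  rw [base_lopos (val_lt' hm i), base_lopos (val_lt' hm j)]
  exact h

lemma tau_hi_lt {τ : ℕ → ℝ} (hm : 2 ≤ m) (hB : Bnd m τ) {i j : ZMod (2*m)}
    (h : yy m i.val < yy m j.val) : τ (hipos m i.val) < τ (hipos m j.val) := by
  apply tau_lt_tau hm hB
  rw [base_hipos (val_lt' hm i), base_hipos (val_lt' hm j)]
  omega

lemma seg_inter {τ : ℕ → ℝ} (hm : 2 ≤ m) (hB : Bnd m τ) (i j : ZMod (2*m)) (hij : i ≠ j) :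
    (cycleSeg (2*m) (emap m τ) i ∩ cycleSeg (2*m) (emap m τ) j).Nonempty ↔ i + j ≠ 0 := by
  have hk := val_lt' hm i
  have hl := val_lt' hm j
  have hkl : i.val ≠ j.val := val_inj' hm hij
  have hiff := cmp_iff hm hk hl hkl
  rw [Ne, add_eq_zero_iff_val hm]
  constructor
  · intro hne
    rintro (h0 | h2m)
    · omega
    · have hnc : ¬ ((xx m i.val ≤ xx m j.val ∧ yy m i.val ≤ yy m j.val) ∨
          (xx m j.val ≤ xx m i.val ∧ yy m j.val ≤ yy m i.val)) :=
        fun hc => (hiff.mp hc) h2m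
      obtain ⟨q, hq1, hq2⟩ := hne
      rw [cycleSeg_lohi hm τ] at hq1 hq2
      rcases lt_trichotomy (xx m i.val) (xx m j.val) with hlt | heq | hgt
      · have hyy : yy m j.val < yy m i.val := by
          by_contra hy
          exact hnc (Or.inl ⟨le_of_lt hlt, by omega⟩)
        have hd := nested_disjoint (tau_lo_lt hm hB hlt)
          (le_of_lt (tau_lo_lt_hi hm hB j j)) (tau_hi_lt hm hB hyy)
        have : q ∈ (∅ : Set (ℝ × ℝ)) := hd ▸ Set.mem_inter hq1 hq2
        exact this
      · rcases le_total (yy m i.val) (yy m j.val) with h | h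
        · exact hnc (Or.inl ⟨le_of_eq heq, h⟩)
        · exact hnc (Or.inr ⟨le_of_eq heq.symm, h⟩)
      · have hyy : yy m i.val < yy m j.val := by
          by_contra hy
          exact hnc (Or.inr ⟨le_of_lt hgt, by omega⟩)
        have hd := nested_disjoint (tau_lo_lt hm hB hgt)
          (le_of_lt (tau_lo_lt_hi hm hB i i)) (tau_hi_lt hm hB hyy)
        have : q ∈ (∅ : Set (ℝ × ℝ)) := hd ▸ Set.mem_inter hq2 hq1
        exact this
  · intro hne
    have hcmp := hiff.mpr (by omega)
    rw [cycleSeg_lohi hm τ, cycleSeg_lohi hm τ]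
    rcases hcmp with ⟨h1, h2⟩ | ⟨h1, h2⟩
    · obtain ⟨q, hq1, hq2⟩ := cross_nonempty
        (le_of_lt (tau_lo_lt_hi hm hB j j)) (tau_lo_le hm hB h1)
        (le_of_lt (tau_lo_lt_hi hm hB j i)) (tau_hi_le hm hB h2)
      exact ⟨q, hq1, hq2⟩
    · obtain ⟨q, hq1, hq2⟩ := cross_nonempty
        (le_of_lt (tau_lo_lt_hi hm hB i i)) (tau_lo_le hm hB h1)
        (le_of_lt (tau_lo_lt_hi hm hB i j)) (tau_hi_le hm hB h2)
      exact ⟨q, hq2, hq1⟩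

end Inter

section Unique

variable {m : ℕ}

lemma not_cross_pos {m k l : ℕ} (hm : 2 ≤ m) (hk : k < 2*m) (hl : l < 2*m) (hkl : k ≠ l) :
    ¬(k = sc m l ∧ sc m k = l) := by
  simp only [sc]; split_ifs <;> omega

lemma unique_pt_aux {τ : ℕ → ℝ} (hm : 2 ≤ m) (hB : Bnd m τ) (i j : ZMod (2*m)) (hij : i ≠ j)
    {q q' : ℝ × ℝ}
    (hq : q ∈ cycleSeg (2*m) (emap m τ) i ∩ cycleSeg (2*m) (emap m τ) j)
    (hq' : q' ∈ cycleSeg (2*m) (emap m τ) i ∩ cycleSeg (2*m) (emap m τ) j) : q = q' := by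
  have hk := val_lt' hm i
  have hl := val_lt' hm j
  have hkl : i.val ≠ j.val := val_inj' hm hij
  rw [cycleSegEq hm τ i, cycleSegEq hm τ j] at hq hq'
  refine inter_unique ?_ ?_ hq hq'
  · rintro ⟨h1, -⟩
    exact tau_inj hm hB hk hl hkl h1
  · rintro ⟨h1, h2⟩
    have e1 : i.val = sc m j.val := by
      by_contra hne; exact tau_inj hm hB hk (sc_lt hm hl) hne h1
    have e2 : sc m i.val = j.val := by
      by_contra hne; exact tau_inj hm hB (sc_lt hm hk) hl hne h2
    exact not_cross_pos hm hk hl hkl ⟨e1, e2⟩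

open Classical in
noncomputable def Pt (m : ℕ) (τ : ℕ → ℝ) (i j : ZMod (2*m)) : ℝ × ℝ :=
  if h : (cycleSeg (2*m) (emap m τ) i ∩ cycleSeg (2*m) (emap m τ) j).Nonempty
  then h.some else 0

lemma Pt_mem {τ : ℕ → ℝ} {i j : ZMod (2*m)}
    (h : (cycleSeg (2*m) (emap m τ) i ∩ cycleSeg (2*m) (emap m τ) j).Nonempty) :
    Pt m τ i j ∈ cycleSeg (2*m) (emap m τ) i ∩ cycleSeg (2*m) (emap m τ) j := by
  rw [Pt, dif_pos h]; exact h.some_mem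

lemma Pt_eq {τ : ℕ → ℝ} (hm : 2 ≤ m) (hB : Bnd m τ) {i j : ZMod (2*m)} (hij : i ≠ j)
    {q : ℝ × ℝ} (hq : q ∈ cycleSeg (2*m) (emap m τ) i ∩ cycleSeg (2*m) (emap m τ) j) :
    q = Pt m τ i j :=
  unique_pt_aux hm hB i j hij hq (Pt_mem ⟨q, hq⟩)

lemma corner_edges {τ : ℕ → ℝ} (hm : 2 ≤ m) (hB : Bnd m τ) (v e : ZMod (2*m)) :
    pb (τ v.val) ∈ cycleSeg (2*m) (emap m τ) e ↔ e = v ∨ e = v - 1 := by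
  haveI := NZ hm
  rw [cycleSegEq hm τ e, corner_mem_iff]
  constructor
  · rintro (h | h)
    · left
      have : v.val = e.val := by
        by_contra hne; exact tau_inj hm hB (val_lt' hm v) (val_lt' hm e) hne h
      exact (ZMod.val_injective _ this).symm
    · right
      rw [← val_succ hm e] at h
      have : v.val = (e+1).val := by
        by_contra hne; exact tau_inj hm hB (val_lt' hm v) (val_lt' hm (e+1)) hne h
      have : e + 1 = v := (ZMod.val_injective _ this).symm
      rw [← this]; ring
  · rintro (rfl | h)
    · exact Or.inl rfl
    · right
      have : e + 1 = v := by rw [h]; ring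
      rw [← this, val_succ hm e]

end Unique

section Fiber

variable {m : ℕ}

/-- if `q` lies on the segments of two adjacent edges, it is the shared corner -/
lemma adj_corner {τ : ℕ → ℝ} (hm : 2 ≤ m) (hB : Bnd m τ) {e e' : ZMod (2*m)} (hne : e ≠ e')
    (hadj : e' = e + 1) {q : ℝ × ℝ} (hqe : q ∈ cycleSeg (2*m) (emap m τ) e)
    (hqe' : q ∈ cycleSeg (2*m) (emap m τ) e') : q = pb (τ (e+1).val) := by
  haveI := NZ hm
  have hc1 : pb (τ (e+1).val) ∈ cycleSeg (2*m) (emap m τ) e :=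
    (corner_edges hm hB (e+1) e).mpr (Or.inr (by ring))
  have hc2 : pb (τ (e+1).val) ∈ cycleSeg (2*m) (emap m τ) e' :=
    (corner_edges hm hB (e+1) e').mpr (Or.inl hadj)
  exact unique_pt_aux hm hB e e' hne ⟨hqe, hqe'⟩ ⟨hc1, hc2⟩

lemma fiber_lemma {τ : ℕ → ℝ} (hm : 2 ≤ m) (hB : Bnd m τ)
    (hG : ∀ k l r : ℕ, k < 2*m → l < 2*m → r < 2*m →
      VD m k l → VD m l r → VD m k r → trG m τ k l r ≠ 0)
    {i j i' j' : ZMod (2*m)} (hij : i ≠ j) (hij' : i' ≠ j') {q : ℝ × ℝ}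
    (hq1 : q ∈ cycleSeg (2*m) (emap m τ) i) (hq2 : q ∈ cycleSeg (2*m) (emap m τ) j)
    (hq1' : q ∈ cycleSeg (2*m) (emap m τ) i') (hq2' : q ∈ cycleSeg (2*m) (emap m τ) j') :
    (i' = i ∧ j' = j) ∨ (i' = j ∧ j' = i) := by
  haveI := NZ hm
  by_cases hcor : ∃ v : ZMod (2*m), q = pb (τ v.val)
  · obtain ⟨v, rfl⟩ := hcor
    have h1 := (corner_edges hm hB v i).mp hq1
    have h2 := (corner_edges hm hB v j).mp hq2
    have h3 := (corner_edges hm hB v i').mp hq1'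
    have h4 := (corner_edges hm hB v j').mp hq2'
    rcases h1 with h1 | h1 <;> rcases h2 with h2 | h2 <;>
      rcases h3 with h3 | h3 <;> rcases h4 with h4 | h4 <;>
      first
        | (exact absurd (h1.trans h2.symm) hij)
        | (exact absurd (h3.trans h4.symm) hij')
        | (exact Or.inl ⟨h3.trans h1.symm, h4.trans h2.symm⟩)
        | (exact Or.inr ⟨h3.trans h2.symm, h4.trans h1.symm⟩)
  · push_neg at hcor
    have hnonadj : ∀ e e' : ZMod (2*m), e ≠ e' → q ∈ cycleSeg (2*m) (emap m τ) e →
        q ∈ cycleSeg (2*m) (emap m τ) e' → e' ≠ e + 1 := by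
      intro e e' hne hqe hqe' habs
      exact hcor (e+1) (adj_corner hm hB hne habs hqe hqe')
    by_cases hcase : (i' = i ∧ j' = j) ∨ (i' = j ∧ j' = i)
    · exact hcase
    exfalso
    -- find a third edge through q
    have he3 : ∃ e3 : ZMod (2*m), q ∈ cycleSeg (2*m) (emap m τ) e3 ∧ e3 ≠ i ∧ e3 ≠ j := by
      by_cases hi' : i' = i ∨ i' = j
      · by_cases hj' : j' = i ∨ j' = j
        · exfalso
          rcases hi' with h | h <;> rcases hj' with h' | h'
          · exact hij' (h.trans h'.symm)
          · exact hcase (Or.inl ⟨h, h'⟩)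
          · exact hcase (Or.inr ⟨h, h'⟩)
          · exact hij' (h.trans h'.symm)
        · push_neg at hj'
          exact ⟨j', hq2', hj'.1, hj'.2⟩
      · push_neg at hi'
        exact ⟨i', hq1', hi'.1, hi'.2⟩
    obtain ⟨e3, hqe3, h3i, h3j⟩ := he3
    -- i, j, e3 pairwise vertex-disjoint
    have mkVD : ∀ a b : ZMod (2*m), a ≠ b → q ∈ cycleSeg (2*m) (emap m τ) a →
        q ∈ cycleSeg (2*m) (emap m τ) b → VD m a.val b.val := by
      intro a b hab hqa hqb
      refine ⟨val_inj' hm hab, ?_, ?_, ?_⟩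
      · rw [← val_succ hm b]
        intro h
        have : a = b + 1 := ZMod.val_injective _ h
        exact hnonadj b a hab.symm hqb hqa this
      · rw [← val_succ hm a]
        intro h
        have : b = a + 1 := (ZMod.val_injective _ h).symm
        exact hnonadj a b hab hqa hqb this
      · rw [← val_succ hm a, ← val_succ hm b]
        intro h
        have : a + 1 = b + 1 := ZMod.val_injective _ h
        exact hab (by linear_combination this - (1 : ZMod (2*m)) * 1)
    have hVD1 := mkVD i j hij hq1 hq2
    have hVD2 := mkVD j e3 (fun h => h3j h.symm) hq2 hqe3
    have hVD3 := mkVD i e3 (fun h => h3i h.symm) hq1 hqe3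
    apply hG i.val j.val e3.val (val_lt' hm i) (val_lt' hm j) (val_lt' hm e3) hVD1 hVD2 hVD3
    have g1 : q ∈ segment ℝ (pb (τ i.val)) (pb (τ (sc m i.val))) := by
      rw [← cycleSegEq hm τ i]; exact hq1
    have g2 : q ∈ segment ℝ (pb (τ j.val)) (pb (τ (sc m j.val))) := by
      rw [← cycleSegEq hm τ j]; exact hq2
    have g3 : q ∈ segment ℝ (pb (τ e3.val)) (pb (τ (sc m e3.val))) := by
      rw [← cycleSegEq hm τ e3]; exact hqe3
    exact G_of_concurrent g1 g2 g3

end Fiber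

section Splitters

variable {m : ℕ}

lemma self_add_self (hm : 2 ≤ m) (i : ZMod (2*m)) :
    i + i = 0 ↔ i = 0 ∨ i = (m : ZMod (2*m)) := by
  haveI := NZ hm
  rw [add_eq_zero_iff_val hm]
  have hv := val_lt' hm i
  have hmv : ((m : ZMod (2*m))).val = m := ZMod.val_cast_of_lt (by omega)
  constructor
  · rintro (h | h)
    · left
      have : i.val = 0 := by omega
      exact (ZMod.val_eq_zero i).mp this
    · right
      have : i.val = m := by omega
      exact ZMod.val_injective _ (this.trans hmv.symm)
  · rintro (rfl | rfl)
    · left; simp [ZMod.val_zero]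
    · right; rw [hmv]; omega

lemma m_ne_zero (hm : 2 ≤ m) : ((m : ZMod (2*m))) ≠ 0 := by
  haveI := NZ hm
  intro h
  have hmv : ((m : ZMod (2*m))).val = m := ZMod.val_cast_of_lt (by omega)
  rw [h, ZMod.val_zero] at hmv
  omega

lemma splitter_iff {τ : ℕ → ℝ} (hm : 2 ≤ m) (hB : Bnd m τ) (i : ZMod (2*m)) :
    IsSplitter (2*m) (emap m τ) i ↔ i + i = 0 := by
  constructor
  · intro hs
    by_contra hne
    have hni : -i ≠ i := fun h => hne (by linear_combination (-1 : ZMod (2*m)) * h)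
    have := (seg_inter hm hB (-i) i hni).mp (hs (-i) hni)
    exact this (by ring)
  · intro h0 j hji
    refine (seg_inter hm hB j i hji).mpr ?_
    intro hadd
    exact hji (add_right_cancel (hadd.trans h0.symm))

lemma splitter_set {τ : ℕ → ℝ} (hm : 2 ≤ m) (hB : Bnd m τ) :
    {i : ZMod (2*m) | IsSplitter (2*m) (emap m τ) i} = {0, (m : ZMod (2*m))} := by
  ext i
  rw [Set.mem_setOf_eq, splitter_iff hm hB, self_add_self hm]
  simp [Set.mem_insert_iff]

lemma nonsplitter_set {τ : ℕ → ℝ} (hm : 2 ≤ m) (hB : Bnd m τ) (i : ZMod (2*m))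
    (hns : ¬ IsSplitter (2*m) (emap m τ) i) :
    {j : ZMod (2*m) | j ≠ i ∧
      (cycleSeg (2*m) (emap m τ) j ∩ cycleSeg (2*m) (emap m τ) i).Nonempty}
      = Set.univ \ {i, -i} := by
  have hii : i + i ≠ 0 := fun h => hns ((splitter_iff hm hB i).mpr h)
  ext j
  simp only [Set.mem_setOf_eq, Set.mem_diff, Set.mem_univ, true_and, Set.mem_insert_iff,
    Set.mem_singleton_iff]
  constructor
  · rintro ⟨h1, h2⟩
    push_neg
    refine ⟨h1, ?_⟩
    rintro rfl
    exact (seg_inter hm hB (-i) i h1).mp h2 (by ring)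
  · intro h
    push_neg at h
    refine ⟨h.1, (seg_inter hm hB j i h.1).mpr ?_⟩
    intro hadd
    exact h.2 (by linear_combination hadd)

end Splitters

section Collinearity

lemma parab_noncollinear {a b c : ℝ} (hab : a ≠ b) (hac : a ≠ c) (hbc : b ≠ c) :
    ¬ Collinear ℝ ({pb a, pb b, pb c} : Set (ℝ × ℝ)) := by
  intro h
  rw [collinear_iff_of_mem (Set.mem_insert (pb a) _)] at h
  obtain ⟨v, hv⟩ := h
  obtain ⟨r1, hr1⟩ := hv (pb b) (by simp)
  obtain ⟨r2, hr2⟩ := hv (pb c) (by simp)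
  have e1 : b = r1 * v.1 + a := by
    have := congrArg Prod.fst hr1; simpa [pb] using this
  have e2 : b^2 = r1 * v.2 + a^2 := by
    have := congrArg Prod.snd hr1; simpa [pb] using this
  have e3 : c = r2 * v.1 + a := by
    have := congrArg Prod.fst hr2; simpa [pb] using this
  have e4 : c^2 = r2 * v.2 + a^2 := by
    have := congrArg Prod.snd hr2; simpa [pb] using this
  have e1' : b - a = r1 * v.1 := by linarith
  have e2' : b^2 - a^2 = r1 * v.2 := by linarith
  have e3' : c - a = r2 * v.1 := by linarith
  have e4' : c^2 - a^2 = r2 * v.2 := by linarith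
  have key1 : (b-a)*(c^2-a^2) = r1*v.1*(r2*v.2) := by
    linear_combination (c^2-a^2) * e1' + (r1*v.1) * e4'
  have key2 : (c-a)*(b^2-a^2) = r2*v.1*(r1*v.2) := by
    linear_combination (b^2-a^2) * e3' + (r2*v.1) * e2'
  have key : (b-a)*(c-a)*(c-b) = 0 := by linear_combination key1 - key2
  rcases mul_eq_zero.mp key with h' | h'
  · rcases mul_eq_zero.mp h' with h'' | h''
    · exact hab (by linarith)
    · exact hac (by linarith)
  · exact hbc (by linarith)

end Collinearity

section Counting

variable {m : ℕ}

lemma OP_card [NeZero (2*m)] (hm : 2 ≤ m) :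
    (Finset.univ.filter
        (fun z : ZMod (2*m) × ZMod (2*m) => z.1 ≠ z.2 ∧ z.1 + z.2 ≠ 0)).card + 2*(2*m)
      = (2*m)*(2*m) + 2 := by
  set P : ZMod (2*m) × ZMod (2*m) → Prop := fun z => z.1 ≠ z.2 ∧ z.1 + z.2 ≠ 0 with hP
  have hsplit := Finset.card_filter_add_card_filter_not (s := Finset.univ) (p := P)
  have huniv : (Finset.univ : Finset (ZMod (2*m) × ZMod (2*m))).card = (2*m)*(2*m) := by
    rw [Finset.card_univ, Fintype.card_prod, ZMod.card]
  -- the negated filter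
  have hneg : Finset.univ.filter (fun z => ¬ P z)
      = Finset.univ.filter (fun z : ZMod (2*m) × ZMod (2*m) => z.1 = z.2)
        ∪ Finset.univ.filter (fun z : ZMod (2*m) × ZMod (2*m) => z.1 + z.2 = 0) := by
    rw [← Finset.filter_or]
    apply Finset.filter_congr
    intro z _
    simp only [hP]
    tauto
  have hD1 : (Finset.univ.filter (fun z : ZMod (2*m) × ZMod (2*m) => z.1 = z.2)).card
      = 2*m := by
    have himg : Finset.univ.filter (fun z : ZMod (2*m) × ZMod (2*m) => z.1 = z.2)
        = Finset.univ.image (fun i : ZMod (2*m) => (i, i)) := by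
      ext z
      simp only [Finset.mem_filter, Finset.mem_univ, true_and, Finset.mem_image]
      constructor
      · intro h; exact ⟨z.1, by rw [Prod.ext_iff]; exact ⟨rfl, h⟩⟩
      · rintro ⟨i, rfl⟩; rfl
    rw [himg, Finset.card_image_of_injective _ (fun a b h => (Prod.mk.injEq _ _ _ _ ▸ h).1),
      Finset.card_univ, ZMod.card]
  have hD2 : (Finset.univ.filter (fun z : ZMod (2*m) × ZMod (2*m) => z.1 + z.2 = 0)).card
      = 2*m := by
    have himg : Finset.univ.filter (fun z : ZMod (2*m) × ZMod (2*m) => z.1 + z.2 = 0)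
        = Finset.univ.image (fun i : ZMod (2*m) => (i, -i)) := by
      ext z
      simp only [Finset.mem_filter, Finset.mem_univ, true_and, Finset.mem_image]
      constructor
      · intro h
        refine ⟨z.1, ?_⟩
        have h2 : z.2 = -z.1 := by linear_combination h
        rw [Prod.ext_iff]
        exact ⟨rfl, h2.symm⟩
      · rintro ⟨i, rfl⟩; ring
    rw [himg, Finset.card_image_of_injective _ (fun a b h => (Prod.mk.injEq _ _ _ _ ▸ h).1),
      Finset.card_univ, ZMod.card]
  have hD12 : (Finset.univ.filter (fun z : ZMod (2*m) × ZMod (2*m) => z.1 = z.2)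
      ∩ Finset.univ.filter (fun z : ZMod (2*m) × ZMod (2*m) => z.1 + z.2 = 0)).card = 2 := by
    have hset : Finset.univ.filter (fun z : ZMod (2*m) × ZMod (2*m) => z.1 = z.2)
        ∩ Finset.univ.filter (fun z : ZMod (2*m) × ZMod (2*m) => z.1 + z.2 = 0)
        = {((0 : ZMod (2*m)), (0 : ZMod (2*m))), ((m : ZMod (2*m)), (m : ZMod (2*m)))} := by
      ext z
      simp only [Finset.mem_inter, Finset.mem_filter, Finset.mem_univ, true_and,
        Finset.mem_insert, Finset.mem_singleton]
      constructor
      · rintro ⟨h1, h2⟩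
        rw [← h1] at h2
        rcases (self_add_self hm z.1).mp h2 with h | h
        · left; rw [Prod.ext_iff, ← h1, h]; exact ⟨rfl, rfl⟩
        · right; rw [Prod.ext_iff, ← h1, h]; exact ⟨rfl, rfl⟩
      · rintro (rfl | rfl)
        · exact ⟨rfl, by ring⟩
        · refine ⟨rfl, ?_⟩
          exact (self_add_self hm _).mpr (Or.inr rfl)
    rw [hset, Finset.card_insert_of_notMem, Finset.card_singleton]
    simp only [Finset.mem_singleton]
    intro h
    exact (m_ne_zero hm) (((Prod.mk.injEq _ _ _ _).mp h).1).symm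
  have hUI := Finset.card_union_add_card_inter
    (Finset.univ.filter (fun z : ZMod (2*m) × ZMod (2*m) => z.1 = z.2))
    (Finset.univ.filter (fun z : ZMod (2*m) × ZMod (2*m) => z.1 + z.2 = 0))
  rw [hD1, hD2, hD12] at hUI
  rw [hneg] at hsplit
  rw [huniv] at hsplit
  have hfinal : (Finset.filter P Finset.univ).card + 2*(2*m) = (2*m)*(2*m) + 2 := by omega
  exact hfinal

lemma big_count {τ : ℕ → ℝ} (hm : 2 ≤ m) (hB : Bnd m τ)
    (hG : ∀ k l r : ℕ, k < 2*m → l < 2*m → r < 2*m →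
      VD m k l → VD m l r → VD m k r → trG m τ k l r ≠ 0) :
    2 * {x : ℝ × ℝ | ∃ i j : ZMod (2*m), i ≠ j ∧
        x ∈ cycleSeg (2*m) (emap m τ) i ∧ x ∈ cycleSeg (2*m) (emap m τ) j}.ncard
        + 2*(2*m)
      = (2*m)*(2*m) + 2 := by
  haveI := NZ hm
  set OP : Finset (ZMod (2*m) × ZMod (2*m)) :=
    Finset.univ.filter (fun z => z.1 ≠ z.2 ∧ z.1 + z.2 ≠ 0) with hOP
  set Sfin : Finset (ℝ × ℝ) := OP.image (fun z => Pt m τ z.1 z.2) with hSfin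
  -- membership facts
  have hOPmem : ∀ z : ZMod (2*m) × ZMod (2*m), z ∈ OP ↔ z.1 ≠ z.2 ∧ z.1 + z.2 ≠ 0 := by
    intro z; simp [hOP]
  have hPtmem : ∀ i j : ZMod (2*m), i ≠ j → i + j ≠ 0 →
      Pt m τ i j ∈ cycleSeg (2*m) (emap m τ) i ∩ cycleSeg (2*m) (emap m τ) j := by
    intro i j h1 h2
    exact Pt_mem ((seg_inter hm hB i j h1).mpr h2)
  -- set equality
  have hseteq : {x : ℝ × ℝ | ∃ i j : ZMod (2*m), i ≠ j ∧
      x ∈ cycleSeg (2*m) (emap m τ) i ∧ x ∈ cycleSeg (2*m) (emap m τ) j} = ↑Sfin := by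
    ext x
    simp only [Set.mem_setOf_eq, hSfin, Finset.coe_image, Set.mem_image, Finset.mem_coe]
    constructor
    · rintro ⟨i, j, hij, h1, h2⟩
      have hadd : i + j ≠ 0 := (seg_inter hm hB i j hij).mp ⟨x, h1, h2⟩
      refine ⟨(i, j), (hOPmem (i,j)).mpr ⟨hij, hadd⟩, ?_⟩
      exact (Pt_eq hm hB hij ⟨h1, h2⟩).symm
    · rintro ⟨⟨i, j⟩, hz, rfl⟩
      obtain ⟨hij, hadd⟩ := (hOPmem (i,j)).mp hz
      obtain ⟨h1, h2⟩ := hPtmem i j hij hadd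
      exact ⟨i, j, hij, h1, h2⟩
  rw [hseteq, Set.ncard_coe_finset]
  -- fiberwise counting
  have hcard : OP.card = ∑ s ∈ Sfin, (OP.filter (fun z => Pt m τ z.1 z.2 = s)).card := by
    apply Finset.card_eq_sum_card_fiberwise
    intro z hz
    exact Finset.mem_image_of_mem _ hz
  have hfib : ∀ s ∈ Sfin, (OP.filter (fun z => Pt m τ z.1 z.2 = s)).card = 2 := by
    intro s hs
    obtain ⟨⟨i, j⟩, hzmem, rfl⟩ := Finset.mem_image.mp hs
    obtain ⟨hij, hadd⟩ := (hOPmem (i,j)).mp hzmem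
    have hfibset : OP.filter (fun z => Pt m τ z.1 z.2 = Pt m τ i j) = {(i,j), (j,i)} := by
      ext ⟨a, b⟩
      simp only [Finset.mem_filter, Finset.mem_insert, Finset.mem_singleton]
      constructor
      · rintro ⟨habOP, habPt⟩
        obtain ⟨hab, hab0⟩ := (hOPmem (a,b)).mp habOP
        obtain ⟨ha, hb⟩ := hPtmem a b hab hab0
        rw [habPt] at ha hb
        obtain ⟨hi, hj⟩ := hPtmem i j hij hadd
        rcases fiber_lemma hm hB hG hij hab hi hj ha hb with ⟨h1, h2⟩ | ⟨h1, h2⟩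
        · left; rw [Prod.mk.injEq]; exact ⟨h1, h2⟩
        · right; rw [Prod.mk.injEq]; exact ⟨h1, h2⟩
      · rintro (h | h) <;> rw [Prod.mk.injEq] at h <;> obtain ⟨h1, h2⟩ := h
        · constructor
          · rw [h1, h2]; exact hzmem
          · rw [h1, h2]
        · have hOPji : ((j, i) : ZMod (2*m) × ZMod (2*m)) ∈ OP :=
            (hOPmem (j,i)).mpr ⟨hij.symm, by rw [add_comm]; exact hadd⟩
          have hmemji := hPtmem j i hij.symm (by rw [add_comm]; exact hadd)
          constructor
          · rw [h1, h2]; exact hOPji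
          · rw [h1, h2]; exact Pt_eq hm hB hij ⟨hmemji.2, hmemji.1⟩
    rw [hfibset]
    rw [Finset.card_insert_of_notMem (by
      simp only [Finset.mem_singleton, Prod.mk.injEq, not_and]
      intro h; exact absurd h hij), Finset.card_singleton]
  have hsum : OP.card = 2 * Sfin.card := by
    rw [hcard, Finset.sum_congr rfl hfib, Finset.sum_const, smul_eq_mul]
    ring
  have hOPcard := OP_card (m := m) hm
  rw [← hOP] at hOPcard
  omega

end Counting

end OEA

theorem optimal_even_arrangement_exists (N : ℕ) (hN : 4 ≤ N) (heven : Even N) :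
    ∃ p : ZMod N → ℝ × ℝ,
      (∀ i j k : ZMod N, i ≠ j → j ≠ k → i ≠ k →
        ¬ Collinear ℝ ({p i, p j, p k} : Set (ℝ × ℝ))) ∧
      {i : ZMod N | IsSplitter N p i}.ncard = 2 ∧
      (∀ i : ZMod N, ¬ IsSplitter N p i →
        {j : ZMod N | j ≠ i ∧ (cycleSeg N p j ∩ cycleSeg N p i).Nonempty}.ncard = N - 2) ∧
      {x : ℝ × ℝ | ∃ i j : ZMod N, i ≠ j ∧
        x ∈ cycleSeg N p i ∧ x ∈ cycleSeg N p j}.ncard = (N ^ 2 - 2 * N + 2) / 2 := by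
  obtain ⟨m, hm'⟩ := heven
  have hNm : N = 2 * m := by omega
  subst hNm
  have hm : 2 ≤ m := by omega
  haveI := OEA.NZ hm
  obtain ⟨τ, hB, hGr⟩ := OEA.exists_tau m hm (2*m)
  have hG : ∀ k l r : ℕ, k < 2*m → l < 2*m → r < 2*m →
      OEA.VD m k l → OEA.VD m l r → OEA.VD m k r → OEA.trG m τ k l r ≠ 0 := by
    intro k l r hk hl hr h1 h2 h3
    exact hGr k l r hk hl hr h1 h2 h3 hk (OEA.sc_lt hm hk) hl (OEA.sc_lt hm hl) hr
      (OEA.sc_lt hm hr)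
  refine ⟨OEA.emap m τ, ?_, ?_, ?_, ?_⟩
  · intro i j k hij hjk hik
    exact OEA.parab_noncollinear
      (OEA.tau_inj hm hB (OEA.val_lt' hm i) (OEA.val_lt' hm j) (OEA.val_inj' hm hij))
      (OEA.tau_inj hm hB (OEA.val_lt' hm i) (OEA.val_lt' hm k) (OEA.val_inj' hm hik))
      (OEA.tau_inj hm hB (OEA.val_lt' hm j) (OEA.val_lt' hm k) (OEA.val_inj' hm hjk))
  · rw [OEA.splitter_set hm hB, Set.ncard_pair (OEA.m_ne_zero hm).symm]
  · intro i hns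
    have hii : i ≠ -i := by
      intro h
      exact hns ((OEA.splitter_iff hm hB i).mpr (by linear_combination h))
    rw [OEA.nonsplitter_set hm hB i hns,
      Set.ncard_diff (Set.subset_univ _), Set.ncard_univ, Set.ncard_pair hii,
      Nat.card_eq_fintype_card, ZMod.card]
  · have hkey := OEA.big_count hm hB hG
    have h2 : 2*(2*m) ≤ (2*m)*(2*m) := Nat.mul_le_mul_right _ (by omega)
    rw [pow_two]
    generalize hMM : (2*m)*(2*m) = M at hkey h2 ⊢
    omega
end

section
/- Let N ≥ 3 be odd, let p k = (cos(2πk/N), sin(2πk/N)) ∈ ℝ² for k ∈ ZMod N, and for each k ∈ ZMod N let s k = segment ℝ (p k) (p (k + (N−1)/2)). Then no two distinct segments s j, s k are collinear (lie on a common line), and consequently every pair of distinct segments intersects in exactly one point. -/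
open Real

lemma sys_unique {a1 b1 a2 b2 r x1 x2 y1 y2 : ℝ} (hD : a1*b2 - a2*b1 ≠ 0)
    (h1 : a1*x1 + b1*x2 = r) (h2 : a2*x1 + b2*x2 = r)
    (h3 : a1*y1 + b1*y2 = r) (h4 : a2*y1 + b2*y2 = r) : x1 = y1 ∧ x2 = y2 := by
  have e1 : (a1*b2 - a2*b1) * (x1 - y1) = 0 := by linear_combination b2*h1 - b1*h2 - b2*h3 + b1*h4
  have e2 : (a1*b2 - a2*b1) * (x2 - y2) = 0 := by linear_combination a1*h2 - a2*h1 - a1*h4 + a2*h3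
  constructor
  · have := (mul_eq_zero.mp e1).resolve_left hD; linarith
  · have := (mul_eq_zero.mp e2).resolve_left hD; linarith

lemma seg_on_line {A B : ℝ×ℝ} {a b r : ℝ} (hA : a*A.1 + b*A.2 = r) (hB : a*B.1 + b*B.2 = r)
    {x : ℝ×ℝ} (hx : x ∈ segment ℝ A B) : a*x.1 + b*x.2 = r := by
  obtain ⟨u, v, hu, hv, huv, rfl⟩ := hx
  simp only [Prod.fst_add, Prod.snd_add, Prod.smul_fst, Prod.smul_snd, smul_eq_mul]
  linear_combination u*hA + v*hB + r*huv

lemma seg_cross (A B : ℝ×ℝ) (a b r : ℝ)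
    (h : (a*A.1 + b*A.2 - r) * (a*B.1 + b*B.2 - r) ≤ 0) :
    ∃ x ∈ segment ℝ A B, a*x.1 + b*x.2 = r := by
  set gA := a*A.1 + b*A.2 - r with hgA
  set gB := a*B.1 + b*B.2 - r with hgB
  by_cases heq : gA = gB
  · have h0 : gA = 0 := by nlinarith [sq_nonneg gA]
    exact ⟨A, left_mem_segment ℝ A B, by linarith [hgA]⟩
  · set t := gA / (gA - gB) with ht
    have hne : gA - gB ≠ 0 := sub_ne_zero.mpr heq
    have ht01 : 0 ≤ t ∧ t ≤ 1 := by
      rcases mul_nonpos_iff.mp h with ⟨h1, h2⟩ | ⟨h1, h2⟩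
      · have hpos : 0 < gA - gB := lt_of_le_of_ne (by linarith) (Ne.symm hne)
        exact ⟨div_nonneg h1 hpos.le, by rw [ht, div_le_one hpos]; linarith⟩
      · have hneg : gA - gB < 0 := lt_of_le_of_ne (by linarith) hne
        refine ⟨by rw [ht, div_nonneg_iff]; right; exact ⟨h1, hneg.le⟩, ?_⟩
        rw [ht, div_le_one_iff]; right; right; exact ⟨hneg, by linarith⟩
    obtain ⟨ht0, ht1⟩ := ht01
    refine ⟨(1-t) • A + t • B, ⟨1-t, t, by linarith, ht0, by ring, rfl⟩, ?_⟩
    have key : t * (gA - gB) = gA := by rw [ht]; field_simp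
    simp only [Prod.fst_add, Prod.snd_add, Prod.smul_fst, Prod.smul_snd, smul_eq_mul]
    nlinarith [key, hgA, hgB]

lemma sign_pos_aux {cR mR dR : ℝ} (hc : 0 < cR) (h0 : 0 ≤ dR) (hd : dR ≤ mR) (hcm : cR*mR ≤ π) :
    cos (cR*mR) ≤ cos (cR*(2*dR - mR)) := by
  rw [← Real.cos_abs (cR*(2*dR - mR))]
  apply Real.cos_le_cos_of_nonneg_of_le_pi (abs_nonneg _) hcm
  rw [abs_le]
  constructor <;> nlinarith

lemma sign_neg_aux {cR mR dR NR : ℝ} (hc : 0 < cR) (hm : mR ≤ dR) (hd : dR ≤ NR - 1)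
    (hcm0 : 0 ≤ cR*mR) (hπ : cR * NR = π) :
    cos (cR*(2*dR - mR)) ≤ cos (cR*mR) := by
  set x := cR*(2*dR - mR) with hx
  have hx1 : cR*mR ≤ x := by rw [hx]; nlinarith
  have hx2 : x ≤ 2*π - cR*mR - 2*cR := by rw [hx]; nlinarith
  rcases le_or_gt x π with h | h
  · exact Real.cos_le_cos_of_nonneg_of_le_pi hcm0 h hx1
  · rw [show x = 2*π - (2*π - x) by ring, Real.cos_two_pi_sub]
    exact Real.cos_le_cos_of_nonneg_of_le_pi hcm0 (by linarith) (by linarith)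

theorem star_polygon_segments_not_collinear (N : ℕ) (hN : 3 ≤ N) (hodd : Odd N)
    (p : ZMod N → ℝ × ℝ)
    (hp : ∀ k : ZMod N,
      p k = (Real.cos (2 * π * k.val / N), Real.sin (2 * π * k.val / N)))
    (s : ZMod N → Set (ℝ × ℝ))
    (hs : ∀ k : ZMod N, s k = segment ℝ (p k) (p (k + (((N - 1) / 2 : ℕ) : ZMod N)))) :
    (∀ j k : ZMod N, j ≠ k → ¬ Collinear ℝ (s j ∪ s k)) ∧
    (∀ j k : ZMod N, j ≠ k → ∃! x : ℝ × ℝ, x ∈ s j ∩ s k) := by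
  haveI : NeZero N := ⟨by omega⟩
  obtain ⟨t, ht⟩ := hodd
  set m : ℕ := (N - 1) / 2 with hmdef
  clear_value m
  have hm2 : 2 * m + 1 = N := by omega
  have hm1 : 1 ≤ m := by omega
  have hmN : m < N := by omega
  have hNR : (0:ℝ) < N := by exact_mod_cast (by omega : 0 < N)
  have hNne : (N:ℝ) ≠ 0 := ne_of_gt hNR
  set c : ℝ := π / N with hcdef
  have hc : 0 < c := div_pos pi_pos hNR
  have hcN : c * N = π := by rw [hcdef]; field_simp
  have hm2R : 2*(m:ℝ) + 1 = N := by exact_mod_cast hm2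
  have hcmπ : c * m ≤ π := by nlinarith
  have hcm0 : 0 ≤ c * m := by positivity
  set M : ZMod N → ℝ := fun j => 2*c*(j.val:ℝ) + c*(m:ℝ) with hMdef
  -- cast helper
  have hzc : ∀ a : ZMod N, ((a.val : ℕ) : ZMod N) = a := by
    intro a; simp [ZMod.natCast_val, ZMod.cast_id]
  -- fundamental evaluation
  have hL : ∀ j q : ZMod N,
      cos (M j) * (p q).1 + sin (M j) * (p q).2 = cos (c*(2*(((q - j).val : ℕ):ℝ) - m)) := by
    intro j q
    rw [hp q]
    simp only
    rw [show cos (M j) * cos (2*π*(q.val:ℝ)/N) + sin (M j) * sin (2*π*(q.val:ℝ)/N)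
        = cos (2*π*(q.val:ℝ)/N - M j) by rw [Real.cos_sub]; ring]
    obtain ⟨e, he⟩ : (N:ℤ) ∣ ((q.val:ℤ) - j.val - ((q-j).val:ℤ)) := by
      rw [← ZMod.intCast_zmod_eq_zero_iff_dvd]
      push_cast
      rw [hzc, hzc, hzc]
      ring
    have heR : (q.val:ℝ) - j.val - ((q-j).val:ℝ) = N*e := by exact_mod_cast he
    rw [show 2*π*(q.val:ℝ)/N - M j = c*(2*(((q - j).val : ℕ):ℝ) - m) + e*(2*π) by
      have hcd2 : π/(N:ℝ) = c := hcdef.symm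
      rw [hMdef]; simp only
      linear_combination (2*(q.val:ℝ))*hcd2 + (2*c)*heR + (2*(e:ℝ))*hcN]
    exact Real.cos_add_int_mul_two_pi _ e
  -- sign lemmas
  have hpos : ∀ j q : ZMod N, (q - j).val ≤ m →
      cos (c*m) ≤ cos (M j) * (p q).1 + sin (M j) * (p q).2 := by
    intro j q hd
    rw [hL j q]
    exact sign_pos_aux hc (by positivity) (by exact_mod_cast hd) hcmπ
  have hneg : ∀ j q : ZMod N, m ≤ (q - j).val →
      cos (M j) * (p q).1 + sin (M j) * (p q).2 ≤ cos (c*m) := by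
    intro j q hd
    rw [hL j q]
    refine sign_neg_aux hc (by exact_mod_cast hd) ?_ hcm0 hcN
    have h' : (q-j).val + 1 ≤ N := ZMod.val_lt (q - j)
    have : ((q-j).val:ℝ) + 1 ≤ N := by exact_mod_cast h'
    linarith
  -- val of shifted difference
  have hdplus : ∀ j q : ZMod N, ((q + (m:ZMod N)) - j).val = ((q - j).val + m) % N := by
    intro j q
    have h1 : (q + (m:ZMod N)) - j = ((((q-j).val + m : ℕ)) : ZMod N) := by
      push_cast
      rw [hzc]
      ring
    rw [h1, ZMod.val_natCast]
  -- opposite sides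
  have hopp : ∀ j q : ZMod N,
      (cos (M j) * (p q).1 + sin (M j) * (p q).2 - cos (c*m)) *
      (cos (M j) * (p (q + (m:ZMod N))).1 + sin (M j) * (p (q + (m:ZMod N))).2 - cos (c*m)) ≤ 0 := by
    intro j q
    have hdlt : (q - j).val < N := ZMod.val_lt _
    have hd' := hdplus j q
    rcases le_or_gt ((q - j).val) m with h | h
    · apply mul_nonpos_of_nonneg_of_nonpos
      · simpa using sub_nonneg.mpr (hpos j q h)
      · refine sub_nonpos.mpr (hneg j (q + (m:ZMod N)) ?_)
        rw [hd', Nat.mod_eq_of_lt (by omega)]; omega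
    · apply mul_nonpos_of_nonpos_of_nonneg
      · exact sub_nonpos.mpr (hneg j q h.le)
      · refine sub_nonneg.mpr (hpos j (q + (m:ZMod N)) ?_)
        rw [hd', Nat.mod_eq_sub_mod (by omega), Nat.mod_eq_of_lt (by omega)]
        omega
  -- endpoints on own line
  have hself : ∀ j : ZMod N, cos (M j) * (p j).1 + sin (M j) * (p j).2 = cos (c*m) := by
    intro j
    rw [hL j j, sub_self, ZMod.val_zero]
    rw [show c*(2*((0:ℕ):ℝ) - m) = -(c*m) by push_cast; ring, Real.cos_neg]
  have hself2 : ∀ j : ZMod N,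
      cos (M j) * (p (j + (m:ZMod N))).1 + sin (M j) * (p (j + (m:ZMod N))).2 = cos (c*m) := by
    intro j
    rw [hL j _, add_sub_cancel_left, ZMod.val_natCast, Nat.mod_eq_of_lt hmN]
    rw [show c*(2*(m:ℝ) - m) = c*m by ring]
  -- determinant nonzero
  have hNZ : (0:ℤ) < N := by exact_mod_cast (by omega : 0 < N)
  have hm2Z : 2*(m:ℤ) + 1 = N := by exact_mod_cast hm2
  have hdet : ∀ j k : ZMod N, j ≠ k → cos (M j) * sin (M k) - cos (M k) * sin (M j) ≠ 0 := by
    intro j k hjk h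
    have hsin : sin (M k - M j) = 0 := by rw [Real.sin_sub]; linarith
    rw [Real.sin_eq_zero_iff] at hsin
    obtain ⟨n, hn⟩ := hsin
    have h2 : (n:ℝ)*π = 2*c*(k.val:ℝ) - 2*c*(j.val:ℝ) := by
      rw [hMdef] at hn; simp only at hn; linarith
    have h3 : ((n:ℝ)*N)*π = (2*(k.val:ℝ) - 2*(j.val:ℝ))*π := by
      linear_combination (N:ℝ)*h2 + (2*(k.val:ℝ) - 2*(j.val:ℝ))*hcN
    have key : (n:ℝ) * N = 2*(k.val:ℝ) - 2*(j.val:ℝ) := mul_right_cancel₀ pi_ne_zero h3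
    have keyZ : (n:ℤ) * N = 2*(k.val:ℤ) - 2*(j.val:ℤ) := by exact_mod_cast key
    have hkvZ : (k.val:ℤ) < N := by exact_mod_cast ZMod.val_lt k
    have hjvZ : (j.val:ℤ) < N := by exact_mod_cast ZMod.val_lt j
    have hkv0 : (0:ℤ) ≤ k.val := by positivity
    have hjv0 : (0:ℤ) ≤ j.val := by positivity
    have hn2 : n < 2 := by
      by_contra h'; push_neg at h'
      have : 2*(N:ℤ) ≤ n*N := by nlinarith
      linarith
    have hn2' : -2 < n := by
      by_contra h'; push_neg at h'
      have : n*N ≤ -2*(N:ℤ) := by nlinarith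
      linarith
    interval_cases n
    · omega
    · have : j.val = k.val := by omega
      exact hjk (ZMod.val_injective N this)
    · omega
  -- injectivity of p
  have hpinj : Function.Injective p := by
    intro a b hab
    rw [hp a, hp b] at hab
    have h1 : cos (2*π*(a.val:ℝ)/N) = cos (2*π*(b.val:ℝ)/N) := congrArg Prod.fst hab
    have h2 : sin (2*π*(a.val:ℝ)/N) = sin (2*π*(b.val:ℝ)/N) := congrArg Prod.snd hab
    have h3 := Real.Angle.cos_sin_inj h1 h2
    rw [Real.Angle.angle_eq_iff_two_pi_dvd_sub] at h3
    obtain ⟨kk, hkk⟩ := h3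
    rw [show (2*π*(a.val:ℝ)/N) = 2*(a.val:ℝ)*c by rw [hcdef]; ring,
       show (2*π*(b.val:ℝ)/N) = 2*(b.val:ℝ)*c by rw [hcdef]; ring] at hkk
    have h4 : ((a.val:ℝ) - b.val)*(2*π) = ((N:ℝ)*kk)*(2*π) := by
      linear_combination (N:ℝ)*hkk - (2*((a.val:ℝ)-(b.val:ℝ)))*hcN
    have key : (a.val:ℝ) - b.val = (N:ℝ)*kk :=
      mul_right_cancel₀ (by positivity) h4
    have keyZ : (a.val:ℤ) - b.val = (N:ℤ)*kk := by exact_mod_cast key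
    have havZ : (a.val:ℤ) < N := by exact_mod_cast ZMod.val_lt a
    have hbvZ : (b.val:ℤ) < N := by exact_mod_cast ZMod.val_lt b
    have hav0 : (0:ℤ) ≤ a.val := by positivity
    have hbv0 : (0:ℤ) ≤ b.val := by positivity
    have hkk2 : kk < 1 := by
      by_contra h'; push_neg at h'
      have : (N:ℤ) ≤ N*kk := by nlinarith
      linarith
    have hkk2' : -1 < kk := by
      by_contra h'; push_neg at h'
      have : (N:ℤ)*kk ≤ -N := by nlinarith
      linarith
    have hkk0 : kk = 0 := by omega
    rw [hkk0] at keyZ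
    have : a.val = b.val := by omega
    exact ZMod.val_injective N this
  have hmne : (m:ZMod N) ≠ 0 := by
    intro h0
    have h1 : ((m:ZMod N)).val = 0 := by rw [h0, ZMod.val_zero]
    rw [ZMod.val_natCast, Nat.mod_eq_of_lt hmN] at h1; omega
  constructor
  · -- not collinear
    intro j k hjk hcol
    rw [hs j, hs k] at hcol
    have hmem : p j ∈ segment ℝ (p j) (p (j + (m:ZMod N))) ∪
        segment ℝ (p k) (p (k + (m:ZMod N))) :=
      Or.inl (left_mem_segment ℝ (p j) (p (j + (m:ZMod N))))
    obtain ⟨v, hv⟩ := (collinear_iff_of_mem hmem).mp hcol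
    obtain ⟨t1, ht1⟩ := hv _ (Or.inl (right_mem_segment ℝ (p j) (p (j + (m:ZMod N)))))
    have ht1' : p (j + (m:ZMod N)) = t1 • v + p j := ht1
    have ht1ne : t1 ≠ 0 := by
      intro h0
      rw [h0, zero_smul, zero_add] at ht1'
      exact hmne (add_eq_left.mp (hpinj ht1'))
    have hdir : cos (M j) * v.1 + sin (M j) * v.2 = 0 := by
      have e2 := hself2 j
      rw [ht1'] at e2
      simp only [Prod.fst_add, Prod.snd_add, Prod.smul_fst, Prod.smul_snd, smul_eq_mul] at e2
      have e1 := hself j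
      have h0 : t1 * (cos (M j) * v.1 + sin (M j) * v.2) = 0 := by linear_combination e2 - e1
      exact (mul_eq_zero.mp h0).resolve_left ht1ne
    have honline : ∀ x ∈ segment ℝ (p j) (p (j + (m:ZMod N))) ∪
        segment ℝ (p k) (p (k + (m:ZMod N))),
        cos (M j) * x.1 + sin (M j) * x.2 = cos (c*m) := by
      intro x hx
      obtain ⟨tx, htx⟩ := hv x hx
      have htx' : x = tx • v + p j := htx
      rw [htx']
      simp only [Prod.fst_add, Prod.snd_add, Prod.smul_fst, Prod.smul_snd, smul_eq_mul]
      linear_combination (hself j) + tx*hdir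
    have hk1 := honline _ (Or.inr (left_mem_segment ℝ (p k) (p (k + (m:ZMod N)))))
    have hk2 := honline _ (Or.inr (right_mem_segment ℝ (p k) (p (k + (m:ZMod N)))))
    have hu := sys_unique (hdet j k hjk) hk1 (hself k) hk2 (hself2 k)
    have hpeq : p k = p (k + (m:ZMod N)) := Prod.ext hu.1 hu.2
    exact hmne ((left_eq_add).mp (hpinj hpeq))
  · -- unique intersection
    intro j k hjk
    obtain ⟨x, hxseg, hxline⟩ := seg_cross (p k) (p (k + (m:ZMod N)))
      (cos (M j)) (sin (M j)) (cos (c*m)) (hopp j k)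
    have hxk : cos (M k) * x.1 + sin (M k) * x.2 = cos (c*m) :=
      seg_on_line (hself k) (hself2 k) hxseg
    obtain ⟨y, hyseg, hyline⟩ := seg_cross (p j) (p (j + (m:ZMod N)))
      (cos (M k)) (sin (M k)) (cos (c*m)) (hopp k j)
    have hyj : cos (M j) * y.1 + sin (M j) * y.2 = cos (c*m) :=
      seg_on_line (hself j) (hself2 j) hyseg
    have hxy := sys_unique (hdet j k hjk) hxline hxk hyj hyline
    have hxy' : x = y := Prod.ext hxy.1 hxy.2
    refine ⟨x, ⟨?_, ?_⟩, ?_⟩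
    · rw [hs j, hxy']; exact hyseg
    · rw [hs k]; exact hxseg
    · intro z hz
      obtain ⟨hzj, hzk⟩ := hz
      rw [hs j] at hzj; rw [hs k] at hzk
      have hz1 : cos (M j) * z.1 + sin (M j) * z.2 = cos (c*m) :=
        seg_on_line (hself j) (hself2 j) hzj
      have hz2 : cos (M k) * z.1 + sin (M k) * z.2 = cos (c*m) :=
        seg_on_line (hself k) (hself2 k) hzk
      have hu := sys_unique (hdet j k hjk) hz1 hz2 hxline hxk
      exact Prod.ext hu.1 hu.2
end
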